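/- arXiv:math/0505641 — 10 statements merged into one kernel-verified Lean document; each statement's English description precedes it below -/
import Mathlib

section
/- Let t, n, p be positive integers with 3 ≤ p ≤ t+1. If d is a totally balanced test-control incomplete crossover design with t test treatments, a control treatment, n units, p periods, and r_{d0} = n, then pt divides n(p−1) and pt(t−1) divides n(p−1)(p−2). -/
open Finset

/-- Number of periods (among the `p` periods, 0-indexed `0,…,p-1`) in which unit `u`
receives treatment `i` under design `d`. -/
def nC (d : ℕ → ℕ → ℕ) (p i u : ℕ) : ℕ :=
  ((Finset.range p).filter fun k => d k u = i).card

/-- Number of periods among the first `p-1` periods in which unit `u` receives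
treatment `i` under design `d`. -/
def nT (d : ℕ → ℕ → ℕ) (p i u : ℕ) : ℕ :=
  ((Finset.range (p - 1)).filter fun k => d k u = i).card

/-- Number of units (among `n` units) receiving treatment `i` in period `k`. -/
def lC (d : ℕ → ℕ → ℕ) (n i k : ℕ) : ℕ :=
  ((Finset.range n).filter fun u => d k u = i).card

/-- Number of appearances of treatment `i` immediately preceded by treatment `j`. -/
def mC (d : ℕ → ℕ → ℕ) (p n i j : ℕ) : ℕ :=
  ∑ u ∈ Finset.range n,
    ((Finset.range (p - 1)).filter fun k => d (k + 1) u = i ∧ d k u = j).card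

/-- Total replication of treatment `i` in the design. -/
def rC (d : ℕ → ℕ → ℕ) (p n i : ℕ) : ℕ := ∑ u ∈ Finset.range n, nC d p i u

/-- Total replication of treatment `i` in the first `p-1` periods. -/
def rT (d : ℕ → ℕ → ℕ) (p n i : ℕ) : ℕ := ∑ u ∈ Finset.range n, nT d p i u

/-- A totally balanced test-control incomplete crossover design with test treatments
`1,…,t`, control treatment `0`, `n` units and `p` periods. -/
structure IsTotallyBalanced (t n p : ℕ) (d : ℕ → ℕ → ℕ) : Prop where
  -- (i) balanced test-control incomplete block design for the direct effects
  rep_eq : ∀ i ∈ Finset.Icc 1 t, ∀ j ∈ Finset.Icc 1 t, rC d p n i = rC d p n j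
  once : ∀ i ∈ Finset.Icc 1 t, ∀ u < n, nC d p i u ≤ 1
  pair_eq : ∀ i ∈ Finset.Icc 1 t, ∀ j ∈ Finset.Icc 1 t, ∀ i' ∈ Finset.Icc 1 t,
    ∀ j' ∈ Finset.Icc 1 t, i ≠ j → i' ≠ j' →
    ((Finset.range n).filter fun u => 1 ≤ nC d p i u ∧ 1 ≤ nC d p j u).card =
      ((Finset.range n).filter fun u => 1 ≤ nC d p i' u ∧ 1 ≤ nC d p j' u).card
  ctrl_rep : ∀ u < n, nC d p 0 u = rC d p n 0 / n ∨ nC d p 0 u = rC d p n 0 / n + 1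
  ctrl_pair : ∀ i ∈ Finset.Icc 1 t, ∀ j ∈ Finset.Icc 1 t,
    ((Finset.range n).filter fun u => nC d p 0 u = rC d p n 0 / n ∧ 1 ≤ nC d p i u).card =
      ((Finset.range n).filter fun u => nC d p 0 u = rC d p n 0 / n ∧ 1 ≤ nC d p j u).card
  -- (ii) balanced test-control incomplete block design for the carryover effects
  rep_eq' : ∀ i ∈ Finset.Icc 1 t, ∀ j ∈ Finset.Icc 1 t, rT d p n i = rT d p n j
  once' : ∀ i ∈ Finset.Icc 1 t, ∀ u < n, nT d p i u ≤ 1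
  pair_eq' : ∀ i ∈ Finset.Icc 1 t, ∀ j ∈ Finset.Icc 1 t, ∀ i' ∈ Finset.Icc 1 t,
    ∀ j' ∈ Finset.Icc 1 t, i ≠ j → i' ≠ j' →
    ((Finset.range n).filter fun u => 1 ≤ nT d p i u ∧ 1 ≤ nT d p j u).card =
      ((Finset.range n).filter fun u => 1 ≤ nT d p i' u ∧ 1 ≤ nT d p j' u).card
  ctrl_rep' : ∀ u < n, nT d p 0 u = rT d p n 0 / n ∨ nT d p 0 u = rT d p n 0 / n + 1
  ctrl_pair' : ∀ i ∈ Finset.Icc 1 t, ∀ j ∈ Finset.Icc 1 t,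
    ((Finset.range n).filter fun u => nT d p 0 u = rT d p n 0 / n ∧ 1 ≤ nT d p i u).card =
      ((Finset.range n).filter fun u => nT d p 0 u = rT d p n 0 / n ∧ 1 ≤ nT d p j u).card
  -- (iii) balanced for test-control carryover effects
  carry_eq : ∀ i ∈ Finset.Icc 1 t, ∀ j ∈ Finset.Icc 1 t, ∀ i' ∈ Finset.Icc 1 t,
    ∀ j' ∈ Finset.Icc 1 t, i ≠ j → i' ≠ j' → mC d p n i j = mC d p n i' j'
  carry_ctrl_by_test : ∀ i ∈ Finset.Icc 1 t, ∀ j ∈ Finset.Icc 1 t,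
    mC d p n 0 i = mC d p n 0 j
  carry_test_by_ctrl : ∀ i ∈ Finset.Icc 1 t, ∀ j ∈ Finset.Icc 1 t,
    mC d p n i 0 = mC d p n j 0
  no_self : ∀ i ≤ t, mC d p n i i = 0
  -- (iv) proportional frequency design for test-control on the periods
  period_test : ∀ i ∈ Finset.Icc 1 t, ∀ k < p, t * p * lC d n i k = n * p - rC d p n 0
  period_ctrl : ∀ k < p, p * lC d n 0 k = rC d p n 0
  -- (v)
  v_test_test : ∀ i ∈ Finset.Icc 1 t, ∀ j ∈ Finset.Icc 1 t, ∀ i' ∈ Finset.Icc 1 t,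
    ∀ j' ∈ Finset.Icc 1 t, i ≠ j → i' ≠ j' →
    ((Finset.range n).filter fun u => nT d p j u = 1 ∧ nC d p i u = 1).card =
      ((Finset.range n).filter fun u => nT d p j' u = 1 ∧ nC d p i' u = 1).card
  v_ctrl_test : ∀ i ∈ Finset.Icc 1 t, ∀ j ∈ Finset.Icc 1 t,
    ((Finset.range n).filter fun u => nT d p 0 u = rT d p n 0 / n ∧ nC d p i u = 1).card =
      ((Finset.range n).filter fun u => nT d p 0 u = rT d p n 0 / n ∧ nC d p j u = 1).card
  v_test_ctrl : ∀ i ∈ Finset.Icc 1 t, ∀ j ∈ Finset.Icc 1 t,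
    ((Finset.range n).filter fun u => nT d p i u = 1 ∧ nC d p 0 u = rC d p n 0 / n).card =
      ((Finset.range n).filter fun u => nT d p j u = 1 ∧ nC d p 0 u = rC d p n 0 / n).card

/-- Column sums of the carryover matrix: summing `mC` over the first index gives `rT`. -/
lemma colsum (d : ℕ → ℕ → ℕ) (t n p j : ℕ)
    (hd : ∀ k < p, ∀ u < n, d k u ≤ t) :
    ∑ i ∈ Finset.range (t + 1), mC d p n i j = rT d p n j := by
  unfold mC rT nT
  rw [Finset.sum_comm]
  refine Finset.sum_congr rfl fun u hu => ?_
  simp only [Finset.card_filter]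
  rw [Finset.sum_comm]
  refine Finset.sum_congr rfl fun k hk => ?_
  have hk' : k < p - 1 := Finset.mem_range.1 hk
  have hdu : d (k + 1) u ∈ Finset.range (t + 1) := by
    simp only [Finset.mem_range, Nat.lt_succ_iff]
    exact hd (k + 1) (by omega) u (Finset.mem_range.1 hu)
  simp only [ite_and]
  rw [Finset.sum_ite_eq, if_pos hdu]

/-- Row sums of the carryover matrix: summing `mC` over the second index counts
appearances of `i` in periods `2,…,p`. -/
lemma rowsum (d : ℕ → ℕ → ℕ) (t n p i : ℕ)
    (hd : ∀ k < p, ∀ u < n, d k u ≤ t) :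
    ∑ j ∈ Finset.range (t + 1), mC d p n i j =
      ∑ k ∈ Finset.range (p - 1), lC d n i (k + 1) := by
  unfold mC lC
  rw [Finset.sum_comm]
  rw [show (∑ u ∈ Finset.range n, ∑ j ∈ Finset.range (t + 1),
      ((Finset.range (p - 1)).filter fun k => d (k + 1) u = i ∧ d k u = j).card) =
      ∑ u ∈ Finset.range n, ∑ k ∈ Finset.range (p - 1),
        (if d (k + 1) u = i then 1 else 0) from ?_, Finset.sum_comm]
  · refine Finset.sum_congr rfl fun k _ => ?_
    rw [Finset.card_filter]
  · refine Finset.sum_congr rfl fun u hu => ?_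
    simp only [Finset.card_filter]
    rw [Finset.sum_comm]
    refine Finset.sum_congr rfl fun k hk => ?_
    have hk' : k < p - 1 := Finset.mem_range.1 hk
    have hdu : d k u ∈ Finset.range (t + 1) := by
      simp only [Finset.mem_range, Nat.lt_succ_iff]
      exact hd k (by omega) u (Finset.mem_range.1 hu)
    simp only [ite_and]
    rw [show (∑ j ∈ Finset.range (t + 1),
        if d (k + 1) u = i then (if d k u = j then (1:ℕ) else 0) else 0) =
        ∑ j ∈ Finset.range (t + 1),
          if d k u = j then (if d (k + 1) u = i then (1:ℕ) else 0) else 0 from ?_]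
    · rw [Finset.sum_ite_eq, if_pos hdu]
    · refine Finset.sum_congr rfl fun j _ => ?_
      by_cases h1 : d (k + 1) u = i <;> by_cases h2 : d k u = j <;> simp [h1, h2]

/-- `rT` as a sum of period counts. -/
lemma rT_eq_sum_lC (d : ℕ → ℕ → ℕ) (n p j : ℕ) :
    rT d p n j = ∑ k ∈ Finset.range (p - 1), lC d n j k := by
  unfold rT nT lC
  simp only [Finset.card_filter]
  rw [Finset.sum_comm]

/-- If `d` is a totally balanced test-control incomplete crossover design with `t` test
treatments, a control treatment, `n` units, `p` periods (`3 ≤ p ≤ t+1`) and control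
replication `r_{d0} = n`, then `pt ∣ n(p-1)` and `pt(t-1) ∣ n(p-1)(p-2)`. -/
theorem stmt0 (t n p : ℕ) (ht : 0 < t) (hn : 0 < n) (hp : 3 ≤ p) (hpt : p ≤ t + 1)
    (d : ℕ → ℕ → ℕ) (hd : ∀ k < p, ∀ u < n, d k u ≤ t)
    (htb : IsTotallyBalanced t n p d) (hr : rC d p n 0 = n) :
    p * t ∣ n * (p - 1) ∧ p * t * (t - 1) ∣ n * (p - 1) * (p - 2) := by
  have ht2 : 2 ≤ t := by omega
  have h1mem : (1 : ℕ) ∈ Finset.Icc 1 t := by simp [Finset.mem_Icc]; omega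
  have h2mem : (2 : ℕ) ∈ Finset.Icc 1 t := by simp [Finset.mem_Icc]; omega
  have hsub : n * p - n = n * (p - 1) := by
    cases p with
    | zero => omega
    | succ q => simp [Nat.mul_succ]
  set L := lC d n 1 0 with hLdef
  -- all test-treatment period counts equal L, with t*p*L = n*(p-1)
  have hL : t * p * L = n * (p - 1) := by
    have h := htb.period_test 1 h1mem 0 (by omega)
    rw [hr, hsub] at h; exact h
  have hLall : ∀ i ∈ Finset.Icc 1 t, ∀ k < p, lC d n i k = L := by
    intro i hi k hk
    have h := htb.period_test i hi k hk
    rw [hr, hsub, ← hL] at h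
    exact Nat.eq_of_mul_eq_mul_left (by positivity) h
  have hctrl : ∀ k < p, p * lC d n 0 k = n := by
    intro k hk
    have h := htb.period_ctrl k hk; rwa [hr] at h
  set b := mC d p n 1 0 with hbdef
  set m := mC d p n 1 2 with hmdef
  -- column sum at j = 0 : t * b = ∑_{k<p-1} lC 0 k
  have hcol : t * b = ∑ k ∈ Finset.range (p - 1), lC d n 0 k := by
    have h := colsum d t n p 0 hd
    rw [rT_eq_sum_lC] at h
    rw [← h, Finset.sum_range_succ']
    have h00 : mC d p n 0 0 = 0 := htb.no_self 0 (by omega)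
    rw [h00, add_zero]
    rw [Finset.sum_congr rfl fun i hi => htb.carry_test_by_ctrl (i + 1)
      (by have := Finset.mem_range.1 hi; simp [Finset.mem_Icc]; omega) 1 h1mem]
    rw [Finset.sum_const, Finset.card_range, smul_eq_mul]
  -- hence p * t * b = n * (p-1), so b = L
  have hbL : b = L := by
    have hpb : p * (t * b) = (p - 1) * n := by
      rw [hcol, Finset.mul_sum]
      rw [Finset.sum_congr rfl fun k hk => hctrl k (by
        have := Finset.mem_range.1 hk; omega)]
      rw [Finset.sum_const, Finset.card_range, smul_eq_mul]
    have : p * t * b = p * t * L := by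
      have h1 : p * t * b = (p - 1) * n := by rw [mul_assoc]; exact hpb
      have h2 : p * t * L = (p - 1) * n := by
        rw [show p * t * L = t * p * L from by ring, hL]; ring
      rw [h1]; exact h2.symm
    exact Nat.eq_of_mul_eq_mul_left (by positivity) this
  -- row sum at i = 1 : b + (t-1) * m = (p-1) * L
  have hrow : (t - 1) * m + b = (p - 1) * L := by
    have h := rowsum d t n p 1 hd
    rw [Finset.sum_congr rfl fun k hk => hLall 1 h1mem (k + 1) (by
      have := Finset.mem_range.1 hk; omega)] at h
    rw [Finset.sum_const, Finset.card_range, smul_eq_mul] at h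
    rw [← h, Finset.sum_range_succ']
    congr 1
    obtain ⟨s, rfl⟩ : ∃ s, t = s + 2 := ⟨t - 2, by omega⟩
    rw [show s + 2 = (s + 1) + 1 from rfl, Finset.sum_range_succ']
    have h11 : mC d p n 1 (0 + 1) = 0 := htb.no_self 1 (by omega)
    rw [h11, add_zero]
    rw [Finset.sum_congr rfl fun j hj => htb.carry_eq 1 h1mem (j + 1 + 1)
      (by simp [Finset.mem_Icc]; have := Finset.mem_range.1 hj; omega) 1 h1mem 2 h2mem
      (by omega) (by omega)]
    rw [Finset.sum_const, Finset.card_range, smul_eq_mul]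
    congr 1
  have hm2 : (t - 1) * m = (p - 2) * L := by
    have hp1 : (p - 1) * L = (p - 2) * L + L := by
      have : p - 1 = (p - 2) + 1 := by omega
      rw [this, add_mul, one_mul]
    have := hrow
    rw [hbL, hp1] at this
    exact Nat.add_right_cancel this
  constructor
  · exact ⟨L, by rw [← hL]; ring⟩
  · refine ⟨m, ?_⟩
    calc n * (p - 1) * (p - 2) = t * p * L * (p - 2) := by rw [hL]
      _ = t * p * ((p - 2) * L) := by ring
      _ = t * p * ((t - 1) * m) := by rw [hm2]
      _ = p * t * (t - 1) * m := by ring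
end

section
/- Let t ≥ 3 and m ≥ 1, and suppose d₀ is a balanced uniform crossover design with t treatments labeled 1,…,t, m units, and t periods. For each i = 1,…,t, let d_i be the design obtained from d₀ by replacing every occurrence of treatment i by the control label 0, and let d be the juxtaposition of d₁,…,d_t (a design on n = tm units and p = t periods). Then d is a totally balanced test-control incomplete crossover design with t test treatments, a control treatment, n = tm units, p = t periods, and r_{d0} = tm. -/
open Finset

lemma aux_card_drop_last {P : ℕ → Prop} [DecidablePred P] (t' : ℕ) :
    ((range (t'+1)).filter P).card
      = ((range t').filter P).card + if P t' then 1 else 0 := by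
  rw [Finset.range_add_one, Finset.filter_insert]
  split_ifs with h
  · rw [Finset.card_insert_of_notMem (by simp)]
  · simp

lemma aux_sum_split (t m : ℕ) (f : ℕ → ℕ → ℕ) :
    ∑ u ∈ range (t*m), f (u/m) (u%m) = ∑ c ∈ range t, ∑ v ∈ range m, f c v := by
  induction t with
  | zero => simp
  | succ t ih =>
    rw [Finset.sum_range_succ, ← ih, Nat.succ_mul, Finset.sum_range_add]
    congr 1
    refine Finset.sum_congr rfl fun v hv => ?_
    rw [Finset.mem_range] at hv
    have hm : 0 < m := by omega
    have h1 : (t*m + v) / m = t := by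
      rw [mul_comm, Nat.mul_add_div hm, Nat.div_eq_of_lt hv, Nat.add_zero]
    have h2 : (t*m + v) % m = v := by
      rw [mul_comm, Nat.mul_add_mod, Nat.mod_eq_of_lt hv]
    rw [h1, h2]

lemma aux_sum_skip1 {t i : ℕ} (hi : i ∈ Finset.Icc 1 t) (b : ℕ) :
    ∑ c ∈ range t, (if c + 1 = i then 0 else b) = (t-1)*b := by
  rw [Finset.mem_Icc] at hi
  have h1 : (range t).filter (fun c => c + 1 = i) = {i - 1} := by
    ext c; simp only [Finset.mem_filter, Finset.mem_range, Finset.mem_singleton]; omega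
  rw [Finset.sum_ite, Finset.sum_const_zero, Finset.sum_const, zero_add, smul_eq_mul,
    Finset.filter_not, Finset.card_sdiff_of_subset (Finset.filter_subset _ _), h1, Finset.card_range]
  simp

lemma aux_card_filter_not {s : Finset ℕ} {X : ℕ → Prop} [DecidablePred X] :
    (s.filter fun v => ¬ X v).card = s.card - (s.filter X).card := by
  rw [Finset.filter_not, Finset.card_sdiff_of_subset (Finset.filter_subset _ _)]

lemma aux_sum_if_not {s : Finset ℕ} {X : ℕ → Prop} [DecidablePred X] :
    ∑ v ∈ s, (if X v then 0 else 1) = (s.filter fun v => ¬ X v).card := by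
  rw [Finset.card_filter]
  refine Finset.sum_congr rfl fun v _ => ?_
  by_cases h : X v <;> simp [h]

lemma aux_card_split (t m : ℕ) (P : ℕ → ℕ → Prop) [∀ c, DecidablePred (P c)] :
    ((range (t*m)).filter fun u => P (u/m) (u%m)).card
      = ∑ c ∈ range t, ((range m).filter (P c)).card := by
  simp only [Finset.card_filter]
  exact aux_sum_split t m fun c v => if P c v then 1 else 0

lemma aux_sum_skip2 {t i j : ℕ} (hi : i ∈ Finset.Icc 1 t) (hj : j ∈ Finset.Icc 1 t)
    (hij : i ≠ j) (b : ℕ) :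
    ∑ c ∈ range t, (if c + 1 = i ∨ c + 1 = j then 0 else b) = (t-2)*b := by
  rw [Finset.mem_Icc] at hi hj
  have h1 : (range t).filter (fun c => c + 1 = i ∨ c + 1 = j) = {i - 1, j - 1} := by
    ext c
    simp only [Finset.mem_filter, Finset.mem_range, Finset.mem_insert, Finset.mem_singleton]
    omega
  have h2 : ({i - 1, j - 1} : Finset ℕ).card = 2 := by
    rw [Finset.card_insert_of_notMem (by simp; omega), Finset.card_singleton]
  rw [Finset.sum_ite, Finset.sum_const_zero, Finset.sum_const, zero_add, smul_eq_mul,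
    Finset.filter_not, Finset.card_sdiff_of_subset (Finset.filter_subset _ _), h1, h2, Finset.card_range]

lemma aux_F1 {t m : ℕ} {d₀ : ℕ → ℕ → ℕ}
    (hunit : ∀ i ∈ Finset.Icc 1 t, ∀ u < m, nC d₀ t i u = 1)
    {i c v : ℕ} (hi : i ∈ Finset.Icc 1 t) (hv : v < m) :
    ((range t).filter fun k => (if d₀ k v = c + 1 then 0 else d₀ k v) = i).card
      = if c + 1 = i then 0 else 1 := by
  have hi' := Finset.mem_Icc.mp hi
  split_ifs with h
  · rw [Finset.card_eq_zero, Finset.filter_eq_empty_iff]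
    intro k _
    split_ifs with h2 <;> omega
  · rw [Finset.filter_congr (q := fun k => d₀ k v = i) (fun k _ => ?_)]
    · exact hunit i hi v hv
    · show ((if d₀ k v = c + 1 then 0 else d₀ k v) = i) ↔ d₀ k v = i
      split_ifs with h2
      · constructor
        · omega
        · intro h3; omega
      · rfl

lemma aux_F2 {t m : ℕ} {d₀ : ℕ → ℕ → ℕ}
    (hd₀ : ∀ k < t, ∀ u < m, 1 ≤ d₀ k u ∧ d₀ k u ≤ t)
    (hunit : ∀ i ∈ Finset.Icc 1 t, ∀ u < m, nC d₀ t i u = 1)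
    {c v : ℕ} (hc : c < t) (hv : v < m) :
    ((range t).filter fun k => (if d₀ k v = c + 1 then 0 else d₀ k v) = 0).card = 1 := by
  rw [Finset.filter_congr (q := fun k => d₀ k v = c + 1) (fun k hk => ?_)]
  · exact hunit (c+1) (Finset.mem_Icc.mpr ⟨by omega, by omega⟩) v hv
  · rw [Finset.mem_range] at hk
    show ((if d₀ k v = c + 1 then 0 else d₀ k v) = 0) ↔ d₀ k v = c + 1
    have := hd₀ k hk v hv
    split_ifs with h2
    · simp [h2]
    · constructor
      · omega
      · intro h3; exact absurd h3 h2

/-- Let `d₀` be a balanced uniform design with `t` treatments labeled `1,…,t`, `m` units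
and `t` periods.  Replacing, for each `i = 1,…,t`, every occurrence of treatment `i` by the
control label `0` and juxtaposing the `t` resulting designs (unit `u < t*m` belongs to the
copy in which treatment `u / m + 1` has been replaced) yields a totally balanced
test-control incomplete crossover design on `n = t*m` units with `r_{d0} = t*m`. -/
theorem stmt3 (t m : ℕ) (ht : 3 ≤ t) (hm : 1 ≤ m)
    (d₀ : ℕ → ℕ → ℕ) (hd₀ : ∀ k < t, ∀ u < m, 1 ≤ d₀ k u ∧ d₀ k u ≤ t)
    (hunit : ∀ i ∈ Finset.Icc 1 t, ∀ u < m, nC d₀ t i u = 1)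
    (hper : ∀ i ∈ Finset.Icc 1 t, ∀ k < t, t * lC d₀ m i k = m)
    (hcarry : ∃ lam, ∀ i ∈ Finset.Icc 1 t, ∀ j ∈ Finset.Icc 1 t, i ≠ j →
      mC d₀ t m i j = lam)
    (hself : ∀ i ∈ Finset.Icc 1 t, mC d₀ t m i i = 0) :
    IsTotallyBalanced t (t * m) t
        (fun k u => if d₀ k (u % m) = u / m + 1 then 0 else d₀ k (u % m)) ∧
      rC (fun k u => if d₀ k (u % m) = u / m + 1 then 0 else d₀ k (u % m)) t (t * m) 0 =
        t * m := by
  obtain ⟨lam, hcarry⟩ := hcarry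
  obtain ⟨t', rfl⟩ : ∃ t', t = t' + 1 := ⟨t - 1, by omega⟩
  have hm0 : 0 < m := hm
  set d : ℕ → ℕ → ℕ := fun k u => if d₀ k (u % m) = u / m + 1 then 0 else d₀ k (u % m) with hd
  -- q
  set q : ℕ := ((range m).filter fun v => d₀ t' v = 1).card with hqdef
  have htq : (t'+1) * q = m := hper 1 (Finset.mem_Icc.mpr ⟨le_refl 1, by omega⟩) t' (by omega)
  have hq : ∀ i ∈ Finset.Icc 1 (t'+1), ((range m).filter fun v => d₀ t' v = i).card = q := by
    intro i hi
    have h1 : (t'+1) * ((range m).filter fun v => d₀ t' v = i).card = m :=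
      hper i hi t' (by omega)
    exact Nat.eq_of_mul_eq_mul_left (by omega) (h1.trans htq.symm)
  have hq1 : 1 ≤ q := by
    rcases Nat.eq_zero_or_pos q with h | h
    · rw [h, Nat.mul_zero] at htq; omega
    · omega
  have hu2 : ∀ u, u < (t'+1) * m → u / m < t' + 1 ∧ u % m < m := by
    intro u hu
    exact ⟨Nat.div_lt_of_lt_mul (by rwa [mul_comm] at hu), Nat.mod_lt u hm0⟩
  -- per-unit formulas
  have hnCi : ∀ i ∈ Finset.Icc 1 (t'+1), ∀ u ∈ range ((t'+1)*m),
      nC d (t'+1) i u = if u/m + 1 = i then 0 else 1 := by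
    intro i hi u hu; rw [Finset.mem_range] at hu
    exact aux_F1 hunit hi (hu2 u hu).2
  have hnC0 : ∀ u ∈ range ((t'+1)*m), nC d (t'+1) 0 u = 1 := by
    intro u hu; rw [Finset.mem_range] at hu
    exact aux_F2 hd₀ hunit (hu2 u hu).1 (hu2 u hu).2
  have hdlast : ∀ i u, nC d (t'+1) i u = nT d (t'+1) i u + if d t' u = i then 1 else 0 :=
    fun i u => aux_card_drop_last t'
  have hnTi : ∀ i ∈ Finset.Icc 1 (t'+1), ∀ u ∈ range ((t'+1)*m),
      nT d (t'+1) i u = if u/m + 1 = i ∨ d₀ t' (u%m) = i then 0 else 1 := by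
    intro i hi u hu
    have hi' := Finset.mem_Icc.mp hi
    have h1 := hdlast i u
    rw [hnCi i hi u hu] at h1
    have h2 : d t' u = if d₀ t' (u % m) = u / m + 1 then 0 else d₀ t' (u % m) := rfl
    rw [h2] at h1
    split_ifs at h1 ⊢ <;> omega
  have hnT0 : ∀ u ∈ range ((t'+1)*m),
      nT d (t'+1) 0 u = if d₀ t' (u%m) = u/m + 1 then 0 else 1 := by
    intro u hu
    have h1 := hdlast 0 u
    rw [hnC0 u hu] at h1
    have h2 : d t' u = if d₀ t' (u % m) = u / m + 1 then 0 else d₀ t' (u % m) := rfl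
    rw [h2] at h1
    rw [Finset.mem_range] at hu
    have h3 := hd₀ t' (by omega) (u%m) (hu2 u hu).2
    split_ifs at h1 ⊢ <;> omega

  -- sum helpers inline check
  have hrC0 : rC d (t'+1) ((t'+1)*m) 0 = (t'+1)*m := by
    calc rC d (t'+1) ((t'+1)*m) 0 = ∑ _u ∈ range ((t'+1)*m), 1 :=
          Finset.sum_congr rfl hnC0
      _ = (t'+1)*m := by simp
  have hrCdiv : rC d (t'+1) ((t'+1)*m) 0 / ((t'+1)*m) = 1 := by
    rw [hrC0]; exact Nat.div_self (by positivity)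
  have hrCi : ∀ i ∈ Finset.Icc 1 (t'+1), rC d (t'+1) ((t'+1)*m) i = t'*m := by
    intro i hi
    calc rC d (t'+1) ((t'+1)*m) i
        = ∑ u ∈ range ((t'+1)*m), (if u/m + 1 = i then 0 else 1) :=
          Finset.sum_congr rfl (hnCi i hi)
      _ = ∑ c ∈ range (t'+1), ∑ _v ∈ range m, (if c + 1 = i then 0 else 1) :=
          aux_sum_split (t'+1) m (fun c _v => if c + 1 = i then 0 else 1)
      _ = ∑ c ∈ range (t'+1), (if c + 1 = i then 0 else m) :=
          Finset.sum_congr rfl (fun c _ => by split_ifs <;> simp)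
      _ = ((t'+1)-1)*m := aux_sum_skip1 hi m
      _ = t'*m := by simp
  have hCnot : ∀ i ∈ Finset.Icc 1 (t'+1),
      ((range m).filter fun v => ¬ d₀ t' v = i).card = m - q := by
    intro i hi; rw [aux_card_filter_not, Finset.card_range, hq i hi]
  have hC2 : ∀ i ∈ Finset.Icc 1 (t'+1), ∀ j ∈ Finset.Icc 1 (t'+1), i ≠ j →
      ((range m).filter fun v => ¬ d₀ t' v = i ∧ ¬ d₀ t' v = j).card = m - (q+q) := by
    intro i hi j hj hij
    rw [Finset.filter_congr (q := fun v => ¬ (d₀ t' v = i ∨ d₀ t' v = j))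
      (fun v _ => by tauto), aux_card_filter_not, Finset.card_range, Finset.filter_or,
      Finset.card_union_of_disjoint (by
        rw [Finset.disjoint_left]
        intro a ha hb
        rw [Finset.mem_filter] at ha hb
        exact hij (ha.2 ▸ hb.2 ▸ rfl)), hq i hi, hq j hj]
  have hrTi : ∀ i ∈ Finset.Icc 1 (t'+1), rT d (t'+1) ((t'+1)*m) i = t'*(m-q) := by
    intro i hi
    calc rT d (t'+1) ((t'+1)*m) i
        = ∑ u ∈ range ((t'+1)*m), (if u/m + 1 = i ∨ d₀ t' (u%m) = i then 0 else 1) :=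
          Finset.sum_congr rfl (hnTi i hi)
      _ = ∑ c ∈ range (t'+1), ∑ v ∈ range m, (if c + 1 = i ∨ d₀ t' v = i then 0 else 1) :=
          aux_sum_split (t'+1) m (fun c v => if c + 1 = i ∨ d₀ t' v = i then 0 else 1)
      _ = ∑ c ∈ range (t'+1), (if c + 1 = i then 0 else (m - q)) := by
          refine Finset.sum_congr rfl fun c _ => ?_
          by_cases h : c + 1 = i
          · simp [h]
          · rw [if_neg h]
            calc ∑ v ∈ range m, (if c + 1 = i ∨ d₀ t' v = i then 0 else 1)
                = ∑ v ∈ range m, (if d₀ t' v = i then 0 else 1) :=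
                  Finset.sum_congr rfl fun v _ => by simp [h]
              _ = ((range m).filter fun v => ¬ d₀ t' v = i).card := aux_sum_if_not
              _ = m - q := hCnot i hi
      _ = ((t'+1)-1)*(m-q) := aux_sum_skip1 hi (m-q)
      _ = t'*(m-q) := by simp
  have hrT0 : rT d (t'+1) ((t'+1)*m) 0 = (t'+1)*(m-q) := by
    calc rT d (t'+1) ((t'+1)*m) 0
        = ∑ u ∈ range ((t'+1)*m), (if d₀ t' (u%m) = u/m + 1 then 0 else 1) :=
          Finset.sum_congr rfl hnT0
      _ = ∑ c ∈ range (t'+1), ∑ v ∈ range m, (if d₀ t' v = c + 1 then 0 else 1) :=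
          aux_sum_split (t'+1) m (fun c v => if d₀ t' v = c + 1 then 0 else 1)
      _ = ∑ c ∈ range (t'+1), (m - q) := by
          refine Finset.sum_congr rfl fun c hc => ?_
          rw [Finset.mem_range] at hc
          exact aux_sum_if_not.trans (hCnot (c+1) (Finset.mem_Icc.mpr ⟨by omega, by omega⟩))
      _ = (t'+1)*(m-q) := by simp [mul_comm]
  have hrTdiv : rT d (t'+1) ((t'+1)*m) 0 / ((t'+1)*m) = 0 := by
    rw [hrT0]
    apply Nat.div_eq_of_lt
    have h : m - q < m := by omega
    exact (mul_lt_mul_iff_right₀ (by omega : (0:ℕ) < t'+1)).mpr h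

  have hcount_pair : ∀ i ∈ Finset.Icc 1 (t'+1), ∀ j ∈ Finset.Icc 1 (t'+1), i ≠ j →
      ((range ((t'+1)*m)).filter fun u =>
        1 ≤ nC d (t'+1) i u ∧ 1 ≤ nC d (t'+1) j u).card = ((t'+1)-2)*m := by
    intro i hi j hj hij
    rw [Finset.filter_congr (q := fun u => ¬(u/m + 1 = i ∨ u/m + 1 = j)) fun u hu => by
      simp only [hnCi i hi u hu, hnCi j hj u hu, true_and, and_true]; split_ifs <;> (try simp only [false_and, true_and, and_true, and_false, iff_false, iff_true, true_iff, false_iff, not_and, not_or, not_not]) <;> omega]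
    rw [aux_card_split (t'+1) m (fun c _v => ¬(c + 1 = i ∨ c + 1 = j))]
    refine (Finset.sum_congr rfl fun c _ => ?_).trans (aux_sum_skip2 hi hj hij m)
    by_cases h : c + 1 = i ∨ c + 1 = j <;> simp [h]
  have hcount_cp : ∀ i ∈ Finset.Icc 1 (t'+1),
      ((range ((t'+1)*m)).filter fun u =>
        nC d (t'+1) 0 u = rC d (t'+1) ((t'+1)*m) 0 / ((t'+1)*m) ∧
        1 ≤ nC d (t'+1) i u).card = ((t'+1)-1)*m := by
    intro i hi
    simp only [hrCdiv]
    rw [Finset.filter_congr (q := fun u => ¬(u/m + 1 = i)) fun u hu => by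
      simp only [hnCi i hi u hu, hnC0 u hu, true_and, and_true]; split_ifs <;> (try simp only [false_and, true_and, and_true, and_false, iff_false, iff_true, true_iff, false_iff, not_and, not_or, not_not]) <;> omega]
    rw [aux_card_split (t'+1) m (fun c _v => ¬(c + 1 = i))]
    refine (Finset.sum_congr rfl fun c _ => ?_).trans (aux_sum_skip1 hi m)
    by_cases h : c + 1 = i <;> simp [h]
  have hcount_pair' : ∀ i ∈ Finset.Icc 1 (t'+1), ∀ j ∈ Finset.Icc 1 (t'+1), i ≠ j →
      ((range ((t'+1)*m)).filter fun u =>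
        1 ≤ nT d (t'+1) i u ∧ 1 ≤ nT d (t'+1) j u).card = ((t'+1)-2)*(m-(q+q)) := by
    intro i hi j hj hij
    rw [Finset.filter_congr (q := fun u => ¬(u/m + 1 = i ∨ u/m + 1 = j) ∧
        (¬ d₀ t' (u%m) = i ∧ ¬ d₀ t' (u%m) = j)) fun u hu => by
      simp only [hnTi i hi u hu, hnTi j hj u hu, true_and, and_true]; split_ifs <;> (try simp only [false_and, true_and, and_true, and_false, iff_false, iff_true, true_iff, false_iff, not_and, not_or, not_not]) <;> omega]
    rw [aux_card_split (t'+1) m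
      (fun c v => ¬(c + 1 = i ∨ c + 1 = j) ∧ (¬ d₀ t' v = i ∧ ¬ d₀ t' v = j))]
    refine (Finset.sum_congr rfl fun c _ => ?_).trans (aux_sum_skip2 hi hj hij (m-(q+q)))
    by_cases h : c + 1 = i ∨ c + 1 = j
    · simp [h]
    · rw [if_neg h]
      rw [Finset.filter_congr (q := fun v => ¬ d₀ t' v = i ∧ ¬ d₀ t' v = j)
        (fun v _ => by tauto)]
      exact hC2 i hi j hj hij
  have hcount_cp' : ∀ i ∈ Finset.Icc 1 (t'+1),
      ((range ((t'+1)*m)).filter fun u =>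
        nT d (t'+1) 0 u = rT d (t'+1) ((t'+1)*m) 0 / ((t'+1)*m) ∧
        1 ≤ nT d (t'+1) i u).card = ((t'+1)-1)*q := by
    intro i hi
    simp only [hrTdiv]
    rw [Finset.filter_congr (q := fun u => ¬(u/m + 1 = i) ∧ d₀ t' (u%m) = u/m + 1)
      fun u hu => by
        simp only [hnTi i hi u hu, hnT0 u hu, true_and, and_true]; split_ifs <;> (try simp only [false_and, true_and, and_true, and_false, iff_false, iff_true, true_iff, false_iff, not_and, not_or, not_not]) <;> omega]
    rw [aux_card_split (t'+1) m (fun c v => ¬(c + 1 = i) ∧ d₀ t' v = c + 1)]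
    refine (Finset.sum_congr rfl fun c hc => ?_).trans (aux_sum_skip1 hi q)
    rw [Finset.mem_range] at hc
    by_cases h : c + 1 = i
    · simp [h]
    · rw [if_neg h]
      rw [Finset.filter_congr (q := fun v => d₀ t' v = c + 1) (fun v _ => by tauto)]
      exact hq (c+1) (Finset.mem_Icc.mpr ⟨by omega, by omega⟩)
  have hcount_vtt : ∀ i ∈ Finset.Icc 1 (t'+1), ∀ j ∈ Finset.Icc 1 (t'+1), i ≠ j →
      ((range ((t'+1)*m)).filter fun u =>
        nT d (t'+1) j u = 1 ∧ nC d (t'+1) i u = 1).card = ((t'+1)-2)*(m-q) := by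
    intro i hi j hj hij
    rw [Finset.filter_congr (q := fun u => ¬(u/m + 1 = i ∨ u/m + 1 = j) ∧
        ¬ d₀ t' (u%m) = j) fun u hu => by
      simp only [hnTi j hj u hu, hnCi i hi u hu, true_and, and_true]; split_ifs <;> (try simp only [false_and, true_and, and_true, and_false, iff_false, iff_true, true_iff, false_iff, not_and, not_or, not_not]) <;> omega]
    rw [aux_card_split (t'+1) m (fun c v => ¬(c + 1 = i ∨ c + 1 = j) ∧ ¬ d₀ t' v = j)]
    refine (Finset.sum_congr rfl fun c _ => ?_).trans (aux_sum_skip2 hi hj hij (m-q))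
    by_cases h : c + 1 = i ∨ c + 1 = j
    · simp [h]
    · rw [if_neg h]
      rw [Finset.filter_congr (q := fun v => ¬ d₀ t' v = j) (fun v _ => by tauto)]
      exact hCnot j hj
  have hcount_vct : ∀ i ∈ Finset.Icc 1 (t'+1),
      ((range ((t'+1)*m)).filter fun u =>
        nT d (t'+1) 0 u = rT d (t'+1) ((t'+1)*m) 0 / ((t'+1)*m) ∧
        nC d (t'+1) i u = 1).card = ((t'+1)-1)*q := by
    intro i hi
    simp only [hrTdiv]
    rw [Finset.filter_congr (q := fun u => ¬(u/m + 1 = i) ∧ d₀ t' (u%m) = u/m + 1)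
      fun u hu => by
        simp only [hnT0 u hu, hnCi i hi u hu, true_and, and_true]; split_ifs <;> (try simp only [false_and, true_and, and_true, and_false, iff_false, iff_true, true_iff, false_iff, not_and, not_or, not_not]) <;> omega]
    rw [aux_card_split (t'+1) m (fun c v => ¬(c + 1 = i) ∧ d₀ t' v = c + 1)]
    refine (Finset.sum_congr rfl fun c hc => ?_).trans (aux_sum_skip1 hi q)
    rw [Finset.mem_range] at hc
    by_cases h : c + 1 = i
    · simp [h]
    · rw [if_neg h]
      rw [Finset.filter_congr (q := fun v => d₀ t' v = c + 1) (fun v _ => by tauto)]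
      exact hq (c+1) (Finset.mem_Icc.mpr ⟨by omega, by omega⟩)
  have hcount_vtc : ∀ i ∈ Finset.Icc 1 (t'+1),
      ((range ((t'+1)*m)).filter fun u =>
        nT d (t'+1) i u = 1 ∧
        nC d (t'+1) 0 u = rC d (t'+1) ((t'+1)*m) 0 / ((t'+1)*m)).card = ((t'+1)-1)*(m-q) := by
    intro i hi
    simp only [hrCdiv]
    rw [Finset.filter_congr (q := fun u => ¬(u/m + 1 = i) ∧ ¬ d₀ t' (u%m) = i)
      fun u hu => by
        simp only [hnTi i hi u hu, hnC0 u hu, true_and, and_true]; split_ifs <;> (try simp only [false_and, true_and, and_true, and_false, iff_false, iff_true, true_iff, false_iff, not_and, not_or, not_not]) <;> omega]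
    rw [aux_card_split (t'+1) m (fun c v => ¬(c + 1 = i) ∧ ¬ d₀ t' v = i)]
    refine (Finset.sum_congr rfl fun c _ => ?_).trans (aux_sum_skip1 hi (m-q))
    by_cases h : c + 1 = i
    · simp [h]
    · rw [if_neg h]
      rw [Finset.filter_congr (q := fun v => ¬ d₀ t' v = i) (fun v _ => by tauto)]
      exact hCnot i hi

  have hmC_tt : ∀ i ∈ Finset.Icc 1 (t'+1), ∀ j ∈ Finset.Icc 1 (t'+1), i ≠ j →
      mC d (t'+1) ((t'+1)*m) i j = ((t'+1)-2)*lam := by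
    intro i hi j hj hij
    have hi' := Finset.mem_Icc.mp hi
    have hj' := Finset.mem_Icc.mp hj
    calc mC d (t'+1) ((t'+1)*m) i j
        = ∑ c ∈ range (t'+1), ∑ v ∈ range m,
            ((range t').filter fun k =>
              (if d₀ (k+1) v = c+1 then 0 else d₀ (k+1) v) = i ∧
              (if d₀ k v = c+1 then 0 else d₀ k v) = j).card :=
          aux_sum_split (t'+1) m (fun c v => ((range t').filter fun k => (if d₀ (k+1) v = c+1 then 0 else d₀ (k+1) v) = i ∧ (if d₀ k v = c+1 then 0 else d₀ k v) = j).card)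
      _ = ∑ c ∈ range (t'+1), (if c+1 = i ∨ c+1 = j then 0 else lam) := by
          refine Finset.sum_congr rfl fun c hc => ?_
          by_cases h : c+1 = i ∨ c+1 = j
          · rw [if_pos h]
            refine Finset.sum_eq_zero fun v hv => ?_
            rw [Finset.card_eq_zero, Finset.filter_eq_empty_iff]
            intro k _
            rintro ⟨h1, h2⟩
            revert h1 h2
            split_ifs <;> omega
          · rw [if_neg h]
            push_neg at h
            calc (∑ v ∈ range m,
                  ((range t').filter fun k =>
                    (if d₀ (k+1) v = c+1 then 0 else d₀ (k+1) v) = i ∧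
                    (if d₀ k v = c+1 then 0 else d₀ k v) = j).card)
                = ∑ v ∈ range m,
                    ((range t').filter fun k => d₀ (k+1) v = i ∧ d₀ k v = j).card := by
                  refine Finset.sum_congr rfl fun v _ => ?_
                  rw [Finset.filter_congr (q := fun k => d₀ (k+1) v = i ∧ d₀ k v = j)
                    fun k _ => by constructor <;> (rintro ⟨h1, h2⟩; revert h1 h2; split_ifs <;> omega)]
              _ = lam := hcarry i hi j hj hij
      _ = ((t'+1)-2)*lam := aux_sum_skip2 hi hj hij lam
  have hmC_0t : ∀ j ∈ Finset.Icc 1 (t'+1),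
      mC d (t'+1) ((t'+1)*m) 0 j = ((t'+1)-1)*lam := by
    intro j hj
    have hj' := Finset.mem_Icc.mp hj
    calc mC d (t'+1) ((t'+1)*m) 0 j
        = ∑ c ∈ range (t'+1), ∑ v ∈ range m,
            ((range t').filter fun k =>
              (if d₀ (k+1) v = c+1 then 0 else d₀ (k+1) v) = 0 ∧
              (if d₀ k v = c+1 then 0 else d₀ k v) = j).card :=
          aux_sum_split (t'+1) m (fun c v => ((range t').filter fun k => (if d₀ (k+1) v = c+1 then 0 else d₀ (k+1) v) = 0 ∧ (if d₀ k v = c+1 then 0 else d₀ k v) = j).card)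
      _ = ∑ c ∈ range (t'+1), (if c+1 = j then 0 else lam) := by
          refine Finset.sum_congr rfl fun c hc => ?_
          rw [Finset.mem_range] at hc
          by_cases h : c+1 = j
          · rw [if_pos h]
            refine Finset.sum_eq_zero fun v hv => ?_
            rw [Finset.card_eq_zero, Finset.filter_eq_empty_iff]
            intro k _
            rintro ⟨h1, h2⟩
            revert h1 h2
            split_ifs <;> omega
          · rw [if_neg h]
            calc (∑ v ∈ range m,
                  ((range t').filter fun k =>
                    (if d₀ (k+1) v = c+1 then 0 else d₀ (k+1) v) = 0 ∧
                    (if d₀ k v = c+1 then 0 else d₀ k v) = j).card)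
                = ∑ v ∈ range m,
                    ((range t').filter fun k => d₀ (k+1) v = c+1 ∧ d₀ k v = j).card := by
                  refine Finset.sum_congr rfl fun v hv => ?_
                  rw [Finset.mem_range] at hv
                  rw [Finset.filter_congr (q := fun k => d₀ (k+1) v = c+1 ∧ d₀ k v = j)
                    fun k hk => ?_]
                  rw [Finset.mem_range] at hk
                  have hb := hd₀ (k+1) (by omega) v hv
                  constructor <;> (rintro ⟨h1, h2⟩; revert h1 h2; split_ifs <;> omega)
              _ = lam := hcarry (c+1) (Finset.mem_Icc.mpr ⟨by omega, by omega⟩) j hj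
                    (by omega)
      _ = ((t'+1)-1)*lam := aux_sum_skip1 hj lam
  have hmC_t0 : ∀ j ∈ Finset.Icc 1 (t'+1),
      mC d (t'+1) ((t'+1)*m) j 0 = ((t'+1)-1)*lam := by
    intro j hj
    have hj' := Finset.mem_Icc.mp hj
    calc mC d (t'+1) ((t'+1)*m) j 0
        = ∑ c ∈ range (t'+1), ∑ v ∈ range m,
            ((range t').filter fun k =>
              (if d₀ (k+1) v = c+1 then 0 else d₀ (k+1) v) = j ∧
              (if d₀ k v = c+1 then 0 else d₀ k v) = 0).card :=
          aux_sum_split (t'+1) m (fun c v => ((range t').filter fun k => (if d₀ (k+1) v = c+1 then 0 else d₀ (k+1) v) = j ∧ (if d₀ k v = c+1 then 0 else d₀ k v) = 0).card)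
      _ = ∑ c ∈ range (t'+1), (if c+1 = j then 0 else lam) := by
          refine Finset.sum_congr rfl fun c hc => ?_
          rw [Finset.mem_range] at hc
          by_cases h : c+1 = j
          · rw [if_pos h]
            refine Finset.sum_eq_zero fun v hv => ?_
            rw [Finset.card_eq_zero, Finset.filter_eq_empty_iff]
            intro k _
            rintro ⟨h1, h2⟩
            revert h1 h2
            split_ifs <;> omega
          · rw [if_neg h]
            calc (∑ v ∈ range m,
                  ((range t').filter fun k =>
                    (if d₀ (k+1) v = c+1 then 0 else d₀ (k+1) v) = j ∧
                    (if d₀ k v = c+1 then 0 else d₀ k v) = 0).card)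
                = ∑ v ∈ range m,
                    ((range t').filter fun k => d₀ (k+1) v = j ∧ d₀ k v = c+1).card := by
                  refine Finset.sum_congr rfl fun v hv => ?_
                  rw [Finset.mem_range] at hv
                  rw [Finset.filter_congr (q := fun k => d₀ (k+1) v = j ∧ d₀ k v = c+1)
                    fun k hk => ?_]
                  rw [Finset.mem_range] at hk
                  have hb := hd₀ k (by omega) v hv
                  constructor <;> (rintro ⟨h1, h2⟩; revert h1 h2; split_ifs <;> omega)
              _ = lam := hcarry j hj (c+1) (Finset.mem_Icc.mpr ⟨by omega, by omega⟩)
                    (by omega)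
      _ = ((t'+1)-1)*lam := aux_sum_skip1 hj lam
  have hmC_self : ∀ i ≤ t'+1, mC d (t'+1) ((t'+1)*m) i i = 0 := by
    intro i hile
    rcases Nat.eq_zero_or_pos i with hi0 | hi1
    · subst hi0
      calc mC d (t'+1) ((t'+1)*m) 0 0
          = ∑ c ∈ range (t'+1), ∑ v ∈ range m,
              ((range t').filter fun k =>
                (if d₀ (k+1) v = c+1 then 0 else d₀ (k+1) v) = 0 ∧
                (if d₀ k v = c+1 then 0 else d₀ k v) = 0).card :=
            aux_sum_split (t'+1) m (fun c v => ((range t').filter fun k => (if d₀ (k+1) v = c+1 then 0 else d₀ (k+1) v) = 0 ∧ (if d₀ k v = c+1 then 0 else d₀ k v) = 0).card)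
        _ = 0 := by
            refine Finset.sum_eq_zero fun c hc => ?_
            rw [Finset.mem_range] at hc
            calc (∑ v ∈ range m,
                  ((range t').filter fun k =>
                    (if d₀ (k+1) v = c+1 then 0 else d₀ (k+1) v) = 0 ∧
                    (if d₀ k v = c+1 then 0 else d₀ k v) = 0).card)
                = ∑ v ∈ range m,
                    ((range t').filter fun k => d₀ (k+1) v = c+1 ∧ d₀ k v = c+1).card := by
                  refine Finset.sum_congr rfl fun v hv => ?_
                  rw [Finset.mem_range] at hv
                  rw [Finset.filter_congr (q := fun k => d₀ (k+1) v = c+1 ∧ d₀ k v = c+1)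
                    fun k hk => ?_]
                  rw [Finset.mem_range] at hk
                  have hb := hd₀ (k+1) (by omega) v hv
                  have hb2 := hd₀ k (by omega) v hv
                  constructor <;> (rintro ⟨h1, h2⟩; revert h1 h2; split_ifs <;> omega)
              _ = 0 := hself (c+1) (Finset.mem_Icc.mpr ⟨by omega, by omega⟩)
    · have hi : i ∈ Finset.Icc 1 (t'+1) := Finset.mem_Icc.mpr ⟨hi1, hile⟩
      have hi' := Finset.mem_Icc.mp hi
      calc mC d (t'+1) ((t'+1)*m) i i
          = ∑ c ∈ range (t'+1), ∑ v ∈ range m,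
              ((range t').filter fun k =>
                (if d₀ (k+1) v = c+1 then 0 else d₀ (k+1) v) = i ∧
                (if d₀ k v = c+1 then 0 else d₀ k v) = i).card :=
            aux_sum_split (t'+1) m (fun c v => ((range t').filter fun k => (if d₀ (k+1) v = c+1 then 0 else d₀ (k+1) v) = i ∧ (if d₀ k v = c+1 then 0 else d₀ k v) = i).card)
        _ = 0 := by
            refine Finset.sum_eq_zero fun c hc => ?_
            by_cases h : c+1 = i
            · refine Finset.sum_eq_zero fun v hv => ?_
              rw [Finset.card_eq_zero, Finset.filter_eq_empty_iff]
              intro k _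
              rintro ⟨h1, h2⟩
              revert h1 h2
              split_ifs <;> omega
            · calc (∑ v ∈ range m,
                    ((range t').filter fun k =>
                      (if d₀ (k+1) v = c+1 then 0 else d₀ (k+1) v) = i ∧
                      (if d₀ k v = c+1 then 0 else d₀ k v) = i).card)
                  = ∑ v ∈ range m,
                      ((range t').filter fun k => d₀ (k+1) v = i ∧ d₀ k v = i).card := by
                    refine Finset.sum_congr rfl fun v _ => ?_
                    rw [Finset.filter_congr (q := fun k => d₀ (k+1) v = i ∧ d₀ k v = i)
                      fun k _ => by constructor <;>
                        (rintro ⟨h1, h2⟩; revert h1 h2; split_ifs <;> omega)]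
                _ = 0 := hself i hi

  have hper_test : ∀ i ∈ Finset.Icc 1 (t'+1), ∀ k < t'+1,
      (t'+1) * (t'+1) * lC d ((t'+1)*m) i k
        = (t'+1)*m*(t'+1) - rC d (t'+1) ((t'+1)*m) 0 := by
    intro i hi k hk
    have hi' := Finset.mem_Icc.mp hi
    have hL : (t'+1) * ((range m).filter fun v => d₀ k v = i).card = m := hper i hi k hk
    have h1 : lC d ((t'+1)*m) i k = t' * ((range m).filter fun v => d₀ k v = i).card := by
      show ((range ((t'+1)*m)).filter fun u => d k u = i).card = _
      rw [Finset.filter_congr (q := fun u => ¬(u/m + 1 = i) ∧ d₀ k (u%m) = i)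
        fun u hu => by simp only [hd]; split_ifs <;> omega]
      rw [aux_card_split (t'+1) m (fun c v => ¬(c + 1 = i) ∧ d₀ k v = i)]
      refine (Finset.sum_congr rfl fun c _ => ?_).trans
        (aux_sum_skip1 hi ((range m).filter fun v => d₀ k v = i).card)
      by_cases h : c + 1 = i
      · simp [h]
      · rw [if_neg h]
        rw [Finset.filter_congr (q := fun v => d₀ k v = i) fun v _ => by tauto]
    rw [hrC0, h1]
    set X := ((range m).filter fun v => d₀ k v = i).card with hX
    have e1 : (t'+1)*m*(t'+1) = (t'+1)*m*t' + (t'+1)*m := by ring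
    rw [e1, Nat.add_sub_cancel, ← hL]
    ring
  have hper_ctrl : ∀ k < t'+1,
      (t'+1) * lC d ((t'+1)*m) 0 k = rC d (t'+1) ((t'+1)*m) 0 := by
    intro k hk
    have h1 : lC d ((t'+1)*m) 0 k
        = ∑ c ∈ range (t'+1), ((range m).filter fun v => d₀ k v = c+1).card := by
      show ((range ((t'+1)*m)).filter fun u => d k u = 0).card = _
      rw [Finset.filter_congr (q := fun u => d₀ k (u%m) = u/m + 1) fun u hu => by
        rw [Finset.mem_range] at hu
        have hb := hd₀ k hk (u%m) (hu2 u hu).2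
        simp only [hd]; split_ifs <;> omega]
      exact aux_card_split (t'+1) m (fun c v => d₀ k v = c + 1)
    rw [h1, hrC0, Finset.mul_sum]
    calc (∑ c ∈ range (t'+1), (t'+1) * ((range m).filter fun v => d₀ k v = c+1).card)
        = ∑ _c ∈ range (t'+1), m := by
          refine Finset.sum_congr rfl fun c hc => ?_
          rw [Finset.mem_range] at hc
          exact hper (c+1) (Finset.mem_Icc.mpr ⟨by omega, by omega⟩) k hk
      _ = (t'+1)*m := by simp [mul_comm]
  refine ⟨⟨fun i hi j hj => by rw [hrCi i hi, hrCi j hj],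
    fun i hi u hu => by
      rw [hnCi i hi u (Finset.mem_range.mpr hu)]; split_ifs <;> omega,
    fun i hi j hj i' hi' j' hj' h1 h2 => by
      rw [hcount_pair i hi j hj h1, hcount_pair i' hi' j' hj' h2],
    fun u hu => Or.inl (by rw [hrCdiv, hnC0 u (Finset.mem_range.mpr hu)]),
    fun i hi j hj => by rw [hcount_cp i hi, hcount_cp j hj],
    fun i hi j hj => by rw [hrTi i hi, hrTi j hj],
    fun i hi u hu => by
      rw [hnTi i hi u (Finset.mem_range.mpr hu)]; split_ifs <;> omega,
    fun i hi j hj i' hi' j' hj' h1 h2 => by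
      rw [hcount_pair' i hi j hj h1, hcount_pair' i' hi' j' hj' h2],
    fun u hu => by
      rw [hrTdiv, hnT0 u (Finset.mem_range.mpr hu)]
      split_ifs
      · exact Or.inl rfl
      · exact Or.inr rfl,
    fun i hi j hj => by rw [hcount_cp' i hi, hcount_cp' j hj],
    fun i hi j hj i' hi' j' hj' h1 h2 => by
      rw [hmC_tt i hi j hj h1, hmC_tt i' hi' j' hj' h2],
    fun i hi j hj => by rw [hmC_0t i hi, hmC_0t j hj],
    fun i hi j hj => by rw [hmC_t0 i hi, hmC_t0 j hj],
    hmC_self,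
    hper_test,
    hper_ctrl,
    fun i hi j hj i' hi' j' hj' h1 h2 => by
      rw [hcount_vtt i hi j hj h1, hcount_vtt i' hi' j' hj' h2],
    fun i hi j hj => by rw [hcount_vct i hi, hcount_vct j hj],
    fun i hi j hj => by rw [hcount_vtc i hi, hcount_vtc j hj]⟩, hrC0⟩
end

section
/- (Proposition A.1) For any crossover design d in the class Λ_{t+1,n,p}, the replication of the control treatment in the first p−1 periods satisfies r̃_{d0} ≤ n(p−1)/2, i.e., 2·r̃_{d0} ≤ n(p−1). -/
open Finset

lemma aux_card (p : ℕ) (S : Finset ℕ) (hS : S ⊆ Finset.range p)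
    (h : ∀ k ∈ S, k + 1 ∉ S) :
    2 * S.card ≤ p - 1 + ((if 0 ∈ S then 1 else 0) + (if p - 1 ∈ S then 1 else 0)) := by
  classical
  set T := S.image (· + 1) with hTdef
  have hTcard : T.card = S.card := Finset.card_image_of_injective _ (add_left_injective 1)
  have hdisj : Disjoint S T := by
    rw [Finset.disjoint_right]
    intro x hx hxS
    obtain ⟨s, hs, rfl⟩ := Finset.mem_image.1 hx
    exact h s hs hxS
  have hsub : S ∪ T ⊆ (Finset.Ico 1 p ∪ (if 0 ∈ S then {0} else ∅)) ∪
      (if p - 1 ∈ S then {p} else ∅) := by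
    intro x hx
    rcases Finset.mem_union.1 hx with hx | hx
    · have hxp : x < p := Finset.mem_range.1 (hS hx)
      rcases Nat.eq_zero_or_pos x with rfl | hx0
      · exact Finset.mem_union_left _ (Finset.mem_union_right _ (by simp [hx]))
      · exact Finset.mem_union_left _ (Finset.mem_union_left _ (Finset.mem_Ico.2 ⟨hx0, hxp⟩))
    · obtain ⟨s, hs, rfl⟩ := Finset.mem_image.1 hx
      have hsp : s < p := Finset.mem_range.1 (hS hs)
      rcases eq_or_lt_of_le (Nat.succ_le_of_lt hsp) with he | hlt
      · have hmem : p - 1 ∈ S := by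
          have : s = p - 1 := by omega
          rwa [this] at hs
        exact Finset.mem_union_right _ (by simp [hmem]; omega)
      · exact Finset.mem_union_left _ (Finset.mem_union_left _
          (Finset.mem_Ico.2 ⟨Nat.succ_le_succ (Nat.zero_le s), hlt⟩))
  have h1 : (S ∪ T).card = 2 * S.card := by
    rw [Finset.card_union_of_disjoint hdisj, hTcard]; ring
  have h2 := Finset.card_le_card hsub
  have hA : (if 0 ∈ S then ({0} : Finset ℕ) else ∅).card ≤ if 0 ∈ S then 1 else 0 := by
    split_ifs <;> simp
  have hB : (if p - 1 ∈ S then ({p} : Finset ℕ) else ∅).card ≤ if p - 1 ∈ S then 1 else 0 := by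
    split_ifs <;> simp
  have h3 := Finset.card_union_le (Finset.Ico 1 p ∪ (if 0 ∈ S then {0} else ∅))
      (if p - 1 ∈ S then ({p} : Finset ℕ) else ∅)
  have h4 := Finset.card_union_le (Finset.Ico 1 p) (if 0 ∈ S then ({0} : Finset ℕ) else ∅)
  have h5 : (Finset.Ico 1 p).card = p - 1 := by simp
  omega

/-- Proposition A.1: for any design in the class `Λ_{t+1,n,p}` (the control appears equally
often in every period and no treatment is immediately preceded by itself), the replication
of the control in the first `p-1` periods satisfies `r̃_{d0} ≤ n(p-1)/2`. -/
theorem stmt4 (t n p : ℕ) (ht : 0 < t) (hn : 0 < n) (hp : 3 ≤ p) (hpt : p ≤ t + 1)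
    (d : ℕ → ℕ → ℕ) (hd : ∀ k < p, ∀ u < n, d k u ≤ t)
    (hper : ∀ k < p, p * lC d n 0 k = rC d p n 0)
    (hself : ∀ i ≤ t, mC d p n i i = 0) :
    2 * rT d p n 0 ≤ n * (p - 1) := by
  classical
  have hp0 : 0 < p := by omega
  -- no two consecutive controls for each unit
  have hnc : ∀ u ∈ Finset.range n, ∀ k < p - 1, ¬(d (k + 1) u = 0 ∧ d k u = 0) := by
    intro u hu k hk hcon
    have h0 := hself 0 (Nat.zero_le t)
    unfold mC at h0
    have hcard := (Finset.sum_eq_zero_iff.1 h0) u hu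
    have hmem : k ∈ (Finset.range (p - 1)).filter fun k => d (k + 1) u = 0 ∧ d k u = 0 :=
      Finset.mem_filter.2 ⟨Finset.mem_range.2 hk, hcon⟩
    rw [Finset.card_eq_zero] at hcard
    rw [hcard] at hmem
    exact absurd hmem (Finset.notMem_empty k)
  -- per-unit bound
  have hunit : ∀ u ∈ Finset.range n, 2 * nC d p 0 u ≤
      p - 1 + ((if d 0 u = 0 then 1 else 0) + (if d (p - 1) u = 0 then 1 else 0)) := by
    intro u hu
    set S := (Finset.range p).filter fun k => d k u = 0 with hSdef
    have hS : S ⊆ Finset.range p := Finset.filter_subset _ _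
    have hno : ∀ k ∈ S, k + 1 ∉ S := by
      intro k hk hk1
      have hk' := Finset.mem_filter.1 hk
      have hk1' := Finset.mem_filter.1 hk1
      have hlt : k < p - 1 := by
        have := Finset.mem_range.1 hk1'.1; omega
      exact hnc u hu k hlt ⟨hk1'.2, hk'.2⟩
    have := aux_card p S hS hno
    have h0S : (0 ∈ S) = (d 0 u = 0) := by
      simp [hSdef, hp0]
    have hpS : (p - 1 ∈ S) = (d (p - 1) u = 0) := by
      simp [hSdef, Nat.sub_lt hp0 one_pos]
    have hnCeq : nC d p 0 u = S.card := rfl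
    rw [hnCeq]
    simp only [h0S, hpS] at this
    exact this
  -- sum the per-unit bounds
  have hsum : 2 * rC d p n 0 ≤ n * (p - 1) + (lC d n 0 0 + lC d n 0 (p - 1)) := by
    have := Finset.sum_le_sum hunit
    rw [Finset.sum_add_distrib, Finset.sum_add_distrib] at this
    simp only [Finset.sum_const, Finset.card_range, smul_eq_mul] at this
    have e1 : (∑ u ∈ Finset.range n, if d 0 u = 0 then 1 else 0) = lC d n 0 0 := by
      rw [lC, Finset.card_filter]
    have e2 : (∑ u ∈ Finset.range n, if d (p - 1) u = 0 then 1 else 0) = lC d n 0 (p - 1) := by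
      rw [lC, Finset.card_filter]
    calc 2 * rC d p n 0 = ∑ u ∈ Finset.range n, 2 * nC d p 0 u := by
          rw [rC, Finset.mul_sum]
      _ ≤ _ := this
      _ = n * (p - 1) + (lC d n 0 0 + lC d n 0 (p - 1)) := by rw [e1, e2]
  set L := lC d n 0 0 with hL
  have hL0 : p * L = rC d p n 0 := hper 0 hp0
  have hLp : lC d n 0 (p - 1) = L := by
    have := hper (p - 1) (Nat.sub_lt hp0 one_pos)
    have := hL0 ▸ this
    exact Nat.eq_of_mul_eq_mul_left hp0 (by omega)
  have hLn : 2 * L ≤ n := by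
    rw [hLp] at hsum
    rw [← hL0] at hsum
    obtain ⟨q, hq⟩ : ∃ q, p = q + 1 := ⟨p - 1, by omega⟩
    have hq0 : 0 < q := by omega
    rw [hq] at hsum
    simp only [Nat.add_sub_cancel] at hsum
    have h1 : q * (2 * L) ≤ q * n := by nlinarith [hsum]
    exact Nat.le_of_mul_le_mul_left h1 hq0
  have hrT : rT d p n 0 = ∑ k ∈ Finset.range (p - 1), lC d n 0 k := by
    unfold rT nT lC
    simp only [Finset.card_filter]
    rw [Finset.sum_comm]
  have hLk : ∀ k ∈ Finset.range (p - 1), lC d n 0 k = L := by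
    intro k hk
    have hkp : k < p := by have := Finset.mem_range.1 hk; omega
    have := hper k hkp
    rw [← hL0] at this
    exact Nat.eq_of_mul_eq_mul_left hp0 this
  rw [hrT, Finset.sum_congr rfl hLk, Finset.sum_const, Finset.card_range, smul_eq_mul]
  calc 2 * ((p - 1) * L) = (p - 1) * (2 * L) := by ring
    _ ≤ (p - 1) * n := Nat.mul_le_mul_left _ hLn
    _ = n * (p - 1) := Nat.mul_comm _ _
end

section
/- (Proposition A.2) For any crossover design d in the class Λ_{t+1,n,p} with 3 ≤ p ≤ t+1, one has Σ_{u=1}^n n_{d0u}·ñ_{d0u} ≤ t·(n(p−1) − r̃_{d0}). -/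
open Finset

/-- Proposition A.2: for any design in the class `Λ_{t+1,n,p}` with `3 ≤ p ≤ t+1`,
`∑_u n_{d0u}·ñ_{d0u} ≤ t·(n(p-1) − r̃_{d0})` (stated additively in `ℕ`). -/
theorem stmt6 (t n p : ℕ) (ht : 0 < t) (hn : 0 < n) (hp : 3 ≤ p) (hpt : p ≤ t + 1)
    (d : ℕ → ℕ → ℕ) (hd : ∀ k < p, ∀ u < n, d k u ≤ t)
    (hper : ∀ k < p, p * lC d n 0 k = rC d p n 0)
    (hself : ∀ i ≤ t, mC d p n i i = 0) :
    ∑ u ∈ Finset.range n, nC d p 0 u * nT d p 0 u + t * rT d p n 0 ≤ t * (n * (p - 1)) := by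
  have hp0 : 0 < p := by omega
  set L := lC d n 0 0 with hLdef
  have hL : ∀ k, k < p → lC d n 0 k = L := by
    intro k hk
    exact Nat.eq_of_mul_eq_mul_left hp0 ((hper k hk).trans (hper 0 hp0).symm)
  have hadj : ∀ u < n, ∀ j < p - 1, ¬(d (j + 1) u = 0 ∧ d j u = 0) := by
    intro u hu j hj hcon
    have h0 : mC d p n 0 0 = 0 := hself 0 (Nat.zero_le t)
    rw [mC] at h0
    have hc := (Finset.sum_eq_zero_iff.mp h0) u (Finset.mem_range.mpr hu)
    have hmem : j ∈ (Finset.range (p - 1)).filter fun k => d (k + 1) u = 0 ∧ d k u = 0 :=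
      Finset.mem_filter.mpr ⟨Finset.mem_range.mpr hj, hcon⟩
    rw [Finset.card_eq_zero.mp hc] at hmem
    exact absurd hmem (Finset.notMem_empty j)
  have hsum : ∑ u ∈ Finset.range n, nC d p 0 u * nT d p 0 u
      = ∑ k ∈ Finset.range p, ∑ k' ∈ Finset.range (p - 1),
          ((Finset.range n).filter fun u => d k u = 0 ∧ d k' u = 0).card := by
    calc ∑ u ∈ Finset.range n, nC d p 0 u * nT d p 0 u
        = ∑ u ∈ Finset.range n, ∑ k ∈ Finset.range p, ∑ k' ∈ Finset.range (p - 1),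
            (if d k u = 0 ∧ d k' u = 0 then 1 else 0) := by
          refine Finset.sum_congr rfl fun u _ => ?_
          rw [nC, nT, Finset.card_filter, Finset.card_filter, Finset.sum_mul_sum]
          refine Finset.sum_congr rfl fun k _ => Finset.sum_congr rfl fun k' _ => ?_
          by_cases h1 : d k u = 0 <;> by_cases h2 : d k' u = 0 <;> simp [h1, h2]
      _ = ∑ k ∈ Finset.range p, ∑ k' ∈ Finset.range (p - 1), ∑ u ∈ Finset.range n,
            (if d k u = 0 ∧ d k' u = 0 then 1 else 0) := by
          rw [Finset.sum_comm]
          exact Finset.sum_congr rfl fun k _ => Finset.sum_comm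
      _ = _ := by
          refine Finset.sum_congr rfl fun k _ => Finset.sum_congr rfl fun k' _ => ?_
          rw [Finset.card_filter]
  have hNle : ∀ k, k < p → ∀ k', k' < p - 1 →
      ((Finset.range n).filter fun u => d k u = 0 ∧ d k' u = 0).card ≤ L := by
    intro k hk k' _
    calc ((Finset.range n).filter fun u => d k u = 0 ∧ d k' u = 0).card
        ≤ ((Finset.range n).filter fun u => d k u = 0).card :=
          Finset.card_le_card (Finset.monotone_filter_right _ (fun u _ hu => hu.1))
      _ = L := hL k hk
  have hzero : ∀ k, k < p → ∃ a, a < p - 1 ∧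
      ((Finset.range n).filter fun u => d k u = 0 ∧ d a u = 0).card = 0 := by
    intro k hk
    rcases Nat.eq_zero_or_pos k with rfl | hk1
    · refine ⟨1, by omega, ?_⟩
      rw [Finset.card_eq_zero, Finset.filter_eq_empty_iff]
      rintro u hu ⟨h1, h2⟩
      exact hadj u (Finset.mem_range.mp hu) 0 (by omega) ⟨h2, h1⟩
    · refine ⟨k - 1, by omega, ?_⟩
      rw [Finset.card_eq_zero, Finset.filter_eq_empty_iff]
      rintro u hu ⟨h1, h2⟩
      have h := hadj u (Finset.mem_range.mp hu) (k - 1) (by omega)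
      rw [Nat.sub_add_cancel hk1] at h
      exact h ⟨h1, h2⟩
  have hrow : ∀ k ∈ Finset.range p,
      ∑ k' ∈ Finset.range (p - 1),
          ((Finset.range n).filter fun u => d k u = 0 ∧ d k' u = 0).card ≤ (p - 2) * L := by
    intro k hk
    obtain ⟨a, ha, hNa⟩ := hzero k (Finset.mem_range.mp hk)
    rw [← Finset.add_sum_erase _ _ (Finset.mem_range.mpr ha), hNa, zero_add]
    calc ∑ k' ∈ (Finset.range (p - 1)).erase a,
            ((Finset.range n).filter fun u => d k u = 0 ∧ d k' u = 0).card
        ≤ ∑ _k' ∈ (Finset.range (p - 1)).erase a, L :=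
          Finset.sum_le_sum fun k' hk' =>
            hNle k (Finset.mem_range.mp hk) k'
              (Finset.mem_range.mp (Finset.mem_of_mem_erase hk'))
      _ = (p - 2) * L := by
          rw [Finset.sum_const, Finset.card_erase_of_mem (Finset.mem_range.mpr ha),
            Finset.card_range, smul_eq_mul]
          congr 1
  have hrT : rT d p n 0 = (p - 1) * L := by
    rw [rT]
    simp only [nT, Finset.card_filter]
    rw [Finset.sum_comm]
    calc ∑ k ∈ Finset.range (p - 1), ∑ u ∈ Finset.range n, (if d k u = 0 then 1 else 0)
        = ∑ k ∈ Finset.range (p - 1), L := by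
          refine Finset.sum_congr rfl fun k hk => ?_
          rw [← Finset.card_filter]
          exact hL k (by have := Finset.mem_range.mp hk; omega)
      _ = (p - 1) * L := by rw [Finset.sum_const, Finset.card_range, smul_eq_mul]
  have h2L : 2 * L ≤ n := by
    have hdisj : Disjoint ((Finset.range n).filter fun u => d 0 u = 0)
        ((Finset.range n).filter fun u => d 1 u = 0) := by
      rw [Finset.disjoint_left]
      intro u h0 h1
      obtain ⟨hu, hd0⟩ := Finset.mem_filter.mp h0
      obtain ⟨_, hd1⟩ := Finset.mem_filter.mp h1
      exact hadj u (Finset.mem_range.mp hu) 0 (by omega) ⟨hd1, hd0⟩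
    have hcu := Finset.card_union_of_disjoint hdisj
    have hsub : ((Finset.range n).filter fun u => d 0 u = 0)
        ∪ ((Finset.range n).filter fun u => d 1 u = 0) ⊆ Finset.range n :=
      Finset.union_subset (Finset.filter_subset _ _) (Finset.filter_subset _ _)
    have hcard := Finset.card_le_card hsub
    rw [Finset.card_range, hcu] at hcard
    have e0 : ((Finset.range n).filter fun u => d 0 u = 0).card = L := hL 0 hp0
    have e1 : ((Finset.range n).filter fun u => d 1 u = 0).card = L := hL 1 (by omega)
    omega
  have hS : ∑ k ∈ Finset.range p, ∑ k' ∈ Finset.range (p - 1),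
      ((Finset.range n).filter fun u => d k u = 0 ∧ d k' u = 0).card ≤ p * ((p - 2) * L) := by
    calc _ ≤ ∑ _k ∈ Finset.range p, (p - 2) * L := Finset.sum_le_sum hrow
      _ = p * ((p - 2) * L) := by rw [Finset.sum_const, Finset.card_range, smul_eq_mul]
  rw [hsum, hrT]
  obtain ⟨m, rfl⟩ : ∃ m, p = m + 3 := ⟨p - 3, by omega⟩
  have e1 : m + 3 - 2 = m + 1 := by omega
  have e2 : m + 3 - 1 = m + 2 := by omega
  rw [e1] at hS
  rw [e2] at hS ⊢
  have ht' : m + 2 ≤ t := by omega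
  calc (∑ k ∈ Finset.range (m + 3), ∑ k' ∈ Finset.range (m + 2),
          ((Finset.range n).filter fun u => d k u = 0 ∧ d k' u = 0).card)
        + t * ((m + 2) * L)
      ≤ (m + 3) * ((m + 1) * L) + t * ((m + 2) * L) := by
        exact Nat.add_le_add_right hS _
    _ ≤ t * ((m + 2) * L) + t * ((m + 2) * L) := by
        refine Nat.add_le_add_right ?_ _
        have h1 : (m + 3) * ((m + 1) * L) = ((m + 3) * (m + 1)) * L := by ring
        have h2 : t * ((m + 2) * L) = (t * (m + 2)) * L := by ring
        rw [h1, h2]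
        refine Nat.mul_le_mul_right L ?_
        nlinarith
    _ = t * (m + 2) * (2 * L) := by ring
    _ ≤ t * (m + 2) * n := Nat.mul_le_mul_left _ h2L
    _ = t * (n * (m + 2)) := by ring
end

section
/- (Proposition A.3) Under the standing hypotheses (H), one has Δ̃₁ ≥ (t−1)·Δ̃₂. -/
set_option linter.unusedVariables false
set_option maxHeartbeats 1000000

/-- The quantity `Δ̃₁` from Hedayat–Yang (2005). -/
noncomputable def Delta1 (n p t r0 rt0 x1 x2 x3 : ℝ) : ℝ :=
  t * (p - 1) * (n * p - r0) - p * (r0 - x1 / p) -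
    (n * t * (p - 1) - t * rt0 - x2) ^ 2 /
      (n * (p - 1) * (p * t - t - 1) - (p * t - t + p - 2) * rt0 + x3)

/-- The quantity `Δ̃₂` from Hedayat–Yang (2005). -/
noncomputable def Delta2 (n p t r0 rt0 x1 x2 x3 : ℝ) : ℝ :=
  p * (r0 - x1 / p) -
    n * (p - 1) * x2 ^ 2 / (n * p * (p - 1) * rt0 - rt0 ^ 2 - n * (p - 1) * x3)

/-- The quantity `Θ̃₁` from Hedayat–Yang (2005). -/
noncomputable def Theta1 (n p t r0 rt0 x1 x2 x3 : ℝ) : ℝ :=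
  (n * t * (p - 1) - t * rt0 - x2) /
    (n * (p - 1) * (p * t - t - 1) - (p * t - t + p - 2) * rt0 + x3)

/-- The quantity `Θ̃₂` from Hedayat–Yang (2005). -/
noncomputable def Theta2 (n p t r0 rt0 x1 x2 x3 : ℝ) : ℝ :=
  n * (p - 1) * x2 / (n * p * (p - 1) * rt0 - rt0 ^ 2 - n * (p - 1) * x3)

private lemma corehom (p t s r : ℝ) (hp : 3 ≤ p) (ht : 2 ≤ t)
    (hr : 0 ≤ r) (hr2 : 2 * r ≤ s) :
    0 ≤ t * p * (s - 2 * r) * (s * (p * t - t - 1) - (p * t - t + p - 2) * r + r) *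
          (p * s * r - r ^ 2 - s * r)
        - (t * s - (t + 1) * r) ^ 2 * (p * s * r - r ^ 2 - s * r)
        + (t - 1) * s * r ^ 2 * (s * (p * t - t - 1) - (p * t - t + p - 2) * r + r) := by
  have hA : 0 ≤ p - 3 := by linarith
  have hB : 0 ≤ t - 2 := by linarith
  have hU : 0 ≤ s - 2 * r := by linarith
  have hc0 : 0 ≤ 28 + 34*(t-2) + 10*(t-2)^2 + 50*(p-3) + 55*(p-3)*(t-2) + 15*(p-3)*(t-2)^2
      + 26*(p-3)^2 + 27*(p-3)^2*(t-2) + 7*(p-3)^2*(t-2)^2 + 4*(p-3)^3 + 4*(p-3)^3*(t-2)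
      + (p-3)^3*(t-2)^2 := by positivity
  have hc1 : 0 ≤ (61/2) + 40*(t-2) + (25/2)*(t-2)^2 + 56*(p-3) + 68*(p-3)*(t-2)
      + 20*(p-3)*(t-2)^2 + 31*(p-3)^2 + (71/2)*(p-3)^2*(t-2) + 10*(p-3)^2*(t-2)^2
      + 5*(p-3)^3 + (11/2)*(p-3)^3*(t-2) + (3/2)*(p-3)^3*(t-2)^2 := by positivity
  have hc2 : 0 ≤ (15/2) + (23/2)*(t-2) + 4*(t-2)^2 + (25/2)*(p-3) + (75/4)*(p-3)*(t-2)
      + (25/4)*(p-3)*(t-2)^2 + (13/2)*(p-3)^2 + (39/4)*(p-3)^2*(t-2)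
      + (13/4)*(p-3)^2*(t-2)^2 + (p-3)^3 + (3/2)*(p-3)^3*(t-2)
      + (1/2)*(p-3)^3*(t-2)^2 := by positivity
  have hc3 : 0 ≤ (1/8) + (1/4)*(t-2) + (1/8)*(t-2)^2 := by positivity
  have hT0 := mul_nonneg hr (mul_nonneg hc0 (pow_nonneg hU 3))
  have hT1 := mul_nonneg hr (mul_nonneg (mul_nonneg hc1 (pow_nonneg hU 2)) (by linarith : (0:ℝ) ≤ 2*r))
  have hT2 := mul_nonneg hr (mul_nonneg (mul_nonneg hc2 hU) (pow_nonneg (by linarith : (0:ℝ) ≤ 2*r) 2))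
  have hT3 := mul_nonneg hr (mul_nonneg hc3 (pow_nonneg (by linarith : (0:ℝ) ≤ 2*r) 3))
  linarith [hT0, hT1, hT2, hT3]

/-- Proposition A.3: under the standing hypotheses (H), `Δ̃₁ ≥ (t-1)·Δ̃₂`. -/
theorem stmt7 (t p n : ℤ) (r0 rt0 x1 x2 x3 : ℝ)
    (ht : 2 ≤ t) (hp : 3 ≤ p) (hpt : p ≤ t + 1) (hn : 1 ≤ n)
    (hrt0 : 0 < rt0) (hrt0' : rt0 ≤ (n : ℝ) * ((p : ℝ) - 1) / 2)
    (hr0 : r0 = (p : ℝ) * rt0 / ((p : ℝ) - 1))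
    (hx1 : r0 ≤ x1)
    (hx2l : rt0 ≤ x2) (hx2u : x2 ≤ (n : ℝ) * (t : ℝ) * ((p : ℝ) - 1) - (t : ℝ) * rt0)
    (hx3 : rt0 ≤ x3)
    (hden1 : 0 < (n : ℝ) * ((p : ℝ) - 1) * ((p : ℝ) * t - t - 1) -
      ((p : ℝ) * t - t + p - 2) * rt0 + x3)
    (hden2 : 0 < (n : ℝ) * p * ((p : ℝ) - 1) * rt0 - rt0 ^ 2 - (n : ℝ) * ((p : ℝ) - 1) * x3) :
    ((t : ℝ) - 1) * Delta2 n p t r0 rt0 x1 x2 x3 ≤ Delta1 n p t r0 rt0 x1 x2 x3 := by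
  have hpR : (3:ℝ) ≤ (p:ℝ) := by exact_mod_cast hp
  have htR : (2:ℝ) ≤ (t:ℝ) := by exact_mod_cast ht
  have hnR : (1:ℝ) ≤ (n:ℝ) := by exact_mod_cast hn
  have hp1 : (0:ℝ) < (p:ℝ) - 1 := by linarith
  have hpne : ((p:ℝ)) ≠ 0 := by linarith
  have hp1ne : ((p:ℝ) - 1) ≠ 0 := ne_of_gt hp1
  have hgap : 2 * rt0 ≤ (n:ℝ) * ((p:ℝ) - 1) := by linarith
  -- (p-1) r0 = p rt0
  have hr0' : ((p:ℝ) - 1) * r0 = (p:ℝ) * rt0 := by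
    rw [hr0]; field_simp
  -- the x1 term
  have he1 : (p:ℝ) * (r0 - x1 / p) = (p:ℝ) * r0 - x1 := by field_simp
  have hF : (t:ℝ) * ((p:ℝ) * r0 - x1) ≤ (t:ℝ) * ((p:ℝ) * rt0) := by
    apply mul_le_mul_of_nonneg_left _ (by linarith : (0:ℝ) ≤ (t:ℝ))
    linarith
  have hE : (t:ℝ) * (((p:ℝ) - 1) * r0) = (t:ℝ) * ((p:ℝ) * rt0) := by rw [hr0']
  -- N1 bounds
  have hN1a : 0 ≤ (n:ℝ) * t * ((p:ℝ) - 1) - t * rt0 - x2 := by linarith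
  have hN1b : (n:ℝ) * t * ((p:ℝ) - 1) - t * rt0 - x2 ≤
      (n:ℝ) * t * ((p:ℝ) - 1) - t * rt0 - rt0 := by linarith
  have hM2 : ((n:ℝ) * t * ((p:ℝ) - 1) - t * rt0 - x2) ^ 2 ≤
      ((n:ℝ) * t * ((p:ℝ) - 1) - t * rt0 - rt0) ^ 2 := by
    exact pow_le_pow_left₀ hN1a hN1b 2
  -- denominators at x3 = rt0
  have hD1rpos : 0 < (n:ℝ) * ((p:ℝ) - 1) * ((p:ℝ) * t - t - 1) -
      ((p:ℝ) * t - t + p - 2) * rt0 + rt0 := by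
    nlinarith [mul_nonneg (by nlinarith : (0:ℝ) ≤ (p:ℝ) * t - t + p - 3)
        (by linarith : (0:ℝ) ≤ (n:ℝ) * ((p:ℝ) - 1) - 2 * rt0),
      mul_pos (mul_pos (by linarith : (0:ℝ) < (n:ℝ)) hp1) (by linarith : (0:ℝ) < (t:ℝ) - 1)]
  have hD1ge : (n:ℝ) * ((p:ℝ) - 1) * ((p:ℝ) * t - t - 1) - ((p:ℝ) * t - t + p - 2) * rt0 + rt0 ≤
      (n:ℝ) * ((p:ℝ) - 1) * ((p:ℝ) * t - t - 1) - ((p:ℝ) * t - t + p - 2) * rt0 + x3 := by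
    linarith
  have hD2le : (n:ℝ) * p * ((p:ℝ) - 1) * rt0 - rt0 ^ 2 - (n:ℝ) * ((p:ℝ) - 1) * x3 ≤
      (n:ℝ) * p * ((p:ℝ) - 1) * rt0 - rt0 ^ 2 - (n:ℝ) * ((p:ℝ) - 1) * rt0 := by
    nlinarith [mul_nonneg (mul_nonneg (by linarith : (0:ℝ) ≤ (n:ℝ)) hp1.le)
      (by linarith : (0:ℝ) ≤ x3 - rt0)]
  have hD2rpos : 0 < (n:ℝ) * p * ((p:ℝ) - 1) * rt0 - rt0 ^ 2 - (n:ℝ) * ((p:ℝ) - 1) * rt0 :=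
    lt_of_lt_of_le hden2 hD2le
  -- fraction comparisons
  have frac1 : ((n:ℝ) * t * ((p:ℝ) - 1) - t * rt0 - x2) ^ 2 /
        ((n:ℝ) * ((p:ℝ) - 1) * ((p:ℝ) * t - t - 1) - ((p:ℝ) * t - t + p - 2) * rt0 + x3) ≤
      ((n:ℝ) * t * ((p:ℝ) - 1) - t * rt0 - rt0) ^ 2 /
        ((n:ℝ) * ((p:ℝ) - 1) * ((p:ℝ) * t - t - 1) - ((p:ℝ) * t - t + p - 2) * rt0 + rt0) :=
    div_le_div₀ (sq_nonneg _) hM2 hD1rpos hD1ge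
  have frac2' : (n:ℝ) * ((p:ℝ) - 1) * rt0 ^ 2 /
        ((n:ℝ) * p * ((p:ℝ) - 1) * rt0 - rt0 ^ 2 - (n:ℝ) * ((p:ℝ) - 1) * rt0) ≤
      (n:ℝ) * ((p:ℝ) - 1) * x2 ^ 2 /
        ((n:ℝ) * p * ((p:ℝ) - 1) * rt0 - rt0 ^ 2 - (n:ℝ) * ((p:ℝ) - 1) * x3) :=
    div_le_div₀ (mul_nonneg (mul_nonneg (by linarith : (0:ℝ) ≤ (n:ℝ)) hp1.le) (sq_nonneg x2))
      (by nlinarith [pow_le_pow_left₀ hrt0.le hx2l 2] :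
        (n:ℝ) * ((p:ℝ) - 1) * rt0 ^ 2 ≤ (n:ℝ) * ((p:ℝ) - 1) * x2 ^ 2) hden2 hD2le
  have frac2 : ((t:ℝ) - 1) * ((n:ℝ) * ((p:ℝ) - 1) * rt0 ^ 2 /
        ((n:ℝ) * p * ((p:ℝ) - 1) * rt0 - rt0 ^ 2 - (n:ℝ) * ((p:ℝ) - 1) * rt0)) ≤
      ((t:ℝ) - 1) * ((n:ℝ) * ((p:ℝ) - 1) * x2 ^ 2 /
        ((n:ℝ) * p * ((p:ℝ) - 1) * rt0 - rt0 ^ 2 - (n:ℝ) * ((p:ℝ) - 1) * x3)) :=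
    mul_le_mul_of_nonneg_left frac2' (by linarith : (0:ℝ) ≤ (t:ℝ) - 1)
  -- the core inequality with cleared denominators
  have hP := corehom (p:ℝ) (t:ℝ) ((n:ℝ) * ((p:ℝ) - 1)) rt0 hpR htR hrt0.le hgap
  have hG : 0 ≤ (t:ℝ) * p * ((n:ℝ) * ((p:ℝ) - 1) - 2 * rt0) -
      ((n:ℝ) * t * ((p:ℝ) - 1) - t * rt0 - rt0) ^ 2 /
        ((n:ℝ) * ((p:ℝ) - 1) * ((p:ℝ) * t - t - 1) - ((p:ℝ) * t - t + p - 2) * rt0 + rt0) +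
      ((t:ℝ) - 1) * ((n:ℝ) * ((p:ℝ) - 1) * rt0 ^ 2 /
        ((n:ℝ) * p * ((p:ℝ) - 1) * rt0 - rt0 ^ 2 - (n:ℝ) * ((p:ℝ) - 1) * rt0)) := by
    have hid : (t:ℝ) * p * ((n:ℝ) * ((p:ℝ) - 1) - 2 * rt0) -
        ((n:ℝ) * t * ((p:ℝ) - 1) - t * rt0 - rt0) ^ 2 /
          ((n:ℝ) * ((p:ℝ) - 1) * ((p:ℝ) * t - t - 1) - ((p:ℝ) * t - t + p - 2) * rt0 + rt0) +
        ((t:ℝ) - 1) * ((n:ℝ) * ((p:ℝ) - 1) * rt0 ^ 2 /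
          ((n:ℝ) * p * ((p:ℝ) - 1) * rt0 - rt0 ^ 2 - (n:ℝ) * ((p:ℝ) - 1) * rt0)) =
        ((t:ℝ) * p * ((n:ℝ) * ((p:ℝ) - 1) - 2 * rt0) *
            ((n:ℝ) * ((p:ℝ) - 1) * ((p:ℝ) * t - t - 1) - ((p:ℝ) * t - t + p - 2) * rt0 + rt0) *
            ((p:ℝ) * ((n:ℝ) * ((p:ℝ) - 1)) * rt0 - rt0 ^ 2 - ((n:ℝ) * ((p:ℝ) - 1)) * rt0)
          - ((t:ℝ) * ((n:ℝ) * ((p:ℝ) - 1)) - ((t:ℝ) + 1) * rt0) ^ 2 *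
            ((p:ℝ) * ((n:ℝ) * ((p:ℝ) - 1)) * rt0 - rt0 ^ 2 - ((n:ℝ) * ((p:ℝ) - 1)) * rt0)
          + ((t:ℝ) - 1) * ((n:ℝ) * ((p:ℝ) - 1)) * rt0 ^ 2 *
            (((n:ℝ) * ((p:ℝ) - 1)) * ((p:ℝ) * t - t - 1) - ((p:ℝ) * t - t + p - 2) * rt0 + rt0)) /
        (((n:ℝ) * ((p:ℝ) - 1) * ((p:ℝ) * t - t - 1) - ((p:ℝ) * t - t + p - 2) * rt0 + rt0) *
          ((n:ℝ) * p * ((p:ℝ) - 1) * rt0 - rt0 ^ 2 - (n:ℝ) * ((p:ℝ) - 1) * rt0)) := by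
      have h1ne := ne_of_gt hD1rpos
      have h2ne := ne_of_gt hD2rpos
      rw [div_eq_mul_inv, div_eq_mul_inv, eq_div_iff (mul_ne_zero h1ne h2ne)]
      linear_combination (-((n:ℝ) * t * ((p:ℝ) - 1) - t * rt0 - rt0) ^ 2 * ((n:ℝ) * p * ((p:ℝ) - 1) * rt0 - rt0 ^ 2 - (n:ℝ) * ((p:ℝ) - 1) * rt0)) * mul_inv_cancel₀ h1ne + (((t:ℝ) - 1) * ((n:ℝ) * ((p:ℝ) - 1) * rt0 ^ 2) * ((n:ℝ) * ((p:ℝ) - 1) * ((p:ℝ) * t - t - 1) - ((p:ℝ) * t - t + p - 2) * rt0 + rt0)) * mul_inv_cancel₀ h2ne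
    rw [hid]
    apply div_nonneg _ (by positivity)
    convert hP using 1
  -- put everything together
  simp only [Delta1, Delta2]
  rw [he1]
  linarith [hF, hE, frac1, frac2, hG]
end

section
/- (Proposition A.4) Under the standing hypotheses (H), if additionally r̃0 ≤ n(p−1)/(t+1), then (t(p−1) − 1)·Δ̃₁ ≥ t(t−1)(p−1)·Δ̃₂; equivalently, when Δ̃₂ > 0, Δ̃₁/((t−1)Δ̃₂) ≥ t(p−1)/(t(p−1)−1). -/
set_option linter.unusedVariables false

private lemma sqrt_decomp (x c : ℝ) (h : c ≤ x) : ∃ a : ℝ, x = c + a ^ 2 :=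
  ⟨Real.sqrt (x - c), by rw [Real.sq_sqrt (by linarith)]; ring⟩

private lemma gam_nonneg (T q : ℝ) (hq : 2 ≤ q) (hTq : q ≤ T) :
    0 ≤ 3 + q - q^2 + 4*T - T*q - 2*T*q^2 + T^2 - 7*T^2*q - 3*T^2*q^2 + 2*T^2*q^3
      - T^3*q + 2*T^3*q^2 + 2*T^3*q^3 := by
  obtain ⟨a, rfl⟩ := sqrt_decomp q 2 hq
  obtain ⟨b, rfl⟩ := sqrt_decomp T (2 + a ^ 2) hTq
  have h : (3:ℝ) + (2+a^2) - (2+a^2)^2 + 4*(2+a^2+b^2) - (2+a^2+b^2)*(2+a^2)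
      - 2*(2+a^2+b^2)*(2+a^2)^2 + (2+a^2+b^2)^2 - 7*(2+a^2+b^2)^2*(2+a^2)
      - 3*(2+a^2+b^2)^2*(2+a^2)^2 + 2*(2+a^2+b^2)^2*(2+a^2)^3 - (2+a^2+b^2)^3*(2+a^2)
      + 2*(2+a^2+b^2)^3*(2+a^2)^2 + 2*(2+a^2+b^2)^3*(2+a^2)^3 =
      129 + 222 * b ^ 2 + 123 * b ^ 4 + 22 * b ^ 6 + 469 * a ^ 2 + 629 * a ^ 2 * b ^ 2 + 257 * a ^ 2 * b ^ 4 + 31 * a ^ 2 * b ^ 6 + 649 * a ^ 4 + 650 * a ^ 4 * b ^ 2 + 186 * a ^ 4 * b ^ 4 + 14 * a ^ 4 * b ^ 6 + 439 * a ^ 6 + 311 * a ^ 6 * b ^ 2 + 56 * a ^ 6 * b ^ 4 + 2 * a ^ 6 * b ^ 6 + 156 * a ^ 8 + 70 * a ^ 8 * b ^ 2 + 6 * a ^ 8 * b ^ 4 + 28 * a ^ 10 + 6 * a ^ 10 * b ^ 2 + 2 * a ^ 12 := by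
    ring
  rw [h]; positivity

private lemma ns_nonneg (T q : ℝ) (hq : 2 ≤ q) (hTq : q ≤ T) :
    0 ≤ -5 - q + 2*q^2 - 2*T + 4*T*q + 2*T*q^2 + 5*T^2 + 7*T^2*q - T^2*q^2 - 3*T^2*q^3
      + 2*T^3 - 8*T^3*q - 6*T^3*q^2 - 2*T^4*q + 3*T^4*q^2 + 3*T^4*q^3 := by
  obtain ⟨a, rfl⟩ := sqrt_decomp q 2 hq
  obtain ⟨b, rfl⟩ := sqrt_decomp T (2 + a ^ 2) hTq
  have h : -5 - (2+a^2) + 2*(2+a^2)^2 - 2*(2+a^2+b^2) + 4*(2+a^2+b^2)*(2+a^2)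
      + 2*(2+a^2+b^2)*(2+a^2)^2 + 5*(2+a^2+b^2)^2 + 7*(2+a^2+b^2)^2*(2+a^2)
      - (2+a^2+b^2)^2*(2+a^2)^2 - 3*(2+a^2+b^2)^2*(2+a^2)^3 + 2*(2+a^2+b^2)^3
      - 8*(2+a^2+b^2)^3*(2+a^2) - 6*(2+a^2+b^2)^3*(2+a^2)^2 - 2*(2+a^2+b^2)^4*(2+a^2)
      + 3*(2+a^2+b^2)^4*(2+a^2)^2 + 3*(2+a^2+b^2)^4*(2+a^2)^3 =
      201 + 546 * b ^ 2 + 531 * b ^ 4 + 218 * b ^ 6 + 32 * b ^ 8 + 925 * a ^ 2 + 2030 * a ^ 2 * b ^ 2 + 1533 * a ^ 2 * b ^ 4 + 464 * a ^ 2 * b ^ 6 + 46 * a ^ 2 * b ^ 8 + 1717 * a ^ 4 + 2938 * a ^ 4 * b ^ 2 + 1649 * a ^ 4 * b ^ 4 + 346 * a ^ 4 * b ^ 6 + 21 * a ^ 4 * b ^ 8 + 1659 * a ^ 6 + 2118 * a ^ 6 * b ^ 2 + 831 * a ^ 6 * b ^ 4 + 108 * a ^ 6 * b ^ 6 + 3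 * a ^ 6 * b ^ 8 + 901 * a ^ 8 + 808 * a ^ 8 * b ^ 2 + 198 * a ^ 8 * b ^ 4 + 12 * a ^ 8 * b ^ 6 + 277 * a ^ 10 + 156 * a ^ 10 * b ^ 2 + 18 * a ^ 10 * b ^ 4 + 45 * a ^ 12 + 12 * a ^ 12 * b ^ 2 + 3 * a ^ 14 := by
    ring
  rw [h]; positivity

set_option maxHeartbeats 1000000 in
private lemma G_nonneg (T q : ℝ) (hq : 2 ≤ q) (hTq : q ≤ T) :
    0 ≤ 2 - q^2 - T - 2*T*q - 3*T^2 + 2*T^2*q^2 + T^2*q^3 + T^3 + 5*T^3*q + T^3*q^2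
      - T^3*q^3 + T^4 - 2*T^4*q - 3*T^4*q^2 - T^4*q^3 - T^5*q + T^5*q^2 + T^5*q^3 := by
  obtain ⟨a, rfl⟩ := sqrt_decomp q 2 hq
  obtain ⟨b, rfl⟩ := sqrt_decomp T (2 + a ^ 2) hTq
  have h : 2 - (2+a^2)^2 - (2+a^2+b^2) - 2*(2+a^2+b^2)*(2+a^2) - 3*(2+a^2+b^2)^2
      + 2*(2+a^2+b^2)^2*(2+a^2)^2 + (2+a^2+b^2)^2*(2+a^2)^3 + (2+a^2+b^2)^3
      + 5*(2+a^2+b^2)^3*(2+a^2) + (2+a^2+b^2)^3*(2+a^2)^2 - (2+a^2+b^2)^3*(2+a^2)^3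
      + (2+a^2+b^2)^4 - 2*(2+a^2+b^2)^4*(2+a^2) - 3*(2+a^2+b^2)^4*(2+a^2)^2
      - (2+a^2+b^2)^4*(2+a^2)^3 - (2+a^2+b^2)^5*(2+a^2) + (2+a^2+b^2)^5*(2+a^2)^2
      + (2+a^2+b^2)^5*(2+a^2)^3 =
      48 + 195 * b ^ 2 + 303 * b ^ 4 + 223 * b ^ 6 + 77 * b ^ 8 + 10 * b ^ 10 + 307 * a ^ 2 + 1016 * a ^ 2 * b ^ 2 + 1247 * a ^ 2 * b ^ 4 + 697 * a ^ 2 * b ^ 6 + 174 * a ^ 2 * b ^ 8 + 15 * a ^ 2 * b ^ 10 + 784 * a ^ 4 + 2069 * a ^ 4 * b ^ 2 + 1951 * a ^ 4 * b ^ 4 + 799 * a ^ 4 * b ^ 6 + 136 * a ^ 4 * b ^ 8 + 7 * a ^ 4 * b ^ 10 + 1057 * a ^ 6 + 2159 * a ^ 6 * b ^ 2 + 1504 * a ^ 6 * b ^ 4 + 425 * a ^ 6 * b ^ 6 + 44 * a ^ 6 * b ^ 8 + 1 * a ^ 6 * b ^ 10 + 828 * a ^ 8 + 1257 * a ^ 8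 * b ^ 2 + 609 * a ^ 8 * b ^ 4 + 106 * a ^ 8 * b ^ 6 + 5 * a ^ 8 * b ^ 8 + 388 * a ^ 10 + 412 * a ^ 10 * b ^ 2 + 124 * a ^ 10 * b ^ 4 + 10 * a ^ 10 * b ^ 6 + 107 * a ^ 12 + 71 * a ^ 12 * b ^ 2 + 10 * a ^ 12 * b ^ 4 + 16 * a ^ 14 + 5 * a ^ 14 * b ^ 2 + 1 * a ^ 16 := by
    ring
  rw [h]; positivity

set_option maxHeartbeats 1000000 in
private lemma core_ineq (T q m u : ℝ) (hq : 2 ≤ q) (hTq : q ≤ T) (hu : 0 < u)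
    (hum : u * (T + 1) ≤ m) :
    (T * q - 1) * (T * m - (T + 1) * u) ^ 2 ≤
      ((q + 1) * (T * (T * q - 1) * m - (2 * T ^ 2 * q - T - 1) * u)) *
        (m * (T * q - 1) - (T * q + q - 2) * u) := by
  have hga := gam_nonneg T q hq hTq
  have hns := ns_nonneg T q hq hTq
  have hG := G_nonneg T q hq hTq
  have hm : 0 < m := lt_of_lt_of_le (by nlinarith) hum
  have hmw : 0 ≤ m - (T + 1) * u := by linarith [hum]
  have key : 0 ≤
      (3 + q - q^2 + 4*T - T*q - 2*T*q^2 + T^2 - 7*T^2*q - 3*T^2*q^2 + 2*T^2*q^3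
        - T^3*q + 2*T^3*q^2 + 2*T^3*q^3) * (m - (T + 1) * u) ^ 2 +
      (-5 - q + 2*q^2 - 2*T + 4*T*q + 2*T*q^2 + 5*T^2 + 7*T^2*q - T^2*q^2 - 3*T^2*q^3
        + 2*T^3 - 8*T^3*q - 6*T^3*q^2 - 2*T^4*q + 3*T^4*q^2 + 3*T^4*q^3) *
        ((m - (T + 1) * u) * m) +
      (2 - q^2 - T - 2*T*q - 3*T^2 + 2*T^2*q^2 + T^2*q^3 + T^3 + 5*T^3*q + T^3*q^2
        - T^3*q^3 + T^4 - 2*T^4*q - 3*T^4*q^2 - T^4*q^3 - T^5*q + T^5*q^2 + T^5*q^3) *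
        m ^ 2 := by
    have h1 := mul_nonneg hga (sq_nonneg (m - (T + 1) * u))
    have h2 := mul_nonneg hns (mul_nonneg hmw hm.le)
    have h3 := mul_nonneg hG (sq_nonneg m)
    linarith
  have hident : (((q + 1) * (T * (T * q - 1) * m - (2 * T ^ 2 * q - T - 1) * u)) *
        (m * (T * q - 1) - (T * q + q - 2) * u) -
      (T * q - 1) * (T * m - (T + 1) * u) ^ 2) * (T + 1) ^ 2 =
      (3 + q - q^2 + 4*T - T*q - 2*T*q^2 + T^2 - 7*T^2*q - 3*T^2*q^2 + 2*T^2*q^3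
        - T^3*q + 2*T^3*q^2 + 2*T^3*q^3) * (m - (T + 1) * u) ^ 2 +
      (-5 - q + 2*q^2 - 2*T + 4*T*q + 2*T*q^2 + 5*T^2 + 7*T^2*q - T^2*q^2 - 3*T^2*q^3
        + 2*T^3 - 8*T^3*q - 6*T^3*q^2 - 2*T^4*q + 3*T^4*q^2 + 3*T^4*q^3) *
        ((m - (T + 1) * u) * m) +
      (2 - q^2 - T - 2*T*q - 3*T^2 + 2*T^2*q^2 + T^2*q^3 + T^3 + 5*T^3*q + T^3*q^2
        - T^3*q^3 + T^4 - 2*T^4*q - 3*T^4*q^2 - T^4*q^3 - T^5*q + T^5*q^2 + T^5*q^3) *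
        m ^ 2 := by
    ring
  have hT1 : (0:ℝ) < (T + 1) ^ 2 := pow_pos (by linarith) 2
  nlinarith [key, hident, hT1]

set_option maxHeartbeats 4000000 in
/-- Proposition A.4: under the standing hypotheses (H), if moreover
`r̃₀ ≤ n(p-1)/(t+1)`, then `(t(p-1)-1)·Δ̃₁ ≥ t(t-1)(p-1)·Δ̃₂`; equivalently, when
`Δ̃₂ > 0`, `Δ̃₁/((t-1)Δ̃₂) ≥ t(p-1)/(t(p-1)-1)`. -/
theorem stmt8 (t p n : ℤ) (r0 rt0 x1 x2 x3 : ℝ)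
    (ht : 2 ≤ t) (hp : 3 ≤ p) (hpt : p ≤ t + 1) (hn : 1 ≤ n)
    (hrt0 : 0 < rt0) (hrt0' : rt0 ≤ (n : ℝ) * ((p : ℝ) - 1) / 2)
    (hr0 : r0 = (p : ℝ) * rt0 / ((p : ℝ) - 1))
    (hx1 : r0 ≤ x1)
    (hx2l : rt0 ≤ x2) (hx2u : x2 ≤ (n : ℝ) * (t : ℝ) * ((p : ℝ) - 1) - (t : ℝ) * rt0)
    (hx3 : rt0 ≤ x3)
    (hden1 : 0 < (n : ℝ) * ((p : ℝ) - 1) * ((p : ℝ) * t - t - 1) -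
      ((p : ℝ) * t - t + p - 2) * rt0 + x3)
    (hden2 : 0 < (n : ℝ) * p * ((p : ℝ) - 1) * rt0 - rt0 ^ 2 - (n : ℝ) * ((p : ℝ) - 1) * x3)
    (hsmall : rt0 ≤ (n : ℝ) * ((p : ℝ) - 1) / ((t : ℝ) + 1)) :
    (t : ℝ) * ((t : ℝ) - 1) * ((p : ℝ) - 1) * Delta2 n p t r0 rt0 x1 x2 x3 ≤
        ((t : ℝ) * ((p : ℝ) - 1) - 1) * Delta1 n p t r0 rt0 x1 x2 x3 ∧
      (0 < Delta2 n p t r0 rt0 x1 x2 x3 →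
        (t : ℝ) * ((p : ℝ) - 1) / ((t : ℝ) * ((p : ℝ) - 1) - 1) ≤
          Delta1 n p t r0 rt0 x1 x2 x3 / (((t : ℝ) - 1) * Delta2 n p t r0 rt0 x1 x2 x3)) := by
  subst hr0
  have hT2 : (2:ℝ) ≤ (t:ℝ) := by exact_mod_cast ht
  have hp3 : (3:ℝ) ≤ (p:ℝ) := by exact_mod_cast hp
  have hpt' : (p:ℝ) ≤ (t:ℝ) + 1 := by exact_mod_cast hpt
  have hn1 : (1:ℝ) ≤ (n:ℝ) := by exact_mod_cast hn
  have hq2 : (2:ℝ) ≤ (p:ℝ) - 1 := by linarith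
  have hqT : (p:ℝ) - 1 ≤ (t:ℝ) := by linarith
  have hpne : ((p:ℝ) - 1) ≠ 0 := by linarith
  have hp0 : (p:ℝ) ≠ 0 := by linarith
  have hum : rt0 * ((t:ℝ) + 1) ≤ (n:ℝ) * ((p:ℝ) - 1) :=
    (le_div_iff₀ (by linarith)).1 hsmall
  have hcore := core_ineq (t:ℝ) ((p:ℝ) - 1) ((n:ℝ) * ((p:ℝ) - 1)) rt0 hq2 hqT hrt0 hum
  have hc1 : (0:ℝ) ≤ (t:ℝ) * ((p:ℝ) - 1) - 1 := by nlinarith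
  have hA0 : 0 ≤ (n:ℝ) * (t:ℝ) * ((p:ℝ) - 1) - (t:ℝ) * rt0 - x2 := by linarith
  have hAle : (n:ℝ) * (t:ℝ) * ((p:ℝ) - 1) - (t:ℝ) * rt0 - x2 ≤
      (t:ℝ) * ((n:ℝ) * ((p:ℝ) - 1)) - ((t:ℝ) + 1) * rt0 := by linarith [hx2l]
  have hA2 : ((n:ℝ) * (t:ℝ) * ((p:ℝ) - 1) - (t:ℝ) * rt0 - x2) ^ 2 ≤
      ((t:ℝ) * ((n:ℝ) * ((p:ℝ) - 1)) - ((t:ℝ) + 1) * rt0) ^ 2 :=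
    pow_le_pow_left₀ hA0 hAle 2
  -- K0 nonneg
  have hK0T : 0 ≤ (((p:ℝ) - 1 + 1) * ((t:ℝ) * ((t:ℝ) * ((p:ℝ) - 1) - 1) * ((n:ℝ) * ((p:ℝ) - 1))
      - (2 * (t:ℝ) ^ 2 * ((p:ℝ) - 1) - (t:ℝ) - 1) * rt0)) * ((t:ℝ) + 1) := by
    have h1 : 0 ≤ ((n:ℝ) * ((p:ℝ) - 1) - rt0 * ((t:ℝ) + 1)) *
        (((p:ℝ) - 1 + 1) * (2 * (t:ℝ) ^ 2 * ((p:ℝ) - 1) - (t:ℝ) - 1)) := by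
      apply mul_nonneg (by linarith)
      nlinarith
    have h2 : 0 ≤ ((n:ℝ) * ((p:ℝ) - 1)) * (((p:ℝ) - 1 + 1) * (((t:ℝ) - 1) *
        ((t:ℝ) ^ 2 * ((p:ℝ) - 1) - (t:ℝ) - 1))) := by
      apply mul_nonneg (by nlinarith)
      apply mul_nonneg (by linarith)
      apply mul_nonneg (by linarith)
      nlinarith
    linarith [h1, h2]
  have hK0 : 0 ≤ ((p:ℝ) - 1 + 1) * ((t:ℝ) * ((t:ℝ) * ((p:ℝ) - 1) - 1) * ((n:ℝ) * ((p:ℝ) - 1))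
      - (2 * (t:ℝ) ^ 2 * ((p:ℝ) - 1) - (t:ℝ) - 1) * rt0) := by
    nlinarith [hK0T]
  -- chain
  have hD10le : ((n:ℝ) * ((p:ℝ) - 1)) * ((t:ℝ) * ((p:ℝ) - 1) - 1) -
      ((t:ℝ) * ((p:ℝ) - 1) + ((p:ℝ) - 1) - 2) * rt0 ≤
      (n : ℝ) * ((p : ℝ) - 1) * ((p : ℝ) * t - t - 1) - ((p : ℝ) * t - t + p - 2) * rt0 + x3 := by
    linarith [hx3]
  have hchain : ((t:ℝ) * ((p:ℝ) - 1) - 1) *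
      ((n:ℝ) * (t:ℝ) * ((p:ℝ) - 1) - (t:ℝ) * rt0 - x2) ^ 2 ≤
      (((p:ℝ) - 1 + 1) * ((t:ℝ) * ((t:ℝ) * ((p:ℝ) - 1) - 1) * ((n:ℝ) * ((p:ℝ) - 1))
        - (2 * (t:ℝ) ^ 2 * ((p:ℝ) - 1) - (t:ℝ) - 1) * rt0)) *
      ((n : ℝ) * ((p : ℝ) - 1) * ((p : ℝ) * t - t - 1) - ((p : ℝ) * t - t + p - 2) * rt0 + x3) := by
    have s1 := mul_le_mul_of_nonneg_left hA2 hc1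
    have s3 := mul_le_mul_of_nonneg_left hD10le hK0
    linarith [s1, hcore, s3]
  have hdivle : (((t:ℝ) * ((p:ℝ) - 1) - 1) *
      ((n:ℝ) * (t:ℝ) * ((p:ℝ) - 1) - (t:ℝ) * rt0 - x2) ^ 2) /
      ((n : ℝ) * ((p : ℝ) - 1) * ((p : ℝ) * t - t - 1) - ((p : ℝ) * t - t + p - 2) * rt0 + x3) ≤
      ((p:ℝ) - 1 + 1) * ((t:ℝ) * ((t:ℝ) * ((p:ℝ) - 1) - 1) * ((n:ℝ) * ((p:ℝ) - 1))
        - (2 * (t:ℝ) ^ 2 * ((p:ℝ) - 1) - (t:ℝ) - 1) * rt0) :=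
    (div_le_iff₀ hden1).2 hchain
  -- the P bound
  have heq : (p:ℝ) * ((p:ℝ) * rt0 / ((p:ℝ) - 1)) - (p:ℝ) * rt0 = (p:ℝ) * rt0 / ((p:ℝ) - 1) := by
    field_simp
    ring
  have hP : (p:ℝ) * ((p:ℝ) * rt0 / ((p:ℝ) - 1)) - x1 ≤ (p:ℝ) * rt0 := by linarith [hx1, heq]
  have hPmul : ((t:ℝ) * ((t:ℝ) * ((p:ℝ) - 1)) - 1) *
      ((p:ℝ) * ((p:ℝ) * rt0 / ((p:ℝ) - 1)) - x1) ≤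
      ((t:ℝ) * ((t:ℝ) * ((p:ℝ) - 1)) - 1) * ((p:ℝ) * rt0) :=
    mul_le_mul_of_nonneg_left hP (by nlinarith)
  have hx2nn : 0 ≤ (((t:ℝ) - 1) * ((t:ℝ) * ((p:ℝ) - 1))) *
      ((n:ℝ) * ((p:ℝ) - 1) * x2 ^ 2 /
        ((n : ℝ) * p * ((p : ℝ) - 1) * rt0 - rt0 ^ 2 - (n : ℝ) * ((p : ℝ) - 1) * x3)) := by
    apply mul_nonneg (by nlinarith)
    apply div_nonneg _ hden2.le
    have : (0:ℝ) ≤ (n:ℝ) * ((p:ℝ) - 1) := by nlinarith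
    positivity
  have hPeq : (p:ℝ) * ((p:ℝ) * rt0 / ((p:ℝ) - 1) - x1 / (p:ℝ)) =
      (p:ℝ) * ((p:ℝ) * rt0 / ((p:ℝ) - 1)) - x1 := by
    field_simp
  have hSeq : (t:ℝ) * ((p:ℝ) - 1) * ((n:ℝ) * (p:ℝ) - (p:ℝ) * rt0 / ((p:ℝ) - 1)) =
      (t:ℝ) * ((p:ℝ) - 1) * ((n:ℝ) * (p:ℝ)) - (t:ℝ) * ((p:ℝ) * rt0) := by
    field_simp
  have main : (t : ℝ) * ((t : ℝ) - 1) * ((p : ℝ) - 1) *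
      Delta2 n p t ((p : ℝ) * rt0 / ((p : ℝ) - 1)) rt0 x1 x2 x3 ≤
      ((t : ℝ) * ((p : ℝ) - 1) - 1) *
      Delta1 n p t ((p : ℝ) * rt0 / ((p : ℝ) - 1)) rt0 x1 x2 x3 := by
    have hdivle' : ((t:ℝ) * ((p:ℝ) - 1) - 1) *
        (((n:ℝ) * (t:ℝ) * ((p:ℝ) - 1) - (t:ℝ) * rt0 - x2) ^ 2 /
          ((n : ℝ) * ((p : ℝ) - 1) * ((p : ℝ) * t - t - 1) -
            ((p : ℝ) * t - t + p - 2) * rt0 + x3)) ≤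
        ((p:ℝ) - 1 + 1) * ((t:ℝ) * ((t:ℝ) * ((p:ℝ) - 1) - 1) * ((n:ℝ) * ((p:ℝ) - 1))
          - (2 * (t:ℝ) ^ 2 * ((p:ℝ) - 1) - (t:ℝ) - 1) * rt0) := by
      rw [← mul_div_assoc]; exact hdivle
    simp only [Delta1, Delta2]
    rw [hPeq, hSeq]
    push_cast at hdivle' hPmul hx2nn ⊢
    set z1 := ((n:ℝ) * (t:ℝ) * ((p:ℝ) - 1) - (t:ℝ) * rt0 - x2) ^ 2 /
      ((n : ℝ) * ((p : ℝ) - 1) * ((p : ℝ) * (t:ℝ) - (t:ℝ) - 1) -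
        ((p : ℝ) * (t:ℝ) - (t:ℝ) + (p:ℝ) - 2) * rt0 + x3) with hz1
    set z2 := (p:ℝ) * rt0 / ((p:ℝ) - 1) with hz2
    set z3 := (n:ℝ) * ((p:ℝ) - 1) * x2 ^ 2 /
      ((n : ℝ) * (p:ℝ) * ((p : ℝ) - 1) * rt0 - rt0 ^ 2 - (n : ℝ) * ((p : ℝ) - 1) * x3) with hz3
    linarith [hdivle', hPmul, hx2nn]
  refine ⟨main, fun hpos => ?_⟩
  have hc1' : (0:ℝ) < (t:ℝ) * ((p:ℝ) - 1) - 1 := by nlinarith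
  have hden : 0 < ((t:ℝ) - 1) * Delta2 n p t ((p : ℝ) * rt0 / ((p : ℝ) - 1)) rt0 x1 x2 x3 :=
    mul_pos (by linarith) hpos
  rw [div_le_div_iff₀ hc1' hden]
  linarith [main]
end

section
/- (Proposition A.5, inequality (A.9)) Under the standing hypotheses (H), one has Θ̃₁ ≥ 0 and (pt − t − 1)·Θ̃₁ ≤ t(p−1)·Θ̃₂. -/
set_option linter.unusedVariables false
set_option maxHeartbeats 1000000

/-- Key polynomial inequality, stated with `m = n(p-1)`. -/
lemma key_ineq (m p t r x2 x3 : ℝ)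
    (hp : 3 ≤ p) (ht : 2 ≤ t) (hr : 0 < r) (hm : 2 * r ≤ m)
    (hx2l : r ≤ x2) (hx2u : x2 ≤ t * m - t * r) (hx3 : r ≤ x3)
    (hd1 : 0 < m * (p * t - t - 1) - (p * t - t + p - 2) * r + x3)
    (hd2 : 0 < m * p * r - r ^ 2 - m * x3) :
    (p * t - t - 1) * (t * m - t * r - x2) * (m * p * r - r ^ 2 - m * x3) ≤
      t * (p - 1) * (m * x2) * (m * (p * t - t - 1) - (p * t - t + p - 2) * r + x3) := by
  have hu : (0:ℝ) ≤ t - 2 := by linarith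
  have hv : (0:ℝ) ≤ p - 3 := by linarith
  have ha : (0:ℝ) < p * t - t - 1 := by nlinarith [mul_nonneg hu hv]
  have hmpos : (0:ℝ) < m := by linarith
  have hN1 : 0 ≤ t * m - t * r - x2 := by linarith
  have hNt : 0 ≤ t * m - t * r - r := by linarith
  have hx3r : 0 ≤ x3 - r := by linarith
  -- step 1: replace x2 by r in the left factor
  have step1 : (p * t - t - 1) * (t * m - t * r - x2) * (m * p * r - r ^ 2 - m * x3) ≤
      (p * t - t - 1) * (t * m - t * r - r) * (m * p * r - r ^ 2 - m * x3) := by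
    nlinarith [mul_nonneg (mul_nonneg ha.le hd2.le) (by linarith : (0:ℝ) ≤ x2 - r)]
  -- step 2: replace x3 by r on the left
  have step2 : (p * t - t - 1) * (t * m - t * r - r) * (m * p * r - r ^ 2 - m * x3) ≤
      (p * t - t - 1) * (t * m - t * r - r) * (m * p * r - r ^ 2 - m * r) := by
    nlinarith [mul_nonneg (mul_nonneg ha.le hNt) (mul_nonneg hmpos.le hx3r)]
  -- step 3: the core inequality at x2 = r, x3 = r
  have step3 : (p * t - t - 1) * (t * m - t * r - r) * (m * p * r - r ^ 2 - m * r) ≤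
      t * (p - 1) * (m * r) * (m * (p * t - t - 1) - (p * t - t + p - 2) * r + r) := by
    have hs : (0:ℝ) ≤ m - 2 * r := by linarith
    have hA : (0:ℝ) ≤ 8 + 5*(p-3) + 9*(t-2) + 5*(t-2)*(p-3) + 2*(t-2)^2 + (t-2)^2*(p-3) := by
      nlinarith [mul_nonneg hu hv, mul_nonneg hu hu, mul_nonneg (mul_nonneg hu hu) hv]
    have hB : (0:ℝ) ≤ 7 + 4*(p-3) + 9*(t-2) + 5*(t-2)*(p-3) + 2*(t-2)^2 + (t-2)^2*(p-3) := by
      nlinarith [mul_nonneg hu hv, mul_nonneg hu hu, mul_nonneg (mul_nonneg hu hu) hv]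
    have hid : t * (p - 1) * (m * r) * (m * (p * t - t - 1) - (p * t - t + p - 2) * r + r)
        - (p * t - t - 1) * (t * m - t * r - r) * (m * p * r - r ^ 2 - m * r)
        = r * (r * ((m - 2*r) * (8 + 5*(p-3) + 9*(t-2) + 5*(t-2)*(p-3) + 2*(t-2)^2 + (t-2)^2*(p-3))
            + r * (7 + 4*(p-3) + 9*(t-2) + 5*(t-2)*(p-3) + 2*(t-2)^2 + (t-2)^2*(p-3)))) := by
      ring
    nlinarith [mul_nonneg hr.le (mul_nonneg hr.le (add_nonneg (mul_nonneg hs hA) (mul_nonneg hr.le hB))), hid]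
  -- step 4: restore x3 on the right
  have step4 : t * (p - 1) * (m * r) * (m * (p * t - t - 1) - (p * t - t + p - 2) * r + r) ≤
      t * (p - 1) * (m * r) * (m * (p * t - t - 1) - (p * t - t + p - 2) * r + x3) := by
    nlinarith [mul_nonneg (mul_nonneg (mul_nonneg (by linarith : (0:ℝ) ≤ t)
      (by linarith : (0:ℝ) ≤ p - 1)) (mul_nonneg hmpos.le hr.le)) hx3r]
  -- step 5: restore x2 on the right
  have step5 : t * (p - 1) * (m * r) * (m * (p * t - t - 1) - (p * t - t + p - 2) * r + x3) ≤
      t * (p - 1) * (m * x2) * (m * (p * t - t - 1) - (p * t - t + p - 2) * r + x3) := by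
    nlinarith [mul_nonneg (mul_nonneg (mul_nonneg (by linarith : (0:ℝ) ≤ t)
      (by linarith : (0:ℝ) ≤ p - 1)) hmpos.le) (mul_nonneg (by linarith : (0:ℝ) ≤ x2 - r) hd1.le)]
  linarith

/-- Proposition A.5, inequality (A.9): under the standing hypotheses (H),
`Θ̃₁ ≥ 0` and `(pt - t - 1)·Θ̃₁ ≤ t(p-1)·Θ̃₂`. -/
theorem stmt9 (t p n : ℤ) (r0 rt0 x1 x2 x3 : ℝ)
    (ht : 2 ≤ t) (hp : 3 ≤ p) (hpt : p ≤ t + 1) (hn : 1 ≤ n)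
    (hrt0 : 0 < rt0) (hrt0' : rt0 ≤ (n : ℝ) * ((p : ℝ) - 1) / 2)
    (hr0 : r0 = (p : ℝ) * rt0 / ((p : ℝ) - 1))
    (hx1 : r0 ≤ x1)
    (hx2l : rt0 ≤ x2) (hx2u : x2 ≤ (n : ℝ) * (t : ℝ) * ((p : ℝ) - 1) - (t : ℝ) * rt0)
    (hx3 : rt0 ≤ x3)
    (hden1 : 0 < (n : ℝ) * ((p : ℝ) - 1) * ((p : ℝ) * t - t - 1) -
      ((p : ℝ) * t - t + p - 2) * rt0 + x3)
    (hden2 : 0 < (n : ℝ) * p * ((p : ℝ) - 1) * rt0 - rt0 ^ 2 - (n : ℝ) * ((p : ℝ) - 1) * x3) :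
    0 ≤ Theta1 n p t r0 rt0 x1 x2 x3 ∧
      ((p : ℝ) * t - t - 1) * Theta1 n p t r0 rt0 x1 x2 x3 ≤
        (t : ℝ) * ((p : ℝ) - 1) * Theta2 n p t r0 rt0 x1 x2 x3 := by
  have hpR : (3:ℝ) ≤ (p:ℝ) := by exact_mod_cast hp
  have htR : (2:ℝ) ≤ (t:ℝ) := by exact_mod_cast ht
  have hnR : (1:ℝ) ≤ (n:ℝ) := by exact_mod_cast hn
  have hN1 : 0 ≤ (n:ℝ) * t * ((p:ℝ) - 1) - (t:ℝ) * rt0 - x2 := by linarith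
  constructor
  · exact div_nonneg hN1 hden1.le
  · simp only [Theta1, Theta2]
    rw [mul_div_assoc', mul_div_assoc', div_le_div_iff₀ hden1 hden2]
    have key := key_ineq ((n:ℝ) * ((p:ℝ) - 1)) p t rt0 x2 x3 hpR htR hrt0
      (by linarith) hx2l (by nlinarith) hx3 (by nlinarith) (by nlinarith)
    nlinarith [key]
end

section
/- (Proposition A.5, inequality (A.10)) Under the standing hypotheses (H), if additionally r̃0 ≥ n(p−1)/(t+1), then Θ̃₂ ≥ Θ̃₁. -/
set_option linter.unusedVariables false

/-- Proposition A.5, inequality (A.10): under the standing hypotheses (H), if moreover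
`r̃₀ ≥ n(p-1)/(t+1)`, then `Θ̃₂ ≥ Θ̃₁`. -/
theorem stmt10 (t p n : ℤ) (r0 rt0 x1 x2 x3 : ℝ)
    (ht : 2 ≤ t) (hp : 3 ≤ p) (hpt : p ≤ t + 1) (hn : 1 ≤ n)
    (hrt0 : 0 < rt0) (hrt0' : rt0 ≤ (n : ℝ) * ((p : ℝ) - 1) / 2)
    (hr0 : r0 = (p : ℝ) * rt0 / ((p : ℝ) - 1))
    (hx1 : r0 ≤ x1)
    (hx2l : rt0 ≤ x2) (hx2u : x2 ≤ (n : ℝ) * (t : ℝ) * ((p : ℝ) - 1) - (t : ℝ) * rt0)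
    (hx3 : rt0 ≤ x3)
    (hden1 : 0 < (n : ℝ) * ((p : ℝ) - 1) * ((p : ℝ) * t - t - 1) -
      ((p : ℝ) * t - t + p - 2) * rt0 + x3)
    (hden2 : 0 < (n : ℝ) * p * ((p : ℝ) - 1) * rt0 - rt0 ^ 2 - (n : ℝ) * ((p : ℝ) - 1) * x3)
    (hbig : (n : ℝ) * ((p : ℝ) - 1) / ((t : ℝ) + 1) ≤ rt0) :
    Theta1 n p t r0 rt0 x1 x2 x3 ≤ Theta2 n p t r0 rt0 x1 x2 x3 := by
  have hT : (2:ℝ) ≤ (t:ℝ) := by exact_mod_cast ht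
  have hP : (3:ℝ) ≤ (p:ℝ) := by exact_mod_cast hp
  have hPT : (p:ℝ) ≤ (t:ℝ) + 1 := by exact_mod_cast hpt
  have hN : (1:ℝ) ≤ (n:ℝ) := by exact_mod_cast hn
  set N := (n:ℝ); set P := (p:ℝ); set T := (t:ℝ)
  set m := N * (P - 1) with hm
  have hm2 : 2 * rt0 ≤ m := by rw [hm]; linarith
  have hmbig : m ≤ (T + 1) * rt0 := by
    have ht1 : (0:ℝ) < T + 1 := by linarith
    rw [div_le_iff₀ ht1] at hbig; rw [hm]; linarith
  unfold Theta1 Theta2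
  rw [div_le_div_iff₀ hden1 hden2]
  have h1 : 0 ≤ x3 - rt0 := by linarith
  have h2 : 0 ≤ x2 - rt0 := by linarith
  have hγ : 0 ≤ m * T * (m - rt0) := by
    apply mul_nonneg (mul_nonneg (by nlinarith) (by linarith)); linarith
  have hβ : 0 ≤ m * (m * (P*T - T - 1) - (P*T - T + P - 3) * rt0) + rt0 * (m * (P - 1) - rt0) := by
    have hc : (0:ℝ) ≤ P*T - T + P - 3 := by nlinarith
    have : m * (P*T - T - 1) - (P*T - T + P - 3) * rt0 ≥ m * (P*T - T - P + 1) / 2 := by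
      nlinarith
    nlinarith
  have hG : 0 ≤ rt0 * ((m - rt0) * ((T + 1) * rt0 - m)) := by
    apply mul_nonneg (le_of_lt hrt0)
    apply mul_nonneg <;> linarith
  have hid : N * (P - 1) * x2 * (m * (P * T - T - 1) - (P * T - T + P - 2) * rt0 + x3)
      - (N * T * (P - 1) - T * rt0 - x2) * (N * P * (P - 1) * rt0 - rt0 ^ 2 - m * x3)
      = m * T * (m - rt0) * (x3 - rt0)
        + (m * (m * (P*T - T - 1) - (P*T - T + P - 3) * rt0) + rt0 * (m * (P - 1) - rt0)) * (x2 - rt0)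
        + rt0 * ((m - rt0) * ((T + 1) * rt0 - m)) := by
    rw [hm]; ring
  linarith [mul_nonneg hγ h1, mul_nonneg hβ h2, hG, hid]
end

section
/- (Key monotonicity step in Lemma 5) Define H(ξ1, ξ2, ξ3) = t(t−1)²p/Δ̃₁ + tp/Δ̃₂. Suppose both triples (ξ1, ξ2, ξ3) and (ξ1′, ξ2′, ξ3′) satisfy the standing hypotheses (H) with the same n, p, t, r0, r̃0, that ξ1 ≤ ξ1′, ξ2 ≤ ξ2′, ξ3 ≤ ξ3′, and that Δ̃₂ evaluated at (ξ1′, ξ2′, ξ3′) is positive. Then H(ξ1, ξ2, ξ3) ≤ H(ξ1′, ξ2′, ξ3′). -/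
set_option maxHeartbeats 8000000


set_option linter.unusedVariables false


lemma corner1 (a c e s : ℝ) (ha : 0 ≤ a) (hc : 0 ≤ c) (he : 0 ≤ e) (hs : 0 ≤ s) :
    0 ≤ s^3 + 2*e*s^3 + e^2*s^3 + 2*c*s^3 + 2*c*e*s^3 + c^2*s^3 + 30*a*s^2 + 46*a*e*s^2 + 16*a*e^2*s^2 + 96*a*c*s^2 + 107*a*c*e*s^2 + 25*a*c*e^2*s^2 + 117*a*c^2*s^2 + 89*a*c^2*e*s^2 + 13*a*c^2*e^2*s^2 + 68*a*c^3*s^2 + 32*a*c^3*e*s^2 + 2*a*c^3*e^2*s^2 + 19*a*c^4*s^2 + 4*a*c^4*e*s^2 + 2*a*c^5*s^2 + 61*a^2*s + 80*a^2*e*s + 25*a^2*e^2*s + 192*a^2*c*s + 186*a^2*c*e*s + 40*a^2*c*e^2*s + 223*a^2*c^2*s + 151*a^2*c^2*e*s + 20*a^2*c^2*e^2*s + 121*a^2*c^3*s + 51*a^2*c^3*e*s + 3*a^2*c^3*e^2*s + 31*a^2*c^4*s + 6*a^2*c^4*e*s + 3*a^2*c^5*s + 28*a^3 + 34*a^3*e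 + 10*a^3*e^2 + 84*a^3*c + 75*a^3*c*e + 15*a^3*c*e^2 + 91*a^3*c^2 + 57*a^3*c^2*e + 7*a^3*c^2*e^2 + 46*a^3*c^3 + 18*a^3*c^3*e + a^3*c^3*e^2 + 11*a^3*c^4 + 2*a^3*c^4*e + a^3*c^5 := by positivity

lemma hD1s_pos (t p n s : ℝ) (ht : 2 ≤ t) (hp : 3 ≤ p) (hs : 0 < s)
    (hs2 : 2*s ≤ n*(p-1)) : 0 < n*(p-1)*(p*t-t-1) - (p*t-t+p-3)*s := by
  have h1 : 0 ≤ (n*(p-1) - 2*s) * (p*t - t - 1) :=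
    mul_nonneg (by linarith) (by nlinarith)
  nlinarith [mul_pos hs (show (0:ℝ) < (p-1)*(t-1) by nlinarith)]

lemma hD2s_pos (p n s : ℝ) (hp : 3 ≤ p) (hn : 1 ≤ n) (hs : 0 < s)
    (hs2 : 2*s ≤ n*(p-1)) : 0 < n*p*(p-1)*s - s^2 - n*(p-1)*s := by
  nlinarith [mul_pos hs hs, mul_pos hs (show (0:ℝ) < n*(p-1)*(p-1) - s by nlinarith)]

/-- The crucial corner inequality for K1:
`0 ≤ t*p*(m-2*s) - Ns^2/D1s + (t-1)*m*s^2/D2s`. -/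
lemma cornerK1 (t p n s : ℝ) (ht : 2 ≤ t) (hp : 3 ≤ p) (hpt : p ≤ t + 1) (hn : 1 ≤ n)
    (hs : 0 < s) (hs2 : 2*s ≤ n*(p-1)) :
    0 ≤ t*p*(n*(p-1)-2*s) - (n*t*(p-1) - t*s - s)^2/(n*(p-1)*(p*t-t-1) - (p*t-t+p-3)*s)
      + (t-1)*(n*(p-1)*s^2/(n*p*(p-1)*s - s^2 - n*(p-1)*s)) := by
  have hD1s := hD1s_pos t p n s ht hp hs hs2
  have hD2s := hD2s_pos p n s hp hn hs hs2
  have hM : 0 < n*(p-1)*(p-1) - s := by nlinarith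
  have hP : 0 ≤ t*p*(n*(p-1)-2*s)*(n*(p-1)*(p*t-t-1)-(p*t-t+p-3)*s)*(n*(p-1)*(p-1)-s)
      - (t*(n*(p-1))-(t+1)*s)^2*(n*(p-1)*(p-1)-s)
      + (t-1)*(n*(p-1))*s*(n*(p-1)*(p*t-t-1)-(p*t-t+p-3)*s) := by
    have h := corner1 (n*(p-1)-2*s) (p-3) (t+1-p) s (by linarith) (by linarith)
      (by linarith) hs.le
    linarith
  have hid : t*p*(n*(p-1)-2*s) - (n*t*(p-1) - t*s - s)^2/(n*(p-1)*(p*t-t-1) - (p*t-t+p-3)*s)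
      + (t-1)*(n*(p-1)*s^2/(n*p*(p-1)*s - s^2 - n*(p-1)*s))
      = (t*p*(n*(p-1)-2*s)*(n*(p-1)*(p*t-t-1)-(p*t-t+p-3)*s)*(n*(p-1)*(p-1)-s)
      - (t*(n*(p-1))-(t+1)*s)^2*(n*(p-1)*(p-1)-s)
      + (t-1)*(n*(p-1))*s*(n*(p-1)*(p*t-t-1)-(p*t-t+p-3)*s))
      / ((n*(p-1)*(p*t-t-1) - (p*t-t+p-3)*s) * (n*(p-1)*(p-1)-s)) := by
    rw [eq_div_iff (by positivity)]
    have e1 : (n*(p-1)*(p*t-t-1) - (p*t-t+p-3)*s) * (n*(p-1)*(p*t-t-1) - (p*t-t+p-3)*s)⁻¹ = 1 := mul_inv_cancel₀ hD1s.ne'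
    have e2 : (n*p*(p-1)*s - s^2 - n*(p-1)*s) * (n*p*(p-1)*s - s^2 - n*(p-1)*s)⁻¹ = 1 := mul_inv_cancel₀ hD2s.ne'
    linear_combination (-((n*t*(p-1) - t*s - s)^2*(n*(p-1)*(p-1)-s))) * e1 + ((t-1)*(n*(p-1))*s*(n*(p-1)*(p*t-t-1) - (p*t-t+p-3)*s)) * e2
  rw [hid]
  positivity

lemma lemK1 (t p n s r0 x1 x2 x3 : ℝ)
    (ht : 2 ≤ t) (hp : 3 ≤ p) (hpt : p ≤ t + 1) (hn : 1 ≤ n)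
    (hs : 0 < s) (hs2 : 2*s ≤ n*(p-1))
    (hr0 : r0 = p*s/(p-1)) (hx1 : r0 ≤ x1)
    (hx2l : s ≤ x2) (hx2u : x2 ≤ n*t*(p-1) - t*s) (hx3 : s ≤ x3)
    (hden1 : 0 < n*(p-1)*(p*t-t-1) - (p*t-t+p-2)*s + x3)
    (hden2 : 0 < n*p*(p-1)*s - s^2 - n*(p-1)*x3) :
    (t-1) * (p*(r0 - x1/p) - n*(p-1)*x2^2/(n*p*(p-1)*s - s^2 - n*(p-1)*x3))
      ≤ t*(p-1)*(n*p - r0) - p*(r0 - x1/p)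
        - (n*t*(p-1) - t*s - x2)^2/(n*(p-1)*(p*t-t-1) - (p*t-t+p-2)*s + x3) := by
  have hp1 : (0:ℝ) < p - 1 := by linarith
  have hp0 : (0:ℝ) < p := by linarith
  have hD1s := hD1s_pos t p n s ht hp hs hs2
  have hD2s := hD2s_pos p n s hp hn hs hs2
  -- rewrite the division by p
  have hr : p*(r0 - x1/p) = p*r0 - x1 := by field_simp
  rw [hr]
  -- relation (p-1)*r0 = p*s
  have hr0ps : (p-1)*r0 = p*s := by rw [hr0]; field_simp
  -- fraction 1 monotonicity
  have hN0 : 0 ≤ n*t*(p-1) - t*s - x2 := by linarith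
  have hfrac1 : (n*t*(p-1) - t*s - x2)^2/(n*(p-1)*(p*t-t-1) - (p*t-t+p-2)*s + x3)
      ≤ (n*t*(p-1) - t*s - s)^2/(n*(p-1)*(p*t-t-1) - (p*t-t+p-3)*s) := by
    apply div_le_div₀ (by positivity) _ hD1s (by linarith)
    have : n*t*(p-1) - t*s - x2 ≤ n*t*(p-1) - t*s - s := by linarith
    nlinarith
  -- fraction 2 monotonicity
  have hfrac2 : n*(p-1)*s^2/(n*p*(p-1)*s - s^2 - n*(p-1)*s)
      ≤ n*(p-1)*x2^2/(n*p*(p-1)*s - s^2 - n*(p-1)*x3) := by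
    apply div_le_div₀ (by positivity) _ hden2 _
    · nlinarith [mul_nonneg (mul_nonneg (by linarith : (0:ℝ) ≤ n) hp1.le)
        (by nlinarith : 0 ≤ x2^2 - s^2)]
    · nlinarith [mul_nonneg (mul_nonneg (by linarith : (0:ℝ) ≤ n) hp1.le)
        (by linarith : 0 ≤ x3 - s)]
  have hcorner := cornerK1 t p n s ht hp hpt hn hs hs2
  have e1 : t*(p-1)*(n*p - r0) = t*p*(n*(p-1) - s) := by linear_combination (-t) * hr0ps
  have e2 : t*p*r0 - t*r0 = t*p*s := by linear_combination t*hr0ps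
  have e3 : t*r0 ≤ t*x1 := mul_le_mul_of_nonneg_left hx1 (by linarith)
  have e4 := mul_le_mul_of_nonneg_left hfrac2 (by linarith : (0:ℝ) ≤ t-1)
  have main : ∀ F1 G1 F2 G2 : ℝ, F1 ≤ G1 → (t-1)*G2 ≤ (t-1)*F2 →
      0 ≤ t*p*(n*(p-1)-2*s) - G1 + (t-1)*G2 →
      (t-1)*(p*r0 - x1 - F2) ≤ t*(p-1)*(n*p-r0) - (p*r0 - x1) - F1 := by
    intro F1 G1 F2 G2 h1 h2 h3
    linarith [e1, e2, e3]
  exact main _ _ _ _ hfrac1 e4 (by linarith [hcorner])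

lemma corner3 (a c e s : ℝ) (ha : 0 ≤ a) (hc : 0 ≤ c) (he : 0 ≤ e) (hs : 0 ≤ s) :
    0 ≤ 3*s^3 + 6*e*s^3 + 3*e^2*s^3 + 7*c*s^3 + 8*c*e*s^3 + c*e^2*s^3 + 5*c^2*s^3 + 2*c^2*e*s^3 + c^3*s^3 + 20*a*s^2 + 33*a*e*s^2 + 13*a*e^2*s^2 + 53*a*c*s^2 + 57*a*c*e*s^2 + 11*a*c*e^2*s^2 + 48*a*c^2*s^2 + 28*a*c^2*e*s^2 + 2*a*c^2*e^2*s^2 + 17*a*c^3*s^2 + 4*a*c^3*e*s^2 + 2*a*c^4*s^2 + 35*a^2*s + 46*a^2*e*s + 15*a^2*e^2*s + 91*a^2*c*s + 82*a^2*c*e*s + 15*a^2*c*e^2*s + 77*a^2*c^2*s + 41*a^2*c^2*e*s + 3*a^2*c^2*e^2*s + 26*a^2*c^3*s + 6*a^2*c^3*e*s + 3*a^2*c^4*s + 14*a^3 + 17*a^3*e + 5*a^3*e^2 + 35*a^3*c + 29*a^3*c*e + 5*a^3*c*e^2 + 28*a^3*c^2 + 14*a^3*c^2*e + a^3*c^2*e^2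 + 9*a^3*c^3 + 2*a^3*c^3*e + a^3*c^4 := by positivity

lemma lemK3 (t p n s r0 x1 x2 x3 : ℝ)
    (ht : 2 ≤ t) (hp : 3 ≤ p) (hpt : p ≤ t + 1) (hn : 1 ≤ n)
    (hs : 0 < s) (hs2 : 2*s ≤ n*(p-1))
    (hr0 : r0 = p*s/(p-1)) (hx1 : r0 ≤ x1)
    (hx2l : s ≤ x2) (hx2u : x2 ≤ n*t*(p-1) - t*s) (hx3 : s ≤ x3)
    (hden1 : 0 < n*(p-1)*(p*t-t-1) - (p*t-t+p-2)*s + x3)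
    (hden2 : 0 < n*p*(p-1)*s - s^2 - n*(p-1)*x3)
    (hb : 0 < p*(r0 - x1/p) - n*(p-1)*x2^2/(n*p*(p-1)*s - s^2 - n*(p-1)*x3)) :
    (t-1) * ((n*t*(p-1) - t*s - x2)/(n*(p-1)*(p*t-t-1) - (p*t-t+p-2)*s + x3))
        * (p*(r0 - x1/p) - n*(p-1)*x2^2/(n*p*(p-1)*s - s^2 - n*(p-1)*x3))
      ≤ (n*(p-1)*x2/(n*p*(p-1)*s - s^2 - n*(p-1)*x3))
        * (t*(p-1)*(n*p - r0) - p*(r0 - x1/p)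
          - (n*t*(p-1) - t*s - x2)^2/(n*(p-1)*(p*t-t-1) - (p*t-t+p-2)*s + x3)) := by
  have hp1 : (0:ℝ) < p - 1 := by linarith
  have hp0 : (0:ℝ) < p := by linarith
  have hD1s := hD1s_pos t p n s ht hp hs hs2
  have hD2s := hD2s_pos p n s hp hn hs hs2
  have hr : p*(r0 - x1/p) = p*r0 - x1 := by field_simp
  rw [hr] at hb ⊢
  have hr0ps : (p-1)*r0 = p*s := by rw [hr0]; field_simp
  have hN0 : 0 ≤ n*t*(p-1) - t*s - x2 := by linarith
  have hNs0 : 0 ≤ n*t*(p-1) - t*s - s := by linarith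
  have hD2mono : n*p*(p-1)*s - s^2 - n*(p-1)*x3 ≤ n*p*(p-1)*s - s^2 - n*(p-1)*s := by
    nlinarith [mul_nonneg (mul_nonneg (by linarith : (0:ℝ) ≤ n) hp1.le)
      (by linarith : 0 ≤ x3 - s)]
  have hT1 : (n*t*(p-1) - t*s - x2)/(n*(p-1)*(p*t-t-1) - (p*t-t+p-2)*s + x3)
      ≤ (n*t*(p-1) - t*s - s)/(n*(p-1)*(p*t-t-1) - (p*t-t+p-3)*s) :=
    div_le_div₀ hNs0 (by linarith) hD1s (by linarith)
  have hnum2 : n*(p-1)*s ≤ n*(p-1)*x2 := by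
    nlinarith [mul_nonneg (mul_nonneg (by linarith : (0:ℝ) ≤ n) hp1.le) (by linarith : 0 ≤ x2 - s)]
  have hT2 : n*(p-1)*s/(n*p*(p-1)*s - s^2 - n*(p-1)*s)
      ≤ n*(p-1)*x2/(n*p*(p-1)*s - s^2 - n*(p-1)*x3) :=
    div_le_div₀ (mul_nonneg (mul_nonneg (by linarith) hp1.le) (by linarith)) hnum2 hden2 hD2mono
  have hfrac1 : (n*t*(p-1) - t*s - x2)^2/(n*(p-1)*(p*t-t-1) - (p*t-t+p-2)*s + x3)
      ≤ (n*t*(p-1) - t*s - s)^2/(n*(p-1)*(p*t-t-1) - (p*t-t+p-3)*s) := by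
    apply div_le_div₀ (by positivity) _ hD1s (by linarith)
    nlinarith
  have hfrac2 : n*(p-1)*s^2/(n*p*(p-1)*s - s^2 - n*(p-1)*s)
      ≤ n*(p-1)*x2^2/(n*p*(p-1)*s - s^2 - n*(p-1)*x3) := by
    apply div_le_div₀ (by positivity) _ hden2 hD2mono
    nlinarith [mul_nonneg (mul_nonneg (by linarith : (0:ℝ) ≤ n) hp1.le)
      (by nlinarith : 0 ≤ x2^2 - s^2)]
  have e1 : t*(p-1)*(n*p - r0) = t*p*(n*(p-1) - s) := by linear_combination (-t) * hr0ps
  -- lower bound for Delta1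
  have hA : t*p*(n*(p-1)-s) - p*s
        - (n*t*(p-1) - t*s - s)^2/(n*(p-1)*(p*t-t-1) - (p*t-t+p-3)*s)
      ≤ t*(p-1)*(n*p - r0) - (p*r0 - x1)
        - (n*t*(p-1) - t*s - x2)^2/(n*(p-1)*(p*t-t-1) - (p*t-t+p-2)*s + x3) := by
    linarith [hfrac1, e1, hr0ps, hx1]
  -- upper bound for Delta2
  have hB : p*r0 - x1 - n*(p-1)*x2^2/(n*p*(p-1)*s - s^2 - n*(p-1)*x3)
      ≤ p*s - n*(p-1)*s^2/(n*p*(p-1)*s - s^2 - n*(p-1)*s) := by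
    linarith [hfrac2, hr0ps, hx1]
  have hBpos : 0 < p*s - n*(p-1)*s^2/(n*p*(p-1)*s - s^2 - n*(p-1)*s) := lt_of_lt_of_le hb hB
  have hcorner := cornerK1 t p n s ht hp hpt hn hs hs2
  have hA0 : (t-1)*(p*s - n*(p-1)*s^2/(n*p*(p-1)*s - s^2 - n*(p-1)*s))
      ≤ t*p*(n*(p-1)-s) - p*s
        - (n*t*(p-1) - t*s - s)^2/(n*(p-1)*(p*t-t-1) - (p*t-t+p-3)*s) := by
    linarith [hcorner]
  have hApos : 0 < t*p*(n*(p-1)-s) - p*s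
      - (n*t*(p-1) - t*s - s)^2/(n*(p-1)*(p*t-t-1) - (p*t-t+p-3)*s) := by
    nlinarith [hA0, hBpos]
  have hT1n : 0 ≤ (n*t*(p-1) - t*s - x2)/(n*(p-1)*(p*t-t-1) - (p*t-t+p-2)*s + x3) :=
    div_nonneg hN0 hden1.le
  have hT2n : 0 ≤ n*(p-1)*x2/(n*p*(p-1)*s - s^2 - n*(p-1)*x3) :=
    div_nonneg (mul_nonneg (mul_nonneg (by linarith) hp1.le) (by linarith)) hden2.le
  have hTsn : 0 ≤ (n*t*(p-1) - t*s - s)/(n*(p-1)*(p*t-t-1) - (p*t-t+p-3)*s) :=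
    div_nonneg hNs0 hD1s.le
  have m1 : (n*(p-1)*s/(n*p*(p-1)*s - s^2 - n*(p-1)*s))
        * (t*p*(n*(p-1)-s) - p*s
          - (n*t*(p-1) - t*s - s)^2/(n*(p-1)*(p*t-t-1) - (p*t-t+p-3)*s))
      ≤ (n*(p-1)*x2/(n*p*(p-1)*s - s^2 - n*(p-1)*x3))
        * (t*(p-1)*(n*p - r0) - (p*r0 - x1)
          - (n*t*(p-1) - t*s - x2)^2/(n*(p-1)*(p*t-t-1) - (p*t-t+p-2)*s + x3)) :=
    mul_le_mul hT2 hA hApos.le hT2n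
  have m2 : (t-1)*(((n*t*(p-1) - t*s - x2)/(n*(p-1)*(p*t-t-1) - (p*t-t+p-2)*s + x3))
        * (p*r0 - x1 - n*(p-1)*x2^2/(n*p*(p-1)*s - s^2 - n*(p-1)*x3)))
      ≤ (t-1)*(((n*t*(p-1) - t*s - s)/(n*(p-1)*(p*t-t-1) - (p*t-t+p-3)*s))
        * (p*s - n*(p-1)*s^2/(n*p*(p-1)*s - s^2 - n*(p-1)*s))) :=
    mul_le_mul_of_nonneg_left (mul_le_mul hT1 hB hb.le hTsn) (by linarith)
  have hP3 : 0 ≤ n*(p-1)*((t*p*(n*(p-1)-s) - p*s)*(n*(p-1)*(p*t-t-1)-(p*t-t+p-3)*s)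
        - (n*t*(p-1) - t*s - s)^2)
      - (t-1)*(n*t*(p-1) - t*s - s)*s*(p*(n*(p-1))*(p-1) - p*s - n*(p-1)) := by
    have h := corner3 (n*(p-1)-2*s) (p-3) (t+1-p) s (by linarith) (by linarith)
      (by linarith) hs.le
    linarith
  have hMs : 0 < n*(p-1)*(p-1) - s := by nlinarith
  have hid : (n*(p-1)*s/(n*p*(p-1)*s - s^2 - n*(p-1)*s))
        * (t*p*(n*(p-1)-s) - p*s
          - (n*t*(p-1) - t*s - s)^2/(n*(p-1)*(p*t-t-1) - (p*t-t+p-3)*s))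
      - (t-1)*(((n*t*(p-1) - t*s - s)/(n*(p-1)*(p*t-t-1) - (p*t-t+p-3)*s))
        * (p*s - n*(p-1)*s^2/(n*p*(p-1)*s - s^2 - n*(p-1)*s)))
      = s*(n*(p-1)*((t*p*(n*(p-1)-s) - p*s)*(n*(p-1)*(p*t-t-1)-(p*t-t+p-3)*s)
        - (n*t*(p-1) - t*s - s)^2)
      - (t-1)*(n*t*(p-1) - t*s - s)*s*(p*(n*(p-1))*(p-1) - p*s - n*(p-1)))
      / ((n*(p-1)*(p*t-t-1)-(p*t-t+p-3)*s) * (n*p*(p-1)*s - s^2 - n*(p-1)*s)) := by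
    rw [eq_div_iff (by positivity)]
    have e1 : (n*(p-1)*(p*t-t-1) - (p*t-t+p-3)*s) * (n*(p-1)*(p*t-t-1) - (p*t-t+p-3)*s)⁻¹ = 1 := mul_inv_cancel₀ hD1s.ne'
    have e2 : (n*p*(p-1)*s - s^2 - n*(p-1)*s) * (n*p*(p-1)*s - s^2 - n*(p-1)*s)⁻¹ = 1 := mul_inv_cancel₀ hD2s.ne'
    linear_combination (-(n*(p-1))*s*(n*t*(p-1) - t*s - s)^2*(n*p*(p-1)*s - s^2 - n*(p-1)*s)*(n*p*(p-1)*s - s^2 - n*(p-1)*s)⁻¹ - (t-1)*(n*t*(p-1) - t*s - s)*p*s*(n*p*(p-1)*s - s^2 - n*(p-1)*s) + (t-1)*(n*t*(p-1) - t*s - s)*(n*(p-1))*s^2*(n*p*(p-1)*s - s^2 - n*(p-1)*s)*(n*p*(p-1)*s - s^2 - n*(p-1)*s)⁻¹) * e1 + ((n*(p-1))*s*(t*p*(n*(p-1)-s) - p*s)*(n*(p-1)*(p*t-t-1) - (p*t-t+p-3)*s) - (n*(p-1))*s*(n*t*(p-1) - t*s - s)^2 + (t-1)*(n*t*(p-1)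 - t*s - s)*(n*(p-1))*s^2) * e2
  have mc : (t-1)*(((n*t*(p-1) - t*s - s)/(n*(p-1)*(p*t-t-1) - (p*t-t+p-3)*s))
        * (p*s - n*(p-1)*s^2/(n*p*(p-1)*s - s^2 - n*(p-1)*s)))
      ≤ (n*(p-1)*s/(n*p*(p-1)*s - s^2 - n*(p-1)*s))
        * (t*p*(n*(p-1)-s) - p*s
          - (n*t*(p-1) - t*s - s)^2/(n*(p-1)*(p*t-t-1) - (p*t-t+p-3)*s)) := by
    have hd : 0 ≤ s*(n*(p-1)*((t*p*(n*(p-1)-s) - p*s)*(n*(p-1)*(p*t-t-1)-(p*t-t+p-3)*s)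
        - (n*t*(p-1) - t*s - s)^2)
      - (t-1)*(n*t*(p-1) - t*s - s)*s*(p*(n*(p-1))*(p-1) - p*s - n*(p-1)))
      / ((n*(p-1)*(p*t-t-1)-(p*t-t+p-3)*s) * (n*p*(p-1)*s - s^2 - n*(p-1)*s)) :=
      div_nonneg (mul_nonneg hs.le hP3) (mul_pos hD1s hD2s).le
    linarith [hid, hd]
  linarith [m1, m2, mc]

lemma stepH (t p a a' b b' : ℝ) (ht : 2 ≤ t) (hp : 0 < p) (ha : 0 < a) (ha' : 0 < a')
    (hb : 0 < b) (hb' : 0 < b')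
    (key : (t-1)^2*(a'-a)*(b*b') ≤ (b-b')*(a*a')) :
    t*(t-1)^2*p/a + t*p/b ≤ t*(t-1)^2*p/a' + t*p/b' := by
  have hd : t*(t-1)^2*p/a' + t*p/b' - (t*(t-1)^2*p/a + t*p/b)
      = t*p*((b-b')*(a*a') - (t-1)^2*(a'-a)*(b*b')) / (a*a'*(b*b')) := by
    field_simp
    ring
  have h2 : 0 ≤ t*p*((b-b')*(a*a') - (t-1)^2*(a'-a)*(b*b')) / (a*a'*(b*b')) := by
    apply div_nonneg _ (by positivity)
    exact mul_nonneg (mul_nonneg (by linarith) hp.le) (by linarith)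
  linarith

lemma key1_gen (T d a a' b b' : ℝ) (hd : 0 ≤ d)
    (q : (T*b)*(T*b') ≤ a*a') : T^2*d*(b*b') ≤ d*(a*a') := by
  nlinarith [mul_le_mul_of_nonneg_left q hd]

lemma key2_gen (T d u1 u2 v1 v2 a a' b b' : ℝ) (hd : 0 ≤ d)
    (q1 : T*u1*b*(T*b') ≤ v1*a*a') (q2 : T*u2*b'*(T*b) ≤ v2*a'*a) :
    T^2*(d*(u1+u2))*(b*b') ≤ d*(v1+v2)*(a*a') := by
  nlinarith [mul_le_mul_of_nonneg_left (add_le_add q1 q2) hd]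

lemma key3_gen (T d u1 u2 v1 v2 a a' b b' : ℝ) (hd : 0 ≤ d)
    (q : T*u1*b*(T*u2*b') ≤ v1*a*(v2*a')) :
    T^2*(d*(u1*u2))*(b*b') ≤ d*(v1*v2)*(a*a') := by
  nlinarith [mul_le_mul_of_nonneg_left q hd]



/-- The quantity `H` from the proof of Lemma 5. -/
noncomputable def Hfun (n p t r0 rt0 x1 x2 x3 : ℝ) : ℝ :=
  t * (t - 1) ^ 2 * p / Delta1 n p t r0 rt0 x1 x2 x3 +
    t * p / Delta2 n p t r0 rt0 x1 x2 x3

/-- Key monotonicity step in Lemma 5: if two triples `(ξ₁, ξ₂, ξ₃) ≤ (ξ₁', ξ₂', ξ₃')`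
(componentwise) both satisfy the standing hypotheses (H) with the same `n, p, t, r₀, r̃₀`,
and `Δ̃₂` at the larger triple is positive, then `H(ξ₁, ξ₂, ξ₃) ≤ H(ξ₁', ξ₂', ξ₃')`. -/
theorem stmt13 (t p n : ℤ) (r0 rt0 x1 x2 x3 x1' x2' x3' : ℝ)
    (ht : 2 ≤ t) (hp : 3 ≤ p) (hpt : p ≤ t + 1) (hn : 1 ≤ n)
    (hrt0 : 0 < rt0) (hrt0' : rt0 ≤ (n : ℝ) * ((p : ℝ) - 1) / 2)
    (hr0 : r0 = (p : ℝ) * rt0 / ((p : ℝ) - 1))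
    (hx1 : r0 ≤ x1)
    (hx2l : rt0 ≤ x2) (hx2u : x2 ≤ (n : ℝ) * (t : ℝ) * ((p : ℝ) - 1) - (t : ℝ) * rt0)
    (hx3 : rt0 ≤ x3)
    (hden1 : 0 < (n : ℝ) * ((p : ℝ) - 1) * ((p : ℝ) * t - t - 1) -
      ((p : ℝ) * t - t + p - 2) * rt0 + x3)
    (hden2 : 0 < (n : ℝ) * p * ((p : ℝ) - 1) * rt0 - rt0 ^ 2 - (n : ℝ) * ((p : ℝ) - 1) * x3)
    (hx1' : r0 ≤ x1')
    (hx2l' : rt0 ≤ x2') (hx2u' : x2' ≤ (n : ℝ) * (t : ℝ) * ((p : ℝ) - 1) - (t : ℝ) * rt0)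
    (hx3' : rt0 ≤ x3')
    (hden1' : 0 < (n : ℝ) * ((p : ℝ) - 1) * ((p : ℝ) * t - t - 1) -
      ((p : ℝ) * t - t + p - 2) * rt0 + x3')
    (hden2' : 0 < (n : ℝ) * p * ((p : ℝ) - 1) * rt0 - rt0 ^ 2 - (n : ℝ) * ((p : ℝ) - 1) * x3')
    (hle1 : x1 ≤ x1') (hle2 : x2 ≤ x2') (hle3 : x3 ≤ x3')
    (hpos : 0 < Delta2 n p t r0 rt0 x1' x2' x3') :
    Hfun n p t r0 rt0 x1 x2 x3 ≤ Hfun n p t r0 rt0 x1' x2' x3' := by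
  have ht' : (2:ℝ) ≤ (t:ℝ) := by exact_mod_cast ht
  have hp' : (3:ℝ) ≤ (p:ℝ) := by exact_mod_cast hp
  have hpt' : (p:ℝ) ≤ (t:ℝ) + 1 := by exact_mod_cast hpt
  have hn' : (1:ℝ) ≤ (n:ℝ) := by exact_mod_cast hn
  have hs2 : 2*rt0 ≤ (n:ℝ)*((p:ℝ)-1) := by linarith
  have hp1 : (0:ℝ) < (p:ℝ) - 1 := by linarith
  have hp0 : (0:ℝ) < (p:ℝ) := by linarith
  have hpne : (p:ℝ) ≠ 0 := ne_of_gt hp0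
  have hD1ne : ((n:ℝ) * ((p:ℝ) - 1) * ((p:ℝ) * (t:ℝ) - (t:ℝ) - 1) - ((p:ℝ) * (t:ℝ) - (t:ℝ) + (p:ℝ) - 2) * rt0 + x3) ≠ 0 := ne_of_gt hden1
  have hD1ne' : ((n:ℝ) * ((p:ℝ) - 1) * ((p:ℝ) * (t:ℝ) - (t:ℝ) - 1) - ((p:ℝ) * (t:ℝ) - (t:ℝ) + (p:ℝ) - 2) * rt0 + x3') ≠ 0 := ne_of_gt hden1'
  have hD2ne : ((n:ℝ) * (p:ℝ) * ((p:ℝ) - 1) * rt0 - rt0 ^ 2 - (n:ℝ) * ((p:ℝ) - 1) * x3) ≠ 0 := ne_of_gt hden2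
  have hD2ne' : ((n:ℝ) * (p:ℝ) * ((p:ℝ) - 1) * rt0 - rt0 ^ 2 - (n:ℝ) * ((p:ℝ) - 1) * x3') ≠ 0 := ne_of_gt hden2'
  have hrx1 : (p:ℝ) * (r0 - x1 / (p:ℝ)) = (p:ℝ)*r0 - x1 := by field_simp
  have hrx1' : (p:ℝ) * (r0 - x1' / (p:ℝ)) = (p:ℝ)*r0 - x1' := by field_simp
  unfold Delta2 at hpos
  unfold Hfun Delta1 Delta2
  -- Delta2 chain
  have hb3 : 0 < (p:ℝ) * (r0 - x1' / (p:ℝ)) - (n:ℝ) * ((p:ℝ) - 1) * x2' ^ 2 / ((n:ℝ) * (p:ℝ) * ((p:ℝ) - 1) * rt0 - rt0 ^ 2 - (n:ℝ) * ((p:ℝ) - 1) * x3') := hpos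
  have hfb23 : (n:ℝ) * ((p:ℝ) - 1) * x2' ^ 2 / ((n:ℝ) * (p:ℝ) * ((p:ℝ) - 1) * rt0 - rt0 ^ 2 - (n:ℝ) * ((p:ℝ) - 1) * x3)
      ≤ (n:ℝ) * ((p:ℝ) - 1) * x2' ^ 2 / ((n:ℝ) * (p:ℝ) * ((p:ℝ) - 1) * rt0 - rt0 ^ 2 - (n:ℝ) * ((p:ℝ) - 1) * x3') := by
    apply div_le_div₀ (by positivity) le_rfl hden2'
    nlinarith [mul_nonneg (mul_nonneg (by linarith : (0:ℝ) ≤ (n:ℝ)) hp1.le) (by linarith : 0 ≤ x3' - x3)]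
  have hb23 : (p:ℝ) * (r0 - x1' / (p:ℝ)) - (n:ℝ) * ((p:ℝ) - 1) * x2' ^ 2 / ((n:ℝ) * (p:ℝ) * ((p:ℝ) - 1) * rt0 - rt0 ^ 2 - (n:ℝ) * ((p:ℝ) - 1) * x3') ≤ (p:ℝ) * (r0 - x1' / (p:ℝ)) - (n:ℝ) * ((p:ℝ) - 1) * x2' ^ 2 / ((n:ℝ) * (p:ℝ) * ((p:ℝ) - 1) * rt0 - rt0 ^ 2 - (n:ℝ) * ((p:ℝ) - 1) * x3) := by linarith [hfb23]
  have hfb12 : (n:ℝ) * ((p:ℝ) - 1) * x2 ^ 2 / ((n:ℝ) * (p:ℝ) * ((p:ℝ) - 1) * rt0 - rt0 ^ 2 - (n:ℝ) * ((p:ℝ) - 1) * x3)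
      ≤ (n:ℝ) * ((p:ℝ) - 1) * x2' ^ 2 / ((n:ℝ) * (p:ℝ) * ((p:ℝ) - 1) * rt0 - rt0 ^ 2 - (n:ℝ) * ((p:ℝ) - 1) * x3) := by
    apply div_le_div₀ (by positivity) _ hden2 le_rfl
    nlinarith [mul_nonneg (mul_nonneg (by linarith : (0:ℝ) ≤ (n:ℝ)) hp1.le) (by nlinarith : 0 ≤ x2'^2 - x2^2)]
  have hb12 : (p:ℝ) * (r0 - x1' / (p:ℝ)) - (n:ℝ) * ((p:ℝ) - 1) * x2' ^ 2 / ((n:ℝ) * (p:ℝ) * ((p:ℝ) - 1) * rt0 - rt0 ^ 2 - (n:ℝ) * ((p:ℝ) - 1) * x3) ≤ (p:ℝ) * (r0 - x1' / (p:ℝ)) - (n:ℝ) * ((p:ℝ) - 1) * x2 ^ 2 / ((n:ℝ) * (p:ℝ) * ((p:ℝ) - 1) * rt0 - rt0 ^ 2 - (n:ℝ) * ((p:ℝ) - 1) * x3) := by linarith [hfb12]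
  have hb01 : (p:ℝ) * (r0 - x1' / (p:ℝ)) - (n:ℝ) * ((p:ℝ) - 1) * x2 ^ 2 / ((n:ℝ) * (p:ℝ) * ((p:ℝ) - 1) * rt0 - rt0 ^ 2 - (n:ℝ) * ((p:ℝ) - 1) * x3) ≤ (p:ℝ) * (r0 - x1 / (p:ℝ)) - (n:ℝ) * ((p:ℝ) - 1) * x2 ^ 2 / ((n:ℝ) * (p:ℝ) * ((p:ℝ) - 1) * rt0 - rt0 ^ 2 - (n:ℝ) * ((p:ℝ) - 1) * x3) := by linarith [hrx1, hrx1']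
  have hb2 : 0 < (p:ℝ) * (r0 - x1' / (p:ℝ)) - (n:ℝ) * ((p:ℝ) - 1) * x2' ^ 2 / ((n:ℝ) * (p:ℝ) * ((p:ℝ) - 1) * rt0 - rt0 ^ 2 - (n:ℝ) * ((p:ℝ) - 1) * x3) := lt_of_lt_of_le hb3 hb23
  have hb1 : 0 < (p:ℝ) * (r0 - x1' / (p:ℝ)) - (n:ℝ) * ((p:ℝ) - 1) * x2 ^ 2 / ((n:ℝ) * (p:ℝ) * ((p:ℝ) - 1) * rt0 - rt0 ^ 2 - (n:ℝ) * ((p:ℝ) - 1) * x3) := lt_of_lt_of_le hb2 hb12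
  have hb0 : 0 < (p:ℝ) * (r0 - x1 / (p:ℝ)) - (n:ℝ) * ((p:ℝ) - 1) * x2 ^ 2 / ((n:ℝ) * (p:ℝ) * ((p:ℝ) - 1) * rt0 - rt0 ^ 2 - (n:ℝ) * ((p:ℝ) - 1) * x3) := lt_of_lt_of_le hb1 hb01
  -- K1 at the four points
  have hk1_0 := lemK1 (t:ℝ) (p:ℝ) (n:ℝ) rt0 r0 x1 x2 x3 ht' hp' hpt' hn' hrt0 hs2 hr0 hx1 hx2l hx2u hx3 hden1 hden2
  have hk1_1 := lemK1 (t:ℝ) (p:ℝ) (n:ℝ) rt0 r0 x1' x2 x3 ht' hp' hpt' hn' hrt0 hs2 hr0 hx1' hx2l hx2u hx3 hden1 hden2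
  have hk1_2 := lemK1 (t:ℝ) (p:ℝ) (n:ℝ) rt0 r0 x1' x2' x3 ht' hp' hpt' hn' hrt0 hs2 hr0 hx1' hx2l' hx2u' hx3 hden1 hden2
  have hk1_3 := lemK1 (t:ℝ) (p:ℝ) (n:ℝ) rt0 r0 x1' x2' x3' ht' hp' hpt' hn' hrt0 hs2 hr0 hx1' hx2l' hx2u' hx3' hden1' hden2'
  have ha0 : 0 < (t:ℝ) * ((p:ℝ) - 1) * ((n:ℝ) * (p:ℝ) - r0) - (p:ℝ) * (r0 - x1 / (p:ℝ)) - ((n:ℝ) * (t:ℝ) * ((p:ℝ) - 1) - (t:ℝ) * rt0 - x2) ^ 2 / ((n:ℝ) * ((p:ℝ) - 1) * ((p:ℝ) * (t:ℝ) - (t:ℝ) - 1) - ((p:ℝ) * (t:ℝ) - (t:ℝ) + (p:ℝ) - 2) * rt0 + x3) := by linarith [hk1_0, hb0, mul_nonneg (by linarith : (0:ℝ) ≤ (t:ℝ)-2) hb0.le]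
  have ha1 : 0 < (t:ℝ) * ((p:ℝ) - 1) * ((n:ℝ) * (p:ℝ) - r0) - (p:ℝ) * (r0 - x1' / (p:ℝ)) - ((n:ℝ) * (t:ℝ) * ((p:ℝ) - 1) - (t:ℝ) * rt0 - x2) ^ 2 / ((n:ℝ) * ((p:ℝ) - 1) * ((p:ℝ) * (t:ℝ) - (t:ℝ) - 1) - ((p:ℝ) * (t:ℝ) - (t:ℝ) + (p:ℝ) - 2) * rt0 + x3) := by linarith [hk1_1, hb1, mul_nonneg (by linarith : (0:ℝ) ≤ (t:ℝ)-2) hb1.le]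
  have ha2 : 0 < (t:ℝ) * ((p:ℝ) - 1) * ((n:ℝ) * (p:ℝ) - r0) - (p:ℝ) * (r0 - x1' / (p:ℝ)) - ((n:ℝ) * (t:ℝ) * ((p:ℝ) - 1) - (t:ℝ) * rt0 - x2') ^ 2 / ((n:ℝ) * ((p:ℝ) - 1) * ((p:ℝ) * (t:ℝ) - (t:ℝ) - 1) - ((p:ℝ) * (t:ℝ) - (t:ℝ) + (p:ℝ) - 2) * rt0 + x3) := by linarith [hk1_2, hb2, mul_nonneg (by linarith : (0:ℝ) ≤ (t:ℝ)-2) hb2.le]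
  have ha3 : 0 < (t:ℝ) * ((p:ℝ) - 1) * ((n:ℝ) * (p:ℝ) - r0) - (p:ℝ) * (r0 - x1' / (p:ℝ)) - ((n:ℝ) * (t:ℝ) * ((p:ℝ) - 1) - (t:ℝ) * rt0 - x2') ^ 2 / ((n:ℝ) * ((p:ℝ) - 1) * ((p:ℝ) * (t:ℝ) - (t:ℝ) - 1) - ((p:ℝ) * (t:ℝ) - (t:ℝ) + (p:ℝ) - 2) * rt0 + x3') := by linarith [hk1_3, hb3, mul_nonneg (by linarith : (0:ℝ) ≤ (t:ℝ)-2) hb3.le]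
  -- K3 at the three later points
  have hk3_1 := lemK3 (t:ℝ) (p:ℝ) (n:ℝ) rt0 r0 x1' x2 x3 ht' hp' hpt' hn' hrt0 hs2 hr0 hx1' hx2l hx2u hx3 hden1 hden2 hb1
  have hk3_2 := lemK3 (t:ℝ) (p:ℝ) (n:ℝ) rt0 r0 x1' x2' x3 ht' hp' hpt' hn' hrt0 hs2 hr0 hx1' hx2l' hx2u' hx3 hden1 hden2 hb2
  have hk3_3 := lemK3 (t:ℝ) (p:ℝ) (n:ℝ) rt0 r0 x1' x2' x3' ht' hp' hpt' hn' hrt0 hs2 hr0 hx1' hx2l' hx2u' hx3' hden1' hden2' hb3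
  -- step 1 key
  have d1 : ((t:ℝ) * ((p:ℝ) - 1) * ((n:ℝ) * (p:ℝ) - r0) - (p:ℝ) * (r0 - x1' / (p:ℝ)) - ((n:ℝ) * (t:ℝ) * ((p:ℝ) - 1) - (t:ℝ) * rt0 - x2) ^ 2 / ((n:ℝ) * ((p:ℝ) - 1) * ((p:ℝ) * (t:ℝ) - (t:ℝ) - 1) - ((p:ℝ) * (t:ℝ) - (t:ℝ) + (p:ℝ) - 2) * rt0 + x3)) - ((t:ℝ) * ((p:ℝ) - 1) * ((n:ℝ) * (p:ℝ) - r0) - (p:ℝ) * (r0 - x1 / (p:ℝ)) - ((n:ℝ) * (t:ℝ) * ((p:ℝ) - 1) - (t:ℝ) * rt0 - x2) ^ 2 / ((n:ℝ) * ((p:ℝ) - 1) * ((p:ℝ) * (t:ℝ) - (t:ℝ) - 1) - ((p:ℝ) * (t:ℝ) - (t:ℝ) + (p:ℝ) - 2) * rt0 + x3)) = x1' - x1 := by linarith [hrx1, hrx1']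
  have d2 : ((p:ℝ) * (r0 - x1 / (p:ℝ)) - (n:ℝ) * ((p:ℝ) - 1) * x2 ^ 2 / ((n:ℝ) * (p:ℝ) * ((p:ℝ) - 1) * rt0 - rt0 ^ 2 - (n:ℝ) * ((p:ℝ) - 1) * x3)) - ((p:ℝ) * (r0 - x1' / (p:ℝ)) - (n:ℝ) * ((p:ℝ) - 1) * x2 ^ 2 / ((n:ℝ) * (p:ℝ) * ((p:ℝ) - 1) * rt0 - rt0 ^ 2 - (n:ℝ) * ((p:ℝ) - 1) * x3)) = x1' - x1 := by linarith [hrx1, hrx1']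
  have key1 : ((t:ℝ)-1)^2*(((t:ℝ) * ((p:ℝ) - 1) * ((n:ℝ) * (p:ℝ) - r0) - (p:ℝ) * (r0 - x1' / (p:ℝ)) - ((n:ℝ) * (t:ℝ) * ((p:ℝ) - 1) - (t:ℝ) * rt0 - x2) ^ 2 / ((n:ℝ) * ((p:ℝ) - 1) * ((p:ℝ) * (t:ℝ) - (t:ℝ) - 1) - ((p:ℝ) * (t:ℝ) - (t:ℝ) + (p:ℝ) - 2) * rt0 + x3)) - ((t:ℝ) * ((p:ℝ) - 1) * ((n:ℝ) * (p:ℝ) - r0) - (p:ℝ) * (r0 - x1 / (p:ℝ)) - ((n:ℝ) * (t:ℝ) * ((p:ℝ) - 1) - (t:ℝ) * rt0 - x2) ^ 2 / ((n:ℝ) * ((p:ℝ) - 1) * ((p:ℝ) * (t:ℝ) - (t:ℝ) - 1) - ((p:ℝ) * (t:ℝ) - (t:ℝ) + (p:ℝ) - 2) * rt0 + x3)))*(((p:ℝ) * (r0 - x1 / (p:ℝ)) - (n:ℝ) * ((p:ℝ) - 1) * x2 ^ 2 / ((n:ℝ) * (p:ℝ) * ((p:ℝ) - 1) * rt0 -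 rt0 ^ 2 - (n:ℝ) * ((p:ℝ) - 1) * x3))*((p:ℝ) * (r0 - x1' / (p:ℝ)) - (n:ℝ) * ((p:ℝ) - 1) * x2 ^ 2 / ((n:ℝ) * (p:ℝ) * ((p:ℝ) - 1) * rt0 - rt0 ^ 2 - (n:ℝ) * ((p:ℝ) - 1) * x3))) ≤ (((p:ℝ) * (r0 - x1 / (p:ℝ)) - (n:ℝ) * ((p:ℝ) - 1) * x2 ^ 2 / ((n:ℝ) * (p:ℝ) * ((p:ℝ) - 1) * rt0 - rt0 ^ 2 - (n:ℝ) * ((p:ℝ) - 1) * x3)) - ((p:ℝ) * (r0 - x1' / (p:ℝ)) - (n:ℝ) * ((p:ℝ) - 1) * x2 ^ 2 / ((n:ℝ) * (p:ℝ) * ((p:ℝ) - 1) * rt0 - rt0 ^ 2 - (n:ℝ) * ((p:ℝ) - 1) * x3)))*(((t:ℝ) * ((p:ℝ) - 1) * ((n:ℝ) * (p:ℝ) - r0) - (p:ℝ) * (r0 - x1 / (p:ℝ)) - ((n:ℝ) * (t:ℝ) * ((p:ℝ) - 1) - (t:ℝ) * rt0 - x2) ^ 2 / ((n:ℝ) *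 ((p:ℝ) - 1) * ((p:ℝ) * (t:ℝ) - (t:ℝ) - 1) - ((p:ℝ) * (t:ℝ) - (t:ℝ) + (p:ℝ) - 2) * rt0 + x3))*((t:ℝ) * ((p:ℝ) - 1) * ((n:ℝ) * (p:ℝ) - r0) - (p:ℝ) * (r0 - x1' / (p:ℝ)) - ((n:ℝ) * (t:ℝ) * ((p:ℝ) - 1) - (t:ℝ) * rt0 - x2) ^ 2 / ((n:ℝ) * ((p:ℝ) - 1) * ((p:ℝ) * (t:ℝ) - (t:ℝ) - 1) - ((p:ℝ) * (t:ℝ) - (t:ℝ) + (p:ℝ) - 2) * rt0 + x3))) := by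
    rw [d1, d2]
    exact key1_gen _ _ _ _ _ _ (by linarith : (0:ℝ) ≤ x1' - x1)
      (mul_le_mul hk1_0 hk1_1 (mul_nonneg (by linarith : (0:ℝ) ≤ (t:ℝ)-1) hb1.le) (le_of_lt ha0))
  -- step 2 key
  have d3 : ((t:ℝ) * ((p:ℝ) - 1) * ((n:ℝ) * (p:ℝ) - r0) - (p:ℝ) * (r0 - x1' / (p:ℝ)) - ((n:ℝ) * (t:ℝ) * ((p:ℝ) - 1) - (t:ℝ) * rt0 - x2') ^ 2 / ((n:ℝ) * ((p:ℝ) - 1) * ((p:ℝ) * (t:ℝ) - (t:ℝ) - 1) - ((p:ℝ) * (t:ℝ) - (t:ℝ) + (p:ℝ) - 2) * rt0 + x3)) - ((t:ℝ) * ((p:ℝ) - 1) * ((n:ℝ) * (p:ℝ) - r0) - (p:ℝ) * (r0 - x1' / (p:ℝ)) - ((n:ℝ) * (t:ℝ) * ((p:ℝ) - 1) - (t:ℝ) * rt0 - x2) ^ 2 / ((n:ℝ) * ((p:ℝ) - 1) * ((p:ℝ) * (t:ℝ) - (t:ℝ) - 1) - ((p:ℝ) * (t:ℝ) - (t:ℝ)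 + (p:ℝ) - 2) * rt0 + x3)) = (x2' - x2)*((((n:ℝ) * (t:ℝ) * ((p:ℝ) - 1) - (t:ℝ) * rt0 - x2) / ((n:ℝ) * ((p:ℝ) - 1) * ((p:ℝ) * (t:ℝ) - (t:ℝ) - 1) - ((p:ℝ) * (t:ℝ) - (t:ℝ) + (p:ℝ) - 2) * rt0 + x3)) + (((n:ℝ) * (t:ℝ) * ((p:ℝ) - 1) - (t:ℝ) * rt0 - x2') / ((n:ℝ) * ((p:ℝ) - 1) * ((p:ℝ) * (t:ℝ) - (t:ℝ) - 1) - ((p:ℝ) * (t:ℝ) - (t:ℝ) + (p:ℝ) - 2) * rt0 + x3))) := by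
    field_simp
    ring
  have d4 : ((p:ℝ) * (r0 - x1' / (p:ℝ)) - (n:ℝ) * ((p:ℝ) - 1) * x2 ^ 2 / ((n:ℝ) * (p:ℝ) * ((p:ℝ) - 1) * rt0 - rt0 ^ 2 - (n:ℝ) * ((p:ℝ) - 1) * x3)) - ((p:ℝ) * (r0 - x1' / (p:ℝ)) - (n:ℝ) * ((p:ℝ) - 1) * x2' ^ 2 / ((n:ℝ) * (p:ℝ) * ((p:ℝ) - 1) * rt0 - rt0 ^ 2 - (n:ℝ) * ((p:ℝ) - 1) * x3)) = (x2' - x2)*(((n:ℝ) * ((p:ℝ) - 1) * x2 / ((n:ℝ) * (p:ℝ) * ((p:ℝ) - 1) * rt0 - rt0 ^ 2 - (n:ℝ) * ((p:ℝ) - 1) * x3)) + ((n:ℝ) * ((p:ℝ) - 1) * x2' / ((n:ℝ) * (p:ℝ) * ((p:ℝ) - 1) * rt0 - rt0 ^ 2 - (n:ℝ) * ((p:ℝ) - 1) * x3))) := by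
    field_simp
    ring
  have hT2n : 0 ≤ (n:ℝ) * ((p:ℝ) - 1) * x2 / ((n:ℝ) * (p:ℝ) * ((p:ℝ) - 1) * rt0 - rt0 ^ 2 - (n:ℝ) * ((p:ℝ) - 1) * x3) := div_nonneg (mul_nonneg (mul_nonneg (by linarith) hp1.le) (by linarith)) hden2.le
  have hT2pn : 0 ≤ (n:ℝ) * ((p:ℝ) - 1) * x2' / ((n:ℝ) * (p:ℝ) * ((p:ℝ) - 1) * rt0 - rt0 ^ 2 - (n:ℝ) * ((p:ℝ) - 1) * x3) := div_nonneg (mul_nonneg (mul_nonneg (by linarith) hp1.le) (by linarith)) hden2.le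
  have hT1n : 0 ≤ ((n:ℝ) * (t:ℝ) * ((p:ℝ) - 1) - (t:ℝ) * rt0 - x2) / ((n:ℝ) * ((p:ℝ) - 1) * ((p:ℝ) * (t:ℝ) - (t:ℝ) - 1) - ((p:ℝ) * (t:ℝ) - (t:ℝ) + (p:ℝ) - 2) * rt0 + x3) := div_nonneg (by linarith) hden1.le
  have hT1pn : 0 ≤ ((n:ℝ) * (t:ℝ) * ((p:ℝ) - 1) - (t:ℝ) * rt0 - x2') / ((n:ℝ) * ((p:ℝ) - 1) * ((p:ℝ) * (t:ℝ) - (t:ℝ) - 1) - ((p:ℝ) * (t:ℝ) - (t:ℝ) + (p:ℝ) - 2) * rt0 + x3) := div_nonneg (by linarith) hden1.le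
  have key2 : ((t:ℝ)-1)^2*(((t:ℝ) * ((p:ℝ) - 1) * ((n:ℝ) * (p:ℝ) - r0) - (p:ℝ) * (r0 - x1' / (p:ℝ)) - ((n:ℝ) * (t:ℝ) * ((p:ℝ) - 1) - (t:ℝ) * rt0 - x2') ^ 2 / ((n:ℝ) * ((p:ℝ) - 1) * ((p:ℝ) * (t:ℝ) - (t:ℝ) - 1) - ((p:ℝ) * (t:ℝ) - (t:ℝ) + (p:ℝ) - 2) * rt0 + x3)) - ((t:ℝ) * ((p:ℝ) - 1) * ((n:ℝ) * (p:ℝ) - r0) - (p:ℝ) * (r0 - x1' / (p:ℝ)) - ((n:ℝ) * (t:ℝ) * ((p:ℝ) - 1) - (t:ℝ) * rt0 - x2) ^ 2 / ((n:ℝ) * ((p:ℝ) - 1) * ((p:ℝ) * (t:ℝ) - (t:ℝ) - 1) - ((p:ℝ) * (t:ℝ) - (t:ℝ) + (p:ℝ) - 2) * rt0 + x3)))*(((p:ℝ) * (r0 - x1' / (p:ℝ)) - (n:ℝ) * ((p:ℝ) - 1) * x2 ^ 2 / ((n:ℝ) * (p:ℝ) * ((p:ℝ) - 1) * rt0 -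 rt0 ^ 2 - (n:ℝ) * ((p:ℝ) - 1) * x3))*((p:ℝ) * (r0 - x1' / (p:ℝ)) - (n:ℝ) * ((p:ℝ) - 1) * x2' ^ 2 / ((n:ℝ) * (p:ℝ) * ((p:ℝ) - 1) * rt0 - rt0 ^ 2 - (n:ℝ) * ((p:ℝ) - 1) * x3))) ≤ (((p:ℝ) * (r0 - x1' / (p:ℝ)) - (n:ℝ) * ((p:ℝ) - 1) * x2 ^ 2 / ((n:ℝ) * (p:ℝ) * ((p:ℝ) - 1) * rt0 - rt0 ^ 2 - (n:ℝ) * ((p:ℝ) - 1) * x3)) - ((p:ℝ) * (r0 - x1' / (p:ℝ)) - (n:ℝ) * ((p:ℝ) - 1) * x2' ^ 2 / ((n:ℝ) * (p:ℝ) * ((p:ℝ) - 1) * rt0 - rt0 ^ 2 - (n:ℝ) * ((p:ℝ) - 1) * x3)))*(((t:ℝ) * ((p:ℝ) - 1) * ((n:ℝ) * (p:ℝ) - r0) - (p:ℝ) * (r0 - x1' / (p:ℝ)) - ((n:ℝ) * (t:ℝ) * ((p:ℝ) - 1) - (t:ℝ) * rt0 - x2) ^ 2 / ((n:ℝ) *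 ((p:ℝ) - 1) * ((p:ℝ) * (t:ℝ) - (t:ℝ) - 1) - ((p:ℝ) * (t:ℝ) - (t:ℝ) + (p:ℝ) - 2) * rt0 + x3))*((t:ℝ) * ((p:ℝ) - 1) * ((n:ℝ) * (p:ℝ) - r0) - (p:ℝ) * (r0 - x1' / (p:ℝ)) - ((n:ℝ) * (t:ℝ) * ((p:ℝ) - 1) - (t:ℝ) * rt0 - x2') ^ 2 / ((n:ℝ) * ((p:ℝ) - 1) * ((p:ℝ) * (t:ℝ) - (t:ℝ) - 1) - ((p:ℝ) * (t:ℝ) - (t:ℝ) + (p:ℝ) - 2) * rt0 + x3))) := by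
    rw [d3, d4]
    exact key2_gen _ _ _ _ _ _ _ _ _ _ (by linarith : (0:ℝ) ≤ x2' - x2)
      (mul_le_mul hk3_1 hk1_2 (mul_nonneg (by linarith : (0:ℝ) ≤ (t:ℝ)-1) hb2.le) (mul_nonneg hT2n ha1.le))
      (mul_le_mul hk3_2 hk1_1 (mul_nonneg (by linarith : (0:ℝ) ≤ (t:ℝ)-1) hb1.le) (mul_nonneg hT2pn ha2.le))
  -- step 3 key
  have d5 : ((t:ℝ) * ((p:ℝ) - 1) * ((n:ℝ) * (p:ℝ) - r0) - (p:ℝ) * (r0 - x1' / (p:ℝ)) - ((n:ℝ) * (t:ℝ) * ((p:ℝ) - 1) - (t:ℝ) * rt0 - x2') ^ 2 / ((n:ℝ) * ((p:ℝ) - 1) * ((p:ℝ) * (t:ℝ) - (t:ℝ) - 1) - ((p:ℝ) * (t:ℝ) - (t:ℝ) + (p:ℝ) - 2) * rt0 + x3')) - ((t:ℝ) * ((p:ℝ) - 1) * ((n:ℝ) * (p:ℝ) - r0) - (p:ℝ) * (r0 - x1' / (p:ℝ)) - ((n:ℝ) * (t:ℝ) * ((p:ℝ) - 1) - (t:ℝ)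 * rt0 - x2') ^ 2 / ((n:ℝ) * ((p:ℝ) - 1) * ((p:ℝ) * (t:ℝ) - (t:ℝ) - 1) - ((p:ℝ) * (t:ℝ) - (t:ℝ) + (p:ℝ) - 2) * rt0 + x3)) = (x3' - x3)*((((n:ℝ) * (t:ℝ) * ((p:ℝ) - 1) - (t:ℝ) * rt0 - x2') / ((n:ℝ) * ((p:ℝ) - 1) * ((p:ℝ) * (t:ℝ) - (t:ℝ) - 1) - ((p:ℝ) * (t:ℝ) - (t:ℝ) + (p:ℝ) - 2) * rt0 + x3))*(((n:ℝ) * (t:ℝ) * ((p:ℝ) - 1) - (t:ℝ) * rt0 - x2') / ((n:ℝ) * ((p:ℝ) - 1) * ((p:ℝ) * (t:ℝ) - (t:ℝ) - 1) - ((p:ℝ) * (t:ℝ) - (t:ℝ) + (p:ℝ) - 2) * rt0 + x3'))) := by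
    have gk : ∀ X N A B : ℝ, A ≠ 0 → B ≠ 0 → (X - N^2/B) - (X - N^2/A) = (B - A)*((N/A)*(N/B)) := fun X N A B hA hB => by field_simp; ring
    rw [gk _ _ _ _ hD1ne hD1ne']; ring
  have d6 : ((p:ℝ) * (r0 - x1' / (p:ℝ)) - (n:ℝ) * ((p:ℝ) - 1) * x2' ^ 2 / ((n:ℝ) * (p:ℝ) * ((p:ℝ) - 1) * rt0 - rt0 ^ 2 - (n:ℝ) * ((p:ℝ) - 1) * x3)) - ((p:ℝ) * (r0 - x1' / (p:ℝ)) - (n:ℝ) * ((p:ℝ) - 1) * x2' ^ 2 / ((n:ℝ) * (p:ℝ) * ((p:ℝ) - 1) * rt0 - rt0 ^ 2 - (n:ℝ) * ((p:ℝ) - 1) * x3')) = (x3' - x3)*(((n:ℝ) * ((p:ℝ) - 1) * x2' / ((n:ℝ) * (p:ℝ) * ((p:ℝ) - 1) * rt0 - rt0 ^ 2 - (n:ℝ) * ((p:ℝ) - 1) * x3))*((n:ℝ) * ((p:ℝ) - 1) * x2' / ((n:ℝ) * (p:ℝ) * ((p:ℝ) - 1) * rt0 - rt0 ^ 2 - (n:ℝ)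 * ((p:ℝ) - 1) * x3'))) := by
    have gk : ∀ X c N A B u : ℝ, A ≠ 0 → B ≠ 0 → A = B + c*u → (X - c*N^2/A) - (X - c*N^2/B) = u*((c*N/A)*(c*N/B)) := fun X c N A B u hA hB h => by subst h; field_simp; ring
    exact gk _ _ _ _ _ (x3' - x3) hD2ne hD2ne' (by ring)
  have key3 : ((t:ℝ)-1)^2*(((t:ℝ) * ((p:ℝ) - 1) * ((n:ℝ) * (p:ℝ) - r0) - (p:ℝ) * (r0 - x1' / (p:ℝ)) - ((n:ℝ) * (t:ℝ) * ((p:ℝ) - 1) - (t:ℝ) * rt0 - x2') ^ 2 / ((n:ℝ) * ((p:ℝ) - 1) * ((p:ℝ) * (t:ℝ) - (t:ℝ) - 1) - ((p:ℝ) * (t:ℝ) - (t:ℝ) + (p:ℝ) - 2) * rt0 + x3')) - ((t:ℝ) * ((p:ℝ) - 1) * ((n:ℝ) * (p:ℝ) - r0) - (p:ℝ) * (r0 - x1' / (p:ℝ)) - ((n:ℝ) * (t:ℝ) * ((p:ℝ) - 1) - (t:ℝ) * rt0 - x2') ^ 2 / ((n:ℝ) * ((p:ℝ) - 1) * ((p:ℝ)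 * (t:ℝ) - (t:ℝ) - 1) - ((p:ℝ) * (t:ℝ) - (t:ℝ) + (p:ℝ) - 2) * rt0 + x3)))*(((p:ℝ) * (r0 - x1' / (p:ℝ)) - (n:ℝ) * ((p:ℝ) - 1) * x2' ^ 2 / ((n:ℝ) * (p:ℝ) * ((p:ℝ) - 1) * rt0 - rt0 ^ 2 - (n:ℝ) * ((p:ℝ) - 1) * x3))*((p:ℝ) * (r0 - x1' / (p:ℝ)) - (n:ℝ) * ((p:ℝ) - 1) * x2' ^ 2 / ((n:ℝ) * (p:ℝ) * ((p:ℝ) - 1) * rt0 - rt0 ^ 2 - (n:ℝ) * ((p:ℝ) - 1) * x3'))) ≤ (((p:ℝ) * (r0 - x1' / (p:ℝ)) - (n:ℝ) * ((p:ℝ) - 1) * x2' ^ 2 / ((n:ℝ) * (p:ℝ) * ((p:ℝ) - 1) * rt0 - rt0 ^ 2 - (n:ℝ) * ((p:ℝ) - 1) * x3)) - ((p:ℝ) * (r0 - x1' / (p:ℝ)) - (n:ℝ) * ((p:ℝ) - 1) * x2' ^ 2 / ((n:ℝ) * (p:ℝ) * ((p:ℝ) - 1) * rt0 - rt0 ^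 2 - (n:ℝ) * ((p:ℝ) - 1) * x3')))*(((t:ℝ) * ((p:ℝ) - 1) * ((n:ℝ) * (p:ℝ) - r0) - (p:ℝ) * (r0 - x1' / (p:ℝ)) - ((n:ℝ) * (t:ℝ) * ((p:ℝ) - 1) - (t:ℝ) * rt0 - x2') ^ 2 / ((n:ℝ) * ((p:ℝ) - 1) * ((p:ℝ) * (t:ℝ) - (t:ℝ) - 1) - ((p:ℝ) * (t:ℝ) - (t:ℝ) + (p:ℝ) - 2) * rt0 + x3))*((t:ℝ) * ((p:ℝ) - 1) * ((n:ℝ) * (p:ℝ) - r0) - (p:ℝ) * (r0 - x1' / (p:ℝ)) - ((n:ℝ) * (t:ℝ) * ((p:ℝ) - 1) - (t:ℝ) * rt0 - x2') ^ 2 / ((n:ℝ) * ((p:ℝ) - 1) * ((p:ℝ) * (t:ℝ) - (t:ℝ) - 1) - ((p:ℝ) * (t:ℝ) - (t:ℝ) + (p:ℝ) - 2) * rt0 + x3'))) := by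
    rw [d5, d6]
    exact key3_gen _ _ _ _ _ _ _ _ _ _ (by linarith : (0:ℝ) ≤ x3' - x3)
      (mul_le_mul hk3_2 hk3_3
        (mul_nonneg (mul_nonneg (by linarith : (0:ℝ) ≤ (t:ℝ)-1) (div_nonneg (by linarith) hden1'.le)) hb3.le)
        (mul_nonneg hT2pn ha2.le))
  exact le_trans (stepH (t:ℝ) (p:ℝ) _ _ _ _ ht' hp0 ha0 ha1 hb0 hb1 key1)
    (le_trans (stepH (t:ℝ) (p:ℝ) _ _ _ _ ht' hp0 ha1 ha2 hb1 hb2 key2)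
      (stepH (t:ℝ) (p:ℝ) _ _ _ _ ht' hp0 ha2 ha3 hb2 hb3 key3))
end

section
/- (Core inequality in the proof of Proposition A.3) Let t, p be integers with t ≥ 2 and 3 ≤ p ≤ t+1, and let x be a real number with 0 ≤ x ≤ (p−1)/2. Then (p−1)(pt−t−1) − (pt−t+p−3)x > 0, and g(x) > 0, where g(x) = [t(2p−1−2x)(2p−3−2x) + 4(t−1)x/(p−1)]·[(p−1)(pt−t−1) − (pt−t+p−3)x] − 4(t(p−1) − (t+1)x)². -/
set_option maxHeartbeats 2000000

/-- Core inequality in the proof of Proposition A.3: for integers `t ≥ 2`,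
`3 ≤ p ≤ t+1` and a real `x` with `0 ≤ x ≤ (p-1)/2`, the quantity
`(p-1)(pt-t-1) - (pt-t+p-3)x` is positive and `g(x) > 0`, where
`g(x) = [t(2p-1-2x)(2p-3-2x) + 4(t-1)x/(p-1)]·[(p-1)(pt-t-1) - (pt-t+p-3)x]
        - 4(t(p-1) - (t+1)x)²`. -/
theorem stmt14 (t p : ℤ) (ht : 2 ≤ t) (hp : 3 ≤ p) (hpt : p ≤ t + 1)
    (x : ℝ) (hx0 : 0 ≤ x) (hx : x ≤ ((p : ℝ) - 1) / 2) :
    0 < ((p : ℝ) - 1) * ((p : ℝ) * t - t - 1) - ((p : ℝ) * t - t + p - 3) * x ∧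
      0 < ((t : ℝ) * (2 * (p : ℝ) - 1 - 2 * x) * (2 * (p : ℝ) - 3 - 2 * x) +
              4 * ((t : ℝ) - 1) * x / ((p : ℝ) - 1)) *
            (((p : ℝ) - 1) * ((p : ℝ) * t - t - 1) - ((p : ℝ) * t - t + p - 3) * x) -
          4 * ((t : ℝ) * ((p : ℝ) - 1) - ((t : ℝ) + 1) * x) ^ 2 := by
  have hT : (2 : ℝ) ≤ (t : ℝ) := by exact_mod_cast ht
  have hP : (3 : ℝ) ≤ (p : ℝ) := by exact_mod_cast hp
  have hPT : (p : ℝ) ≤ (t : ℝ) + 1 := by exact_mod_cast hpt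
  have hV : 0 ≤ ((p : ℝ) - 1) - 2 * x := by linarith
  have hB : 0 ≤ (p : ℝ) - 3 := by linarith
  have hC : 0 ≤ (t : ℝ) + 1 - (p : ℝ) := by linarith
  have hP1 : (0 : ℝ) < (p : ℝ) - 1 := by linarith
  constructor
  · nlinarith [mul_nonneg (by nlinarith : (0:ℝ) ≤ (p : ℝ) * t - t + p - 3) hV,
      mul_pos (mul_pos hP1 hP1) (by linarith : (0:ℝ) < (t : ℝ) - 1)]
  · set V : ℝ := ((p : ℝ) - 1) - 2 * x with hVdef
    set B : ℝ := (p : ℝ) - 3 with hBdef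
    set C : ℝ := (t : ℝ) + 1 - (p : ℝ) with hCdef
    have hpoly : (0 : ℝ) <
      48 +
      72 * C +
      24 * C ^ 2 +
      208 * B +
      252 * B * C +
      68 * B * C ^ 2 +
      376 * B ^ 2 +
      358 * B ^ 2 * C +
      74 * B ^ 2 * C ^ 2 +
      368 * B ^ 3 +
      265 * B ^ 3 * C +
      39 * B ^ 3 * C ^ 2 +
      211 * B ^ 4 +
      108 * B ^ 4 * C +
      10 * B ^ 4 * C ^ 2 +
      71 * B ^ 5 +
      23 * B ^ 5 * C +
      1 * B ^ 5 * C ^ 2 +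
      13 * B ^ 6 +
      2 * B ^ 6 * C +
      1 * B ^ 7 +
      72 * V +
      88 * V * C +
      28 * V * C ^ 2 +
      304 * V * B +
      314 * V * B * C +
      76 * V * B * C ^ 2 +
      488 * V * B ^ 2 +
      387 * V * B ^ 2 * C +
      67 * V * B ^ 2 * C ^ 2 +
      387 * V * B ^ 3 +
      220 * V * B ^ 3 * C +
      24 * V * B ^ 3 * C ^ 2 +
      163 * V * B ^ 4 +
      59 * V * B ^ 4 * C +
      3 * V * B ^ 4 * C ^ 2 +
      35 * V * B ^ 5 +
      6 * V * B ^ 5 * C +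
      3 * V * B ^ 6 +
      36 * V ^ 2 +
      52 * V ^ 2 * C +
      16 * V ^ 2 * C ^ 2 +
      164 * V ^ 2 * B +
      152 * V ^ 2 * B * C +
      32 * V ^ 2 * B * C ^ 2 +
      212 * V ^ 2 * B ^ 2 +
      138 * V ^ 2 * B ^ 2 * C +
      18 * V ^ 2 * B ^ 2 * C ^ 2 +
      120 * V ^ 2 * B ^ 3 +
      49 * V ^ 2 * B ^ 3 * C +
      3 * V ^ 2 * B ^ 3 * C ^ 2 +
      31 * V ^ 2 * B ^ 4 +
      6 * V ^ 2 * B ^ 4 * C +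
      3 * V ^ 2 * B ^ 5 +
      16 * V ^ 3 +
      16 * V ^ 3 * C +
      4 * V ^ 3 * C ^ 2 +
      36 * V ^ 3 * B +
      26 * V ^ 3 * B * C +
      4 * V ^ 3 * B * C ^ 2 +
      28 * V ^ 3 * B ^ 2 +
      13 * V ^ 3 * B ^ 2 * C +
      1 * V ^ 3 * B ^ 2 * C ^ 2 +
      9 * V ^ 3 * B ^ 3 +
      2 * V ^ 3 * B ^ 3 * C +
      1 * V ^ 3 * B ^ 4 := by
      rw [show V = Real.sqrt V ^ 2 from (Real.sq_sqrt hV).symm,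
          show B = Real.sqrt B ^ 2 from (Real.sq_sqrt hB).symm,
          show C = Real.sqrt C ^ 2 from (Real.sq_sqrt hC).symm]
      positivity
    have key : 2 * ((p : ℝ) - 1) *
        (((t : ℝ) * (2 * (p : ℝ) - 1 - 2 * x) * (2 * (p : ℝ) - 3 - 2 * x) +
              4 * ((t : ℝ) - 1) * x / ((p : ℝ) - 1)) *
            (((p : ℝ) - 1) * ((p : ℝ) * t - t - 1) - ((p : ℝ) * t - t + p - 3) * x) -
          4 * ((t : ℝ) * ((p : ℝ) - 1) - ((t : ℝ) + 1) * x) ^ 2) =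
      48 +
      72 * C +
      24 * C ^ 2 +
      208 * B +
      252 * B * C +
      68 * B * C ^ 2 +
      376 * B ^ 2 +
      358 * B ^ 2 * C +
      74 * B ^ 2 * C ^ 2 +
      368 * B ^ 3 +
      265 * B ^ 3 * C +
      39 * B ^ 3 * C ^ 2 +
      211 * B ^ 4 +
      108 * B ^ 4 * C +
      10 * B ^ 4 * C ^ 2 +
      71 * B ^ 5 +
      23 * B ^ 5 * C +
      1 * B ^ 5 * C ^ 2 +
      13 * B ^ 6 +
      2 * B ^ 6 * C +
      1 * B ^ 7 +
      72 * V +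
      88 * V * C +
      28 * V * C ^ 2 +
      304 * V * B +
      314 * V * B * C +
      76 * V * B * C ^ 2 +
      488 * V * B ^ 2 +
      387 * V * B ^ 2 * C +
      67 * V * B ^ 2 * C ^ 2 +
      387 * V * B ^ 3 +
      220 * V * B ^ 3 * C +
      24 * V * B ^ 3 * C ^ 2 +
      163 * V * B ^ 4 +
      59 * V * B ^ 4 * C +
      3 * V * B ^ 4 * C ^ 2 +
      35 * V * B ^ 5 +
      6 * V * B ^ 5 * C +
      3 * V * B ^ 6 +
      36 * V ^ 2 +
      52 * V ^ 2 * C +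
      16 * V ^ 2 * C ^ 2 +
      164 * V ^ 2 * B +
      152 * V ^ 2 * B * C +
      32 * V ^ 2 * B * C ^ 2 +
      212 * V ^ 2 * B ^ 2 +
      138 * V ^ 2 * B ^ 2 * C +
      18 * V ^ 2 * B ^ 2 * C ^ 2 +
      120 * V ^ 2 * B ^ 3 +
      49 * V ^ 2 * B ^ 3 * C +
      3 * V ^ 2 * B ^ 3 * C ^ 2 +
      31 * V ^ 2 * B ^ 4 +
      6 * V ^ 2 * B ^ 4 * C +
      3 * V ^ 2 * B ^ 5 +
      16 * V ^ 3 +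
      16 * V ^ 3 * C +
      4 * V ^ 3 * C ^ 2 +
      36 * V ^ 3 * B +
      26 * V ^ 3 * B * C +
      4 * V ^ 3 * B * C ^ 2 +
      28 * V ^ 3 * B ^ 2 +
      13 * V ^ 3 * B ^ 2 * C +
      1 * V ^ 3 * B ^ 2 * C ^ 2 +
      9 * V ^ 3 * B ^ 3 +
      2 * V ^ 3 * B ^ 3 * C +
      1 * V ^ 3 * B ^ 4 := by
      rw [hVdef, hBdef, hCdef]
      field_simp
      ring
    have hprod : (0:ℝ) < 2 * ((p : ℝ) - 1) *
        (((t : ℝ) * (2 * (p : ℝ) - 1 - 2 * x) * (2 * (p : ℝ) - 3 - 2 * x) +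
              4 * ((t : ℝ) - 1) * x / ((p : ℝ) - 1)) *
            (((p : ℝ) - 1) * ((p : ℝ) * t - t - 1) - ((p : ℝ) * t - t + p - 3) * x) -
          4 * ((t : ℝ) * ((p : ℝ) - 1) - ((t : ℝ) + 1) * x) ^ 2) := key ▸ hpoly
    have h2 : (0:ℝ) < 2 * ((p : ℝ) - 1) := by linarith
    exact (mul_pos_iff.mp hprod).elim (fun h => h.2) (fun h => absurd h.1 (by linarith))
end
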